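/- arXiv:2107.08965 — 11 statements merged into one kernel-verified Lean document; each statement's English description precedes it below -/
import Mathlib

section
/- Let O be a non-wasteful allocation and O* any allocation of all of G, with b_i = |O_i ∩ B_i| and b*_i = |O*_i ∩ B_i|. For every agent i with b*_i > b_i there exists an agent j with b*_j < b_j such that in the transformation graph G_{O*→O} there is a BB-balancing path from i to j. -/
open Finset

variable {N G : Type*}

/-- Agent `i`'s 2-value additive valuation of bundle `A`:
big goods (in `Bset i`) are worth 1, all others worth `v`. -/
def twoVal [DecidableEq G] (Bset : N → Finset G) (v : ℚ) (i : N) (A : Finset G) : ℚ :=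
  ((A ∩ Bset i).card : ℚ) + v * ((A \ Bset i).card : ℚ)

/-- An allocation: pairwise disjoint bundles covering all of `G`. -/
def IsAllocation [Fintype N] [Fintype G] [DecidableEq G] (A : N → Finset G) : Prop :=
  (Set.univ : Set N).PairwiseDisjoint A ∧ Finset.univ.biUnion A = (Finset.univ : Finset G)

/-- A non-wasteful allocation: pairwise disjoint bundles with `A i ⊆ Bset i`
covering `B = ⋃ i, Bset i`. -/
def IsNonWasteful [Fintype N] [DecidableEq G] (Bset A : N → Finset G) : Prop :=
  (Set.univ : Set N).PairwiseDisjoint A ∧ (∀ i, A i ⊆ Bset i) ∧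
    Finset.univ.biUnion A = Finset.univ.biUnion Bset

/-- There is a BB-balancing path from `i` to `j` in the transformation graph `G_{Aa → Ab}`. -/
def ExistsBBPath [DecidableEq G] (Aa Ab Bset : N → Finset G) (i j : N) : Prop :=
  ∃ (k : ℕ) (hk : 1 ≤ k) (ag : Fin (k + 1) → N) (gd : Fin k → G),
    Function.Injective gd ∧ ag 0 = i ∧ ag (Fin.last k) = j ∧
    (∀ t : Fin k, gd t ∈ Aa (ag t.castSucc) ∧ gd t ∈ Ab (ag t.succ)) ∧
    (∀ t : Fin k, 1 ≤ t.val →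
      (gd t ∈ Bset (ag t.castSucc) ↔
        gd ⟨t.val - 1, by have := t.isLt; omega⟩ ∈ Bset (ag t.castSucc))) ∧
    gd ⟨0, by omega⟩ ∈ Bset i ∧ gd ⟨k - 1, by omega⟩ ∈ Bset j

/-- From `TransGen R a b` extract a duplicate-free chain. -/
theorem exists_nodup_chain {α : Type*} [DecidableEq α] {R : α → α → Prop} {a b : α}
    (h : Relation.TransGen R a b) :
    ∃ l : List α, l.Chain' R ∧ l.head? = some a ∧ l.getLast? = some b ∧ l.Nodup := by
  induction h using Relation.TransGen.head_induction_on with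
  | @single a' h =>
    by_cases hab : a' = b
    · exact ⟨[a'], by simp [hab, List.Chain']⟩
    · exact ⟨[a', b], by simp [List.Chain', List.isChain_pair, h, hab]⟩
  | @head a' c hac htg IH =>
    obtain ⟨l, hch, hhd, hlast, hnd⟩ := IH
    by_cases hal : a' ∈ l
    · obtain ⟨s, t, rfl⟩ := List.append_of_mem hal
      refine ⟨a' :: t, (List.isChain_append.1 hch).2.1, rfl, ?_,
        hnd.sublist (List.sublist_append_right s _)⟩
      rwa [List.getLast?_append_of_ne_nil _ (by simp)] at hlast
    · have hln : l ≠ [] := by rintro rfl; simp at hhd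
      refine ⟨a' :: l, List.isChain_cons.2 ⟨?_, hch⟩, rfl, ?_, by simp [hnd, hal]⟩
      · intro y hy; rw [hhd] at hy; simp at hy; subst hy; exact hac
      · exact (show (a' :: l).getLast? = some b by
          cases l with
          | nil => simp at hhd
          | cons x xs => rw [List.getLast?_cons_cons]; exact hlast)

/-- Lemma 2.2: for every agent `i` with `b*_i > b_i` there is an agent `j`
with `b*_j < b_j` reachable from `i` by a BB-balancing path in `G_{O* → O}`. -/
theorem stmt0 [Fintype N] [DecidableEq N] [Fintype G] [DecidableEq G]
    (Bset : N → Finset G) (v : ℚ) (hv0 : 0 < v) (hv1 : v < 1)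
    (O Ostar : N → Finset G)
    (hO : IsNonWasteful Bset O) (hOstar : IsAllocation Ostar)
    (i : N) (hi : (O i ∩ Bset i).card < (Ostar i ∩ Bset i).card) :
    ∃ j : N, (Ostar j ∩ Bset j).card < (O j ∩ Bset j).card ∧
      ExistsBBPath Ostar O Bset i j := by
  classical
  obtain ⟨hOdisj, hOsub, hOcov⟩ := hO
  obtain ⟨hSdisj, -⟩ := hOstar
  set R : N → N → Prop := fun a b => ∃ g, g ∈ Ostar a ∧ g ∈ Bset a ∧ g ∈ O b with hRdef
  set S : Finset N := univ.filter (fun j => Relation.ReflTransGen R i j) with hSdef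
  have hiS : i ∈ S := mem_filter.2 ⟨mem_univ i, Relation.ReflTransGen.refl⟩
  have hstep : ∀ j ∈ S, ∀ g, g ∈ Ostar j → g ∈ Bset j → ∃ j' ∈ S, g ∈ O j' := by
    intro j hjS g hg1 hg2
    have hgB : g ∈ Finset.univ.biUnion O := by
      rw [hOcov]; exact mem_biUnion.2 ⟨j, mem_univ j, hg2⟩
    obtain ⟨j', -, hgj'⟩ := mem_biUnion.1 hgB
    have hRjj' : R j j' := ⟨g, hg1, hg2, hgj'⟩
    have hreach : Relation.ReflTransGen R i j' :=
      ((mem_filter.1 hjS).2).tail hRjj'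
    exact ⟨j', by simp [hSdef, hreach], hgj'⟩
  have hex : ∃ j ∈ S, (Ostar j ∩ Bset j).card < (O j ∩ Bset j).card := by
    by_contra hcon
    push_neg at hcon
    have hsub : S.biUnion (fun j => Ostar j ∩ Bset j) ⊆ S.biUnion (fun j => O j ∩ Bset j) := by
      intro g hg
      obtain ⟨j, hjS, hgj⟩ := mem_biUnion.1 hg
      rw [mem_inter] at hgj
      obtain ⟨j', hj'S, hgj'⟩ := hstep j hjS g hgj.1 hgj.2
      exact mem_biUnion.2 ⟨j', hj'S, mem_inter.2 ⟨hgj', hOsub j' hgj'⟩⟩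
    have h1 : (S.biUnion fun j => Ostar j ∩ Bset j).card = ∑ j ∈ S, (Ostar j ∩ Bset j).card :=
      Finset.card_biUnion (fun x _ y _ hxy =>
        ((hSdisj (Set.mem_univ x) (Set.mem_univ y) hxy).mono inter_subset_left inter_subset_left))
    have h2 : (S.biUnion fun j => O j ∩ Bset j).card = ∑ j ∈ S, (O j ∩ Bset j).card :=
      Finset.card_biUnion (fun x _ y _ hxy =>
        ((hOdisj (Set.mem_univ x) (Set.mem_univ y) hxy).mono inter_subset_left inter_subset_left))
    have hlt : ∑ j ∈ S, (O j ∩ Bset j).card < ∑ j ∈ S, (Ostar j ∩ Bset j).card :=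
      Finset.sum_lt_sum (fun j hjS => hcon j hjS) ⟨i, hiS, hi⟩
    have hle := Finset.card_le_card hsub
    omega
  obtain ⟨j, hjS, hj⟩ := hex
  have hij : i ≠ j := fun h => by rw [h] at hi; omega
  have htg : Relation.TransGen R i j := by
    rcases Relation.reflTransGen_iff_eq_or_transGen.1 (mem_filter.1 hjS).2 with h | h
    · exact absurd h.symm hij
    · exact h
  refine ⟨j, hj, ?_⟩
  obtain ⟨l, hch, hhd, hlast, hnd⟩ := exists_nodup_chain htg
  have hln : l ≠ [] := by rintro rfl; simp at hhd
  have hheadi : l.get ⟨0, List.length_pos_iff.2 hln⟩ = i := by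
    cases l with
    | nil => exact absurd rfl hln
    | cons x xs => simpa using hhd
  have hlastj : l.get ⟨l.length - 1, by
      have := List.length_pos_iff.2 hln; omega⟩ = j := by
    have h1 : l.getLast hln = j := by
      obtain ⟨h, hx⟩ := List.mem_getLast?_eq_getLast (hlast ▸ rfl : j ∈ l.getLast?)
      exact hx.symm
    rw [← h1, List.getLast_eq_getElem]; rfl
  have hlen2 : 2 ≤ l.length := by
    rcases Nat.lt_or_ge l.length 2 with h | h
    · exfalso
      have h1 : l.length = 1 := by have := List.length_pos_iff.2 hln; omega
      apply hij
      rw [← hheadi, ← hlastj]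
      congr 1
      omega
    · exact h
  set k := l.length - 1 with hkdef
  have hkl : l.length = k + 1 := by omega
  have hk1 : 1 ≤ k := by omega
  have hget : ∀ (t : ℕ) (ht : t < k),
      R (l.get ⟨t, by omega⟩) (l.get ⟨t + 1, by omega⟩) :=
    fun t ht => List.isChain_iff_getElem.1 hch t (by omega)
  choose gf hg1 hg2 hg3 using fun (t : ℕ) (ht : t < k) => (hget t ht)
  have hgetinj := List.nodup_iff_injective_get.1 hnd
  refine ⟨k, hk1, fun t => l.get ⟨t.val, by omega⟩, fun t => gf t.val t.isLt,
    ?_, ?_, ?_, ?_, ?_, ?_, ?_⟩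
  · -- injective
    intro s t h
    have heq : l.get ⟨s.val, by omega⟩ = l.get ⟨t.val, by omega⟩ := by
      by_contra hne
      have hd := hSdisj (Set.mem_univ _) (Set.mem_univ _) hne
      have h' : gf s.val s.isLt = gf t.val t.isLt := h
      exact (Finset.disjoint_left.1 hd) (hg1 s.val s.isLt) (by rw [h']; exact hg1 t.val t.isLt)
    have := hgetinj heq
    exact Fin.ext (by simpa using congrArg Fin.val this)
  · exact hheadi
  · simpa [Fin.last] using hlastj
  · intro t
    exact ⟨hg1 t.val t.isLt, hg3 t.val t.isLt⟩
  · intro t ht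
    have hL : gf t.val t.isLt ∈ Bset (l.get ⟨t.val, by omega⟩) := hg2 t.val t.isLt
    have hRmem : gf (t.val - 1) (by omega) ∈ Bset (l.get ⟨t.val, by omega⟩) := by
      have h3 := hg3 (t.val - 1) (by omega : t.val - 1 < k)
      have hidx : (⟨t.val - 1 + 1, by omega⟩ : Fin l.length) = ⟨t.val, by omega⟩ :=
        Fin.mk_eq_mk.2 (by omega)
      rw [hidx] at h3
      exact hOsub _ h3
    exact iff_of_true hL hRmem
  · have := hg2 0 (by omega : 0 < k)
    rwa [hheadi] at this
  · have h3 := hg3 (k - 1) (by omega : k - 1 < k)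
    have hidx : (⟨k - 1 + 1, by omega⟩ : Fin l.length) = ⟨l.length - 1, by omega⟩ :=
      Fin.mk_eq_mk.2 (by omega)
    rw [hidx, hlastj] at h3
    exact hOsub _ h3
end

section
/- Let A^P be a partial big-allocation (pairwise disjoint sets with A^P_i ⊆ B_i for every agent i), let G^U = G \ ⋃_i A^P_i, and let A be a small-extension of A^P. Write s_j = |A_j \ B_j|. If for every pair of agents i, j the inequality v_i(A_i) + v < v_j(A_j) implies s_j = 0, then A maximizes the Nash product: for every small-extension A' of A^P one has ∏_{i∈N} v_i(A'_i) ≤ ∏_{i∈N} v_i(A_i). -/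
open Finset

variable {N G : Type*}

/-- `A` is a small-extension of the partial big-allocation `AP`: it is an allocation
extending `AP`, and every newly assigned good is an unassigned good that is small for
the agent receiving it. -/
def IsSmallExtension [Fintype N] [Fintype G] [DecidableEq G]
    (Bset AP A : N → Finset G) : Prop :=
  IsAllocation A ∧ (∀ i, AP i ⊆ A i) ∧
    ∀ i, ∀ g ∈ A i \ AP i,
      g ∈ ((Finset.univ : Finset G) \ Finset.univ.biUnion AP) \ Bset i

lemma key_lemma {N : Type*} [Fintype N] [DecidableEq N]
    (v : ℚ) (hv0 : 0 < v) (b : N → ℚ) (hb : ∀ i, 0 ≤ b i) (s : N → ℕ)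
    (hloc : ∀ i j : N, 1 ≤ s j → b j + v * s j ≤ b i + v * s i + v) :
    ∀ n : ℕ, ∀ t : N → ℕ, (∑ i, (t i - s i)) ≤ n → (∑ i, t i) = (∑ i, s i) →
      ∏ i, (b i + v * t i) ≤ ∏ i, (b i + v * s i) := by
  intro n
  induction n with
  | zero =>
    intro t hd hsum
    have hle : ∀ i, t i ≤ s i := by
      intro i
      have := Finset.sum_eq_zero_iff.mp (Nat.le_zero.mp hd) i (mem_univ i)
      omega
    have : t = s := by
      funext i
      exact (Finset.sum_eq_sum_iff_of_le (fun i _ => hle i)).mp hsum i (mem_univ i)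
    rw [this]
  | succ n ih =>
    intro t hd hsum
    by_cases hts : t = s
    · rw [hts]
    have hi : ∃ i, s i < t i := by
      by_contra h
      push_neg at h
      exact hts (funext fun i =>
        (Finset.sum_eq_sum_iff_of_le (fun i _ => h i)).mp hsum i (mem_univ i))
    obtain ⟨i, hi⟩ := hi
    have hj : ∃ j, t j < s j := by
      by_contra h
      push_neg at h
      have := (Finset.sum_eq_sum_iff_of_le (fun j _ => h j)).mp hsum.symm i (mem_univ i)
      omega
    obtain ⟨j, hj⟩ := hj
    have hij : i ≠ j := by intro h; rw [h] at hi; omega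
    set t' : N → ℕ := Function.update (Function.update t i (t i - 1)) j (t j + 1) with ht'
    have ht'i : t' i = t i - 1 := by
      simp [ht', Function.update_of_ne hij, Function.update_self]
    have ht'j : t' j = t j + 1 := by simp [ht']
    have ht'k : ∀ k, k ≠ i → k ≠ j → t' k = t k := by
      intro k hki hkj
      simp [ht', Function.update_of_ne hkj, Function.update_of_ne hki]
    have hjmem : j ∈ (univ : Finset N).erase i := by simp [Ne.symm hij]
    set rest : Finset N := ((univ : Finset N).erase i).erase j with hrestdef
    have restEq : ∀ k ∈ rest, t' k = t k := by
      intro k hk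
      simp only [hrestdef, mem_erase] at hk
      exact ht'k k hk.2.1 hk.1
    have split : ∀ f : N → ℕ, ∑ k, f k = f i + (f j + ∑ k ∈ rest, f k) := by
      intro f
      rw [hrestdef, Finset.add_sum_erase _ f hjmem, Finset.add_sum_erase _ f (mem_univ i)]
    have e1 : ∑ k, (t' k - s k) = (t' i - s i) + ((t' j - s j) + ∑ k ∈ rest, (t' k - s k)) :=
      split _
    have e2 : ∑ k, (t k - s k) = (t i - s i) + ((t j - s j) + ∑ k ∈ rest, (t k - s k)) :=
      split _
    have e3 : ∑ k ∈ rest, (t' k - s k) = ∑ k ∈ rest, (t k - s k) :=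
      Finset.sum_congr rfl (fun k hk => by rw [restEq k hk])
    have e4 : ∑ k, t' k = t' i + (t' j + ∑ k ∈ rest, t' k) := split _
    have e5 : ∑ k, t k = t i + (t j + ∑ k ∈ rest, t k) := split _
    have e6 : ∑ k ∈ rest, t' k = ∑ k ∈ rest, t k :=
      Finset.sum_congr rfl (fun k hk => restEq k hk)
    have hsum' : (∑ k, t' k) = ∑ k, t k := by omega
    have hd' : (∑ k, (t' k - s k)) ≤ n := by omega
    have hsumeq : (∑ k, t' k) = ∑ k, s k := hsum'.trans hsum
    have key2 : (b i + v * t i) * (b j + v * t j) ≤ (b i + v * t' i) * (b j + v * t' j) := by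
      have hsj : 1 ≤ s j := by omega
      have hloc' := hloc i j hsj
      have c1 : ((s i : ℚ) + 1) ≤ (t i : ℚ) := by exact_mod_cast hi
      have c2 : ((t j : ℚ) + 1) ≤ (s j : ℚ) := by exact_mod_cast hj
      have c3 : (t' i : ℚ) = (t i : ℚ) - 1 := by
        rw [ht'i]
        have h1 : 1 ≤ t i := by omega
        push_cast [Nat.cast_sub h1]
        ring
      have c4 : (t' j : ℚ) = (t j : ℚ) + 1 := by rw [ht'j]; push_cast; ring
      rw [c3, c4]
      have hX : b j + v * (t j : ℚ) + v ≤ b i + v * (t i : ℚ) := by nlinarith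
      have hpos : 0 ≤ v * (b i + v * (t i : ℚ) - (b j + v * (t j : ℚ)) - v) :=
        mul_nonneg hv0.le (by linarith)
      nlinarith [hpos]
    have prodle : ∏ k, (b k + v * t k) ≤ ∏ k, (b k + v * t' k) := by
      have splitP : ∀ f : N → ℚ, ∏ k, f k = f i * (f j * ∏ k ∈ rest, f k) := by
        intro f
        rw [hrestdef, Finset.mul_prod_erase _ f hjmem, Finset.mul_prod_erase _ f (mem_univ i)]
      rw [splitP (fun k => b k + v * t k), splitP (fun k => b k + v * t' k)]
      have e7 : ∏ k ∈ rest, (b k + v * t' k) = ∏ k ∈ rest, (b k + v * t k) :=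
        Finset.prod_congr rfl (fun k hk => by rw [restEq k hk])
      rw [e7]
      have hnn : ∀ k : N, (0:ℚ) ≤ b k + v * t k := fun k =>
        add_nonneg (hb k) (mul_nonneg hv0.le (Nat.cast_nonneg _))
      have hrest : (0:ℚ) ≤ ∏ k ∈ rest, (b k + v * t k) :=
        Finset.prod_nonneg (fun k _ => hnn k)
      calc (b i + v * t i) * ((b j + v * t j) * ∏ k ∈ rest, (b k + v * t k))
          = ((b i + v * t i) * (b j + v * t j)) * ∏ k ∈ rest, (b k + v * t k) := by ring
        _ ≤ ((b i + v * t' i) * (b j + v * t' j)) * ∏ k ∈ rest, (b k + v * t k) :=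
            mul_le_mul_of_nonneg_right key2 hrest
        _ = (b i + v * t' i) * ((b j + v * t' j) * ∏ k ∈ rest, (b k + v * t k)) := by ring
    exact prodle.trans (ih t' hd' hsumeq)

section Bridge
variable [Fintype N] [DecidableEq N] [Fintype G] [DecidableEq G]

lemma ext_diff (Bset AP A : N → Finset G) (hAPbig : ∀ i, AP i ⊆ Bset i)
    (h : IsSmallExtension Bset AP A) (i : N) : A i \ Bset i = A i \ AP i := by
  ext g
  simp only [mem_sdiff]
  constructor
  · rintro ⟨hg, hgB⟩
    exact ⟨hg, fun hgAP => hgB (hAPbig i hgAP)⟩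
  · rintro ⟨hg, hgAP⟩
    have := h.2.2 i g (by simp [mem_sdiff, hg, hgAP])
    simp only [mem_sdiff] at this
    exact ⟨hg, this.2⟩

lemma ext_inter (Bset AP A : N → Finset G) (hAPbig : ∀ i, AP i ⊆ Bset i)
    (h : IsSmallExtension Bset AP A) (i : N) : A i ∩ Bset i = AP i := by
  ext g
  simp only [mem_inter]
  constructor
  · rintro ⟨hg, hgB⟩
    by_contra hgAP
    have := h.2.2 i g (by simp [mem_sdiff, hg, hgAP])
    simp only [mem_sdiff] at this
    exact this.2 hgB
  · intro hg
    exact ⟨h.2.1 i hg, hAPbig i hg⟩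

lemma ext_sum (Bset AP A : N → Finset G) (hAPbig : ∀ i, AP i ⊆ Bset i)
    (h : IsSmallExtension Bset AP A) :
    ∑ i, (A i \ Bset i).card
      = ((Finset.univ : Finset G) \ Finset.univ.biUnion AP).card := by
  have hdisj : ∀ x ∈ (univ : Finset N), ∀ y ∈ (univ : Finset N), x ≠ y →
      Disjoint (A x \ Bset x) (A y \ Bset y) := by
    intro x _ y _ hxy
    exact (h.1.1 (Set.mem_univ x) (Set.mem_univ y) hxy).mono
      (sdiff_subset) (sdiff_subset)
  have hcard := Finset.card_biUnion hdisj
  have hU : Finset.univ.biUnion (fun i => A i \ Bset i)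
      = (Finset.univ : Finset G) \ Finset.univ.biUnion AP := by
    ext g
    rw [mem_biUnion, mem_sdiff]
    constructor
    · rintro ⟨i, -, hi⟩
      rw [ext_diff Bset AP A hAPbig h i, mem_sdiff] at hi
      have h2 := h.2.2 i g (mem_sdiff.mpr hi)
      rw [mem_sdiff] at h2
      exact ⟨mem_univ g, (mem_sdiff.mp h2.1).2⟩
    · rintro ⟨-, hg⟩
      have hgA : g ∈ Finset.univ.biUnion A := by rw [h.1.2]; exact mem_univ g
      rw [mem_biUnion] at hgA
      obtain ⟨i, -, hi⟩ := hgA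
      refine ⟨i, mem_univ i, ?_⟩
      rw [ext_diff Bset AP A hAPbig h i, mem_sdiff]
      exact ⟨hi, fun hgAP => hg (mem_biUnion.mpr ⟨i, mem_univ i, hgAP⟩)⟩
  rw [← hU, hcard]

end Bridge

/-- Proposition 3.2: a small-extension in which any agent strictly more than `v` above
another agent holds no small goods maximizes the Nash product among all small-extensions. -/
theorem stmt2 [Fintype N] [DecidableEq N] [Fintype G] [DecidableEq G]
    (Bset : N → Finset G) (v : ℚ) (hv0 : 0 < v) (hv1 : v < 1)
    (AP : N → Finset G)
    (hAPdisj : (Set.univ : Set N).PairwiseDisjoint AP)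
    (hAPbig : ∀ i, AP i ⊆ Bset i)
    (A : N → Finset G) (hA : IsSmallExtension Bset AP A)
    (hbal : ∀ i j : N, twoVal Bset v i (A i) + v < twoVal Bset v j (A j) →
      (A j \ Bset j).card = 0) :
    ∀ A' : N → Finset G, IsSmallExtension Bset AP A' →
      ∏ i, twoVal Bset v i (A' i) ≤ ∏ i, twoVal Bset v i (A i) := by
  intro A' hA'
  set b : N → ℚ := fun i => ((AP i).card : ℚ) with hb
  set s : N → ℕ := fun i => (A i \ Bset i).card with hs
  set t : N → ℕ := fun i => (A' i \ Bset i).card with ht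
  have hvalA : ∀ i, twoVal Bset v i (A i) = b i + v * s i := by
    intro i
    rw [twoVal, ext_inter Bset AP A hAPbig hA i]
  have hvalA' : ∀ i, twoVal Bset v i (A' i) = b i + v * t i := by
    intro i
    rw [twoVal, ext_inter Bset AP A' hAPbig hA' i]
  have hsum : (∑ i, t i) = ∑ i, s i := by
    rw [ht, hs]
    simp only
    rw [ext_sum Bset AP A hAPbig hA, ext_sum Bset AP A' hAPbig hA']
  have hloc : ∀ i j : N, 1 ≤ s j → b j + v * s j ≤ b i + v * s i + v := by
    intro i j hsj
    by_contra hlt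
    push_neg at hlt
    have := hbal i j (by rw [hvalA i, hvalA j]; linarith)
    rw [hs] at hsj
    simp only at hsj
    omega
  have hbnn : ∀ i, 0 ≤ b i := fun i => Nat.cast_nonneg _
  calc ∏ i, twoVal Bset v i (A' i) = ∏ i, (b i + v * t i) :=
        Finset.prod_congr rfl (fun i _ => hvalA' i)
    _ ≤ ∏ i, (b i + v * s i) :=
        key_lemma v hv0 b hbnn s hloc (∑ i, (t i - s i)) t le_rfl hsum
    _ = ∏ i, twoVal Bset v i (A i) :=
        (Finset.prod_congr rfl (fun i _ => (hvalA i))).symm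
end

section
/- Suppose there is an agent i with b_i < b*_i, and let j be any agent with b*_j < b_j such that there is a BB-balancing path from i to j in the transformation graph G_{O*→O}. Then v_i(O*_i) − 1 + v·⌊1/v⌋ < v_j(O*_j) < v_i(O*_i) − 1 + v·⌈1/v⌉, and moreover b_j ≤ b_i + 1 and b_j ≤ b*_i. -/
open Finset

variable {N G : Type*}

/-- The Nash product of an allocation. -/
def nashProd [Fintype N] [DecidableEq G] (Bset : N → Finset G) (v : ℚ)
    (A : N → Finset G) : ℚ :=
  ∏ i, twoVal Bset v i (A i)

/-- `O` is an optimal allocation for the dichotomous instance: among non-wasteful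
allocations it maximizes the number of agents with nonempty bundle and, subject to
that, the product of bundle sizes over agents with nonempty bundle. -/
def DichOptimal [Fintype N] [DecidableEq G] (Bset O : N → Finset G) : Prop :=
  IsNonWasteful Bset O ∧
    ∀ O' : N → Finset G, IsNonWasteful Bset O' →
      ((Finset.univ.filter fun i => O' i ≠ ∅).card ≤
        (Finset.univ.filter fun i => O i ≠ ∅).card) ∧
      ((Finset.univ.filter fun i => O' i ≠ ∅).card =
          (Finset.univ.filter fun i => O i ≠ ∅).card →
        ∏ i ∈ Finset.univ.filter fun i => O' i ≠ ∅, (O' i).card ≤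
          ∏ i ∈ Finset.univ.filter fun i => O i ≠ ∅, (O i).card)

/-- `Ostar` maximizes the Nash product over all allocations and, among Nash-product
maximizers, maximizes `∑ i, |O i ∩ Ostar i|` (it is sum-closest to `O`). -/
def NashOptimalClosest [Fintype N] [Fintype G] [DecidableEq G]
    (Bset : N → Finset G) (v : ℚ) (O Ostar : N → Finset G) : Prop :=
  IsAllocation Ostar ∧
    (∀ A : N → Finset G, IsAllocation A → nashProd Bset v A ≤ nashProd Bset v Ostar) ∧
    (∀ A : N → Finset G, IsAllocation A → nashProd Bset v A = nashProd Bset v Ostar →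
      ∑ i, (O i ∩ A i).card ≤ ∑ i, (O i ∩ Ostar i).card)

lemma twoVal_eq_sum [DecidableEq G] (Bset : N → Finset G) (v : ℚ) (i : N) (A : Finset G) :
    twoVal Bset v i A = ∑ g ∈ A, (if g ∈ Bset i then (1:ℚ) else v) := by
  classical
  have h1 : A.filter (fun g => g ∈ Bset i) = A ∩ Bset i := by
    ext g; simp [mem_filter, mem_inter]
  have h2 : A.filter (fun g => ¬ g ∈ Bset i) = A \ Bset i := by
    ext g; simp
  rw [Finset.sum_ite, h1, h2, sum_const, sum_const, nsmul_eq_mul, nsmul_eq_mul, twoVal]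
  ring

lemma twoVal_nonneg [DecidableEq G] (Bset : N → Finset G) (v : ℚ) (hv : 0 ≤ v) (i : N)
    (A : Finset G) : 0 ≤ twoVal Bset v i A := by
  have h1 : (0:ℚ) ≤ ((A ∩ Bset i).card : ℚ) := by positivity
  have h2 : (0:ℚ) ≤ ((A \ Bset i).card : ℚ) := by positivity
  have := mul_nonneg hv h2
  unfold twoVal; linarith

lemma teleZ (k : ℕ) (f : Fin (k+1) → ℤ) :
    (∑ t : Fin k, f t.succ) - (∑ t : Fin k, f t.castSucc) = f (Fin.last k) - f 0 := by
  have h1 := Fin.sum_univ_succ f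
  have h2 := Fin.sum_univ_castSucc f
  linarith

lemma tele_count [DecidableEq N] {k : ℕ} (ag : Fin (k+1) → N) (h : N) :
    ((univ.filter (fun t : Fin k => ag t.succ = h)).card : ℤ) -
      ((univ.filter (fun t : Fin k => ag t.castSucc = h)).card : ℤ)
    = (if ag (Fin.last k) = h then 1 else 0) - (if ag 0 = h then 1 else 0) := by
  classical
  have e1 : ((univ.filter (fun t : Fin k => ag t.succ = h)).card : ℤ)
      = ∑ t : Fin k, (fun m => if ag m = h then (1:ℤ) else 0) t.succ := by
    rw [Finset.card_filter]; push_cast; simp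
  have e2 : ((univ.filter (fun t : Fin k => ag t.castSucc = h)).card : ℤ)
      = ∑ t : Fin k, (fun m => if ag m = h then (1:ℤ) else 0) t.castSucc := by
    rw [Finset.card_filter]; push_cast; simp
  rw [e1, e2]
  exact teleZ k (fun m => if ag m = h then (1:ℤ) else 0)

lemma sum_count_succ [Fintype N] [DecidableEq N] {k : ℕ} (ag : Fin (k+1) → N) :
    ∑ h : N, (univ.filter (fun t : Fin k => ag t.succ = h)).card = k := by
  classical
  have e : ∀ h : N, (univ.filter (fun t : Fin k => ag t.succ = h)).card
      = ∑ t : Fin k, if ag t.succ = h then 1 else 0 := fun h => Finset.card_filter _ _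
  simp only [e]
  rw [Finset.sum_comm]
  simp [Finset.sum_ite_eq]

lemma sum_count_both [Fintype N] [DecidableEq N] {k : ℕ} (ag : Fin (k+1) → N) :
    ∑ h : N, (univ.filter (fun t : Fin k => ag t.castSucc = h ∧ ag t.succ = h)).card
      = (univ.filter (fun t : Fin k => ag t.castSucc = ag t.succ)).card := by
  classical
  have e : ∀ h : N, (univ.filter (fun t : Fin k => ag t.castSucc = h ∧ ag t.succ = h)).card
      = ∑ t : Fin k, if ag t.castSucc = h ∧ ag t.succ = h then 1 else 0 :=
    fun h => Finset.card_filter _ _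
  simp only [e]
  rw [Finset.sum_comm, Finset.card_filter]
  refine Finset.sum_congr rfl ?_
  intro t _
  by_cases he : ag t.castSucc = ag t.succ
  · rw [if_pos he]
    rw [Finset.sum_eq_single (ag t.succ)]
    · simp [he]
    · intro b _ hb; simp only [ite_eq_right_iff]; rintro ⟨-, h2⟩; exact absurd h2.symm hb
    · simp
  · rw [if_neg he]
    refine Finset.sum_eq_zero ?_
    intro b _
    simp only [ite_eq_right_iff]
    rintro ⟨h1, h2⟩; exact absurd (h1.trans h2.symm) he

lemma key_ineq [Fintype N] [DecidableEq N] [Fintype G] [DecidableEq G]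
    (Bset : N → Finset G) (v : ℚ) (hv0 : 0 < v) (hv1 : v < 1)
    (O Ostar : N → Finset G) (hOsubB : ∀ h, O h ⊆ Bset h)
    (hOdisj : ∀ {x : G} {a b : N}, x ∈ O a → x ∈ O b → a = b)
    (hOstar : NashOptimalClosest Bset v O Ostar)
    (hpos : ∀ h, 0 < twoVal Bset v h (Ostar h))
    {k : ℕ} (ag : Fin (k+1) → N) (gd : Fin k → G) (hinj : Function.Injective gd)
    (i j : N) (hij : i ≠ j) (hag0 : ag 0 = i) (hagl : ag (Fin.last k) = j)
    (hmem : ∀ t : Fin k, gd t ∈ Ostar (ag t.castSucc) ∧ gd t ∈ O (ag t.succ))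
    (hCB : ∀ t : Fin k, gd t ∈ Bset (ag t.castSucc))
    (S : Finset G) (hS : S ⊆ Ostar j \ Bset j) :
    ∃ σ : ℚ, (S.card : ℚ) * v ≤ σ ∧
      0 ≤ twoVal Bset v j (Ostar j) + 1 - S.card * v ∧
      (twoVal Bset v i (Ostar i) - 1 + σ) * (twoVal Bset v j (Ostar j) + 1 - S.card * v)
        < twoVal Bset v i (Ostar i) * twoVal Bset v j (Ostar j) := by
  classical
  obtain ⟨⟨hOsd, hOscover⟩, hmax, hclosest⟩ := hOstar
  have hOsdisj : ∀ {x : G} {a b : N}, x ∈ Ostar a → x ∈ Ostar b → a = b := by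
    intro x a b ha hb
    by_contra hne
    exact (Finset.disjoint_left.mp (hOsd (Set.mem_univ a) (Set.mem_univ b) hne)) ha hb
  set Rem : N → Finset G := fun h => (univ.filter (fun t : Fin k => ag t.castSucc = h)).image gd
    with hRemdef
  set Add : N → Finset G := fun h => (univ.filter (fun t : Fin k => ag t.succ = h)).image gd
    with hAdddef
  have hRemh : ∀ h, Rem h = (univ.filter (fun t : Fin k => ag t.castSucc = h)).image gd :=
    fun _ => rfl
  have hAddh : ∀ h, Add h = (univ.filter (fun t : Fin k => ag t.succ = h)).image gd :=
    fun _ => rfl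
  have hRemsub : ∀ h, Rem h ⊆ Ostar h := by
    intro h x hx
    rw [hRemh, mem_image] at hx
    obtain ⟨t, htf, rfl⟩ := hx
    exact (mem_filter.mp htf).2 ▸ (hmem t).1
  have hAddO : ∀ h, Add h ⊆ O h := by
    intro h x hx
    rw [hAddh, mem_image] at hx
    obtain ⟨t, htf, rfl⟩ := hx
    exact (mem_filter.mp htf).2 ▸ (hmem t).2
  have hSsub : S ⊆ Ostar j := fun x hx => (mem_sdiff.mp (hS hx)).1
  have hSnB : ∀ x ∈ S, x ∉ Bset j := fun x hx => (mem_sdiff.mp (hS hx)).2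
  have hSgd : ∀ t : Fin k, gd t ∉ S := by
    intro t ht
    have h1 : ag t.castSucc = j := hOsdisj (hmem t).1 (hSsub ht)
    exact hSnB _ ht (h1 ▸ hCB t)
  have hSnotOj : ∀ x ∈ S, x ∉ O j := fun x hx hxO => hSnB x hx (hOsubB j hxO)
  set A : N → Finset G := fun h =>
    (Ostar h \ (Rem h ∪ if h = j then S else ∅)) ∪ (Add h ∪ if h = i then S else ∅) with hAdef
  have hAh : ∀ h, A h =
      (Ostar h \ (Rem h ∪ if h = j then S else ∅)) ∪ (Add h ∪ if h = i then S else ∅) :=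
    fun _ => rfl
  -- membership characterization
  have hchar : ∀ (x : G) (h : N), x ∈ A h ↔
      ((∃ t, gd t = x ∧ ag t.succ = h) ∨ (x ∈ S ∧ h = i) ∨
        ((∀ t, gd t ≠ x) ∧ x ∉ S ∧ x ∈ Ostar h)) := by
    intro x h
    rw [hAh]
    constructor
    · intro hx
      rcases mem_union.mp hx with hx1 | hx2
      · obtain ⟨hxO, hxN⟩ := mem_sdiff.mp hx1
        refine Or.inr (Or.inr ⟨?_, ?_, hxO⟩)
        · intro t ht
          apply hxN
          apply mem_union_left
          have hc : ag t.castSucc = h := hOsdisj (ht ▸ (hmem t).1) hxO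
          rw [hRemh, mem_image]
          exact ⟨t, mem_filter.mpr ⟨mem_univ t, hc⟩, ht⟩
        · intro hxS'
          apply hxN
          apply mem_union_right
          have hc : h = j := hOsdisj hxO (hSsub hxS')
          rw [if_pos hc]
          exact hxS'
      · rcases mem_union.mp hx2 with hxA | hxS
        · rw [hAddh, mem_image] at hxA
          obtain ⟨t, htf, rfl⟩ := hxA
          exact Or.inl ⟨t, rfl, (mem_filter.mp htf).2⟩
        · by_cases hhi : h = i
          · rw [if_pos hhi] at hxS
            exact Or.inr (Or.inl ⟨hxS, hhi⟩)
          · rw [if_neg hhi] at hxS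
            exact absurd hxS (notMem_empty x)
    · intro hx
      rcases hx with ⟨t, rfl, ht⟩ | ⟨hxS, rfl⟩ | ⟨hng, hnS, hxO⟩
      · refine mem_union.mpr (Or.inr (mem_union.mpr (Or.inl ?_)))
        rw [hAddh, mem_image]
        exact ⟨t, mem_filter.mpr ⟨mem_univ t, ht⟩, rfl⟩
      · refine mem_union.mpr (Or.inr (mem_union.mpr (Or.inr ?_)))
        rw [if_pos rfl]
        exact hxS
      · refine mem_union.mpr (Or.inl (mem_sdiff.mpr ⟨hxO, ?_⟩))
        rw [mem_union]
        rintro (hxR | hxS')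
        · rw [hRemh, mem_image] at hxR
          obtain ⟨t, _, ht⟩ := hxR
          exact hng t ht
        · by_cases hhj : h = j
          · rw [if_pos hhj] at hxS'
            exact hnS hxS'
          · rw [if_neg hhj] at hxS'
            exact notMem_empty x hxS'
  have halloc : IsAllocation A := by
    constructor
    · intro p _ q _ hpq
      simp only [Function.onFun]
      rw [Finset.disjoint_left]
      intro x hxp hxq
      rw [hchar] at hxp hxq
      rcases hxp with ⟨t, rfl, ht⟩ | ⟨hxS, rfl⟩ | ⟨hng, hnS, hxO⟩
      · rcases hxq with ⟨t', he, ht'⟩ | ⟨hxS, rfl⟩ | ⟨hng, _, _⟩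
        · exact hpq (by rw [← ht, ← ht', hinj he])
        · exact hSgd t hxS
        · exact hng t rfl
      · rcases hxq with ⟨t', he, _⟩ | ⟨_, rfl⟩ | ⟨_, hnS, _⟩
        · exact hSgd t' (he ▸ hxS)
        · exact hpq rfl
        · exact hnS hxS
      · rcases hxq with ⟨t', he, _⟩ | ⟨hxS, rfl⟩ | ⟨_, _, hxO'⟩
        · exact hng t' he
        · exact hnS hxS
        · exact hpq (hOsdisj hxO hxO')
    · ext x
      simp only [mem_biUnion, mem_univ, true_and, iff_true]
      have hxO : ∃ h, x ∈ Ostar h := by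
        have hx : x ∈ univ.biUnion Ostar := by rw [hOscover]; exact mem_univ x
        simpa using hx
      obtain ⟨h₀, hx₀⟩ := hxO
      by_cases hex : ∃ t, gd t = x
      · obtain ⟨t, rfl⟩ := hex
        exact ⟨ag t.succ, (hchar _ _).mpr (Or.inl ⟨t, rfl, rfl⟩)⟩
      · by_cases hxS : x ∈ S
        · exact ⟨i, (hchar _ _).mpr (Or.inr (Or.inl ⟨hxS, rfl⟩))⟩
        · exact ⟨h₀, (hchar _ _).mpr (Or.inr (Or.inr ⟨fun t ht => hex ⟨t, ht⟩, hxS, hx₀⟩))⟩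
  -- subset/disjointness facts for value computation
  have hDelsub : ∀ h, Rem h ∪ (if h = j then S else ∅) ⊆ Ostar h := by
    intro h
    apply Finset.union_subset (hRemsub h)
    split_ifs with hh
    · exact hh ▸ hSsub
    · exact Finset.empty_subset _
  have hInsdisj : ∀ h,
      Disjoint (Ostar h \ (Rem h ∪ if h = j then S else ∅)) (Add h ∪ if h = i then S else ∅) := by
    intro h
    rw [Finset.disjoint_right]
    intro x hxI hxD
    obtain ⟨hxO, hxN⟩ := mem_sdiff.mp hxD
    rcases mem_union.mp hxI with hxA | hxS
    · rw [hAddh, mem_image] at hxA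
      obtain ⟨t, _, rfl⟩ := hxA
      apply hxN
      apply mem_union_left
      have hc : ag t.castSucc = h := hOsdisj (hmem t).1 hxO
      rw [hRemh, mem_image]
      exact ⟨t, mem_filter.mpr ⟨mem_univ t, hc⟩, rfl⟩
    · by_cases hhi : h = i
      · rw [if_pos hhi] at hxS
        subst hhi
        exact hij (hOsdisj hxO (hSsub hxS))
      · rw [if_neg hhi] at hxS
        exact notMem_empty x hxS
  have hDisjRS : ∀ h, Disjoint (Rem h) (if h = j then S else ∅) := by
    intro h
    split_ifs with hh
    · rw [Finset.disjoint_left]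
      intro x hxR hxS
      rw [hRemh, mem_image] at hxR
      obtain ⟨t, _, rfl⟩ := hxR
      exact hSgd t hxS
    · exact Finset.disjoint_empty_right _
  have hDisjAS : ∀ h, Disjoint (Add h) (if h = i then S else ∅) := by
    intro h
    split_ifs with hh
    · rw [Finset.disjoint_left]
      intro x hxA hxS
      rw [hAddh, mem_image] at hxA
      obtain ⟨t, _, rfl⟩ := hxA
      exact hSgd t hxS
    · exact Finset.disjoint_empty_right _
  -- value formula
  have hval : ∀ h, twoVal Bset v h (A h)
      = twoVal Bset v h (Ostar h)
        - (∑ g ∈ Rem h, (if g ∈ Bset h then (1:ℚ) else v))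
        - (∑ g ∈ (if h = j then S else ∅), (if g ∈ Bset h then (1:ℚ) else v))
        + (∑ g ∈ Add h, (if g ∈ Bset h then (1:ℚ) else v))
        + (∑ g ∈ (if h = i then S else ∅), (if g ∈ Bset h then (1:ℚ) else v)) := by
    intro h
    rw [twoVal_eq_sum, twoVal_eq_sum, hAh h, Finset.sum_union (hInsdisj h),
      Finset.sum_sdiff_eq_sub (hDelsub h), Finset.sum_union (hDisjRS h),
      Finset.sum_union (hDisjAS h)]
    ring
  have hwRem : ∀ h, (∑ g ∈ Rem h, (if g ∈ Bset h then (1:ℚ) else v))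
      = ((univ.filter (fun t : Fin k => ag t.castSucc = h)).card : ℚ) := by
    intro h
    rw [hRemh, Finset.sum_image (fun x _ y _ hxy => hinj hxy)]
    have he : ∀ t ∈ univ.filter (fun t : Fin k => ag t.castSucc = h),
        (if gd t ∈ Bset h then (1:ℚ) else v) = 1 := by
      intro t ht
      exact if_pos ((mem_filter.mp ht).2 ▸ hCB t)
    rw [Finset.sum_congr rfl he, Finset.sum_const, nsmul_eq_mul, mul_one]
  have hDB : ∀ t : Fin k, gd t ∈ Bset (ag t.succ) := fun t => hOsubB _ (hmem t).2
  have hwAdd : ∀ h, (∑ g ∈ Add h, (if g ∈ Bset h then (1:ℚ) else v))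
      = ((univ.filter (fun t : Fin k => ag t.succ = h)).card : ℚ) := by
    intro h
    rw [hAddh, Finset.sum_image (fun x _ y _ hxy => hinj hxy)]
    have he : ∀ t ∈ univ.filter (fun t : Fin k => ag t.succ = h),
        (if gd t ∈ Bset h then (1:ℚ) else v) = 1 := by
      intro t ht
      exact if_pos ((mem_filter.mp ht).2 ▸ hDB t)
    rw [Finset.sum_congr rfl he, Finset.sum_const, nsmul_eq_mul, mul_one]
  have hwSj : (∑ g ∈ S, (if g ∈ Bset j then (1:ℚ) else v)) = S.card * v := by
    rw [Finset.sum_congr rfl (fun g hg => if_neg (hSnB g hg)), Finset.sum_const, nsmul_eq_mul]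
  set σ : ℚ := ∑ g ∈ S, (if g ∈ Bset i then (1:ℚ) else v) with hσdef
  have hσge : (S.card : ℚ) * v ≤ σ := by
    have h1 : (S.card : ℚ) * v = ∑ _g ∈ S, v := by
      rw [Finset.sum_const, nsmul_eq_mul]
    rw [h1, hσdef]
    refine Finset.sum_le_sum ?_
    intro g _
    split_ifs
    · linarith
    · exact le_refl v
  have htel : ∀ h, ((univ.filter (fun t : Fin k => ag t.succ = h)).card : ℚ)
      - ((univ.filter (fun t : Fin k => ag t.castSucc = h)).card : ℚ)
      = (if j = h then 1 else 0) - (if i = h then 1 else 0) := by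
    intro h
    have ht := tele_count ag h
    rw [hag0, hagl] at ht
    split_ifs at ht ⊢ <;> exact_mod_cast ht
  have hvali : twoVal Bset v i (A i) = twoVal Bset v i (Ostar i) - 1 + σ := by
    have h1 := hval i
    rw [if_neg hij, if_pos rfl, Finset.sum_empty, hwRem i, hwAdd i] at h1
    have h2 := htel i
    rw [if_neg (fun hh => hij hh.symm), if_pos rfl] at h2
    rw [h1, ← hσdef]
    linarith
  have hvalj : twoVal Bset v j (A j) = twoVal Bset v j (Ostar j) + 1 - S.card * v := by
    have h1 := hval j
    rw [if_pos rfl, if_neg (fun hh => hij hh.symm), Finset.sum_empty, hwRem j, hwAdd j, hwSj] at h1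
    have h2 := htel j
    rw [if_pos rfl, if_neg hij] at h2
    rw [h1]
    linarith
  have hvalo : ∀ h, h ≠ i → h ≠ j → twoVal Bset v h (A h) = twoVal Bset v h (Ostar h) := by
    intro h hhi hhj
    have h1 := hval h
    rw [if_neg hhj, if_neg hhi, Finset.sum_empty, hwRem h, hwAdd h] at h1
    have h2 := htel h
    rw [if_neg (fun hh => hhj hh.symm), if_neg (fun hh => hhi hh.symm)] at h2
    rw [h1]
    linarith
  -- closeness strictly increases
  have hperh : ∀ h, (O h ∩ Ostar h).card + (univ.filter (fun t : Fin k => ag t.succ = h)).card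
      ≤ (O h ∩ A h).card
        + (univ.filter (fun t : Fin k => ag t.castSucc = h ∧ ag t.succ = h)).card := by
    intro h
    have e1 : O h ∩ A h = (O h ∩ (Ostar h \ (Rem h ∪ if h = j then S else ∅)))
        ∪ (O h ∩ (Add h ∪ if h = i then S else ∅)) := by
      rw [hAh h, Finset.inter_union_distrib_left]
    have hdisj2 : Disjoint (O h ∩ (Ostar h \ (Rem h ∪ if h = j then S else ∅)))
        (O h ∩ (Add h ∪ if h = i then S else ∅)) :=
      (hInsdisj h).mono inter_subset_right inter_subset_right
    have e2 : (O h ∩ A h).card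
        = (O h ∩ (Ostar h \ (Rem h ∪ if h = j then S else ∅))).card
          + (O h ∩ (Add h ∪ if h = i then S else ∅)).card := by
      rw [e1]; exact Finset.card_union_of_disjoint hdisj2
    have e3 : (Add h).card ≤ (O h ∩ (Add h ∪ if h = i then S else ∅)).card :=
      Finset.card_le_card (Finset.subset_inter (hAddO h) Finset.subset_union_left)
    have e4 : (Add h).card = (univ.filter (fun t : Fin k => ag t.succ = h)).card := by
      rw [hAddh]; exact Finset.card_image_of_injective _ hinj
    have e5 : (O h ∩ Ostar h).card
        ≤ (O h ∩ (Ostar h \ (Rem h ∪ if h = j then S else ∅))).card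
          + (O h ∩ (Rem h ∪ if h = j then S else ∅)).card := by
      refine le_trans (Finset.card_le_card ?_) (Finset.card_union_le _ _)
      intro x hx
      obtain ⟨hxO, hxOs⟩ := mem_inter.mp hx
      by_cases hxD : x ∈ Rem h ∪ (if h = j then S else ∅)
      · exact mem_union_right _ (mem_inter.mpr ⟨hxO, hxD⟩)
      · exact mem_union_left _ (mem_inter.mpr ⟨hxO, mem_sdiff.mpr ⟨hxOs, hxD⟩⟩)
    have e6 : (O h ∩ (Rem h ∪ if h = j then S else ∅))
        ⊆ (univ.filter (fun t : Fin k => ag t.castSucc = h ∧ ag t.succ = h)).image gd := by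
      intro x hx
      obtain ⟨hxO, hxD⟩ := mem_inter.mp hx
      rcases mem_union.mp hxD with hxR | hxS
      · rw [hRemh, mem_image] at hxR
        obtain ⟨t, htf, rfl⟩ := hxR
        have h1 : ag t.castSucc = h := (mem_filter.mp htf).2
        have h2 : ag t.succ = h := hOdisj (hmem t).2 hxO
        exact mem_image.mpr ⟨t, mem_filter.mpr ⟨mem_univ t, ⟨h1, h2⟩⟩, rfl⟩
      · by_cases hhj : h = j
        · rw [if_pos hhj] at hxS
          subst hhj
          exact absurd hxO (hSnotOj x hxS)
        · rw [if_neg hhj] at hxS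
          exact absurd hxS (notMem_empty x)
    have e7 : (O h ∩ (Rem h ∪ if h = j then S else ∅)).card
        ≤ (univ.filter (fun t : Fin k => ag t.castSucc = h ∧ ag t.succ = h)).card :=
      le_trans (Finset.card_le_card e6) Finset.card_image_le
    omega
  have hsum1 : (∑ h, (O h ∩ Ostar h).card) + k
      ≤ (∑ h, (O h ∩ A h).card)
        + (univ.filter (fun t : Fin k => ag t.castSucc = ag t.succ)).card := by
    have hs := Finset.sum_le_sum (fun h (_ : h ∈ (univ : Finset N)) => hperh h)
    rw [Finset.sum_add_distrib, Finset.sum_add_distrib, sum_count_succ ag, sum_count_both ag] at hs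
    exact hs
  have hk0 : (univ.filter (fun t : Fin k => ag t.castSucc = ag t.succ)).card < k := by
    have hex : ∃ t : Fin k, ag t.castSucc ≠ ag t.succ := by
      by_contra hcon
      push_neg at hcon
      have hconst : ∀ n, (hn : n ≤ k) → ag ⟨n, by omega⟩ = ag 0 := by
        intro n
        induction n with
        | zero => intro hn; rfl
        | succ m ih =>
          intro hn
          have hmk : m < k := by omega
          have h1 : (⟨m+1, by omega⟩ : Fin (k+1)) = (⟨m, hmk⟩ : Fin k).succ := rfl
          have h2 : (⟨m, by omega⟩ : Fin (k+1)) = (⟨m, hmk⟩ : Fin k).castSucc := rfl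
          rw [h1, ← hcon ⟨m, hmk⟩, ← h2, ih (by omega)]
      have hlast : ag (Fin.last k) = ag 0 := hconst k (le_refl k)
      rw [hag0, hagl] at hlast
      exact hij hlast.symm
    obtain ⟨t, ht⟩ := hex
    have hss : (univ.filter (fun t : Fin k => ag t.castSucc = ag t.succ)) ⊂ univ :=
      (Finset.ssubset_iff_of_subset (Finset.filter_subset _ _)).mpr
        ⟨t, mem_univ t, by simp [ht]⟩
    have := Finset.card_lt_card hss
    simpa using this
  have hstrict : ∑ h, (O h ∩ Ostar h).card < ∑ h, (O h ∩ A h).card := by omega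
  have hle := hmax A halloc
  have hne : nashProd Bset v A ≠ nashProd Bset v Ostar := by
    intro heq
    have := hclosest A halloc heq
    omega
  have hlt : nashProd Bset v A < nashProd Bset v Ostar := lt_of_le_of_ne hle hne
  -- extract the two relevant factors
  have hjmem : j ∈ (univ : Finset N).erase i := Finset.mem_erase.mpr ⟨hij.symm, mem_univ j⟩
  set P := ∏ h ∈ ((univ : Finset N).erase i).erase j, twoVal Bset v h (Ostar h) with hPdef
  have ePO : nashProd Bset v Ostar
      = twoVal Bset v i (Ostar i) * (twoVal Bset v j (Ostar j) * P) := by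
    rw [nashProd, ← Finset.mul_prod_erase univ (fun h => twoVal Bset v h (Ostar h)) (mem_univ i),
      ← Finset.mul_prod_erase (univ.erase i) (fun h => twoVal Bset v h (Ostar h)) hjmem]
  have erest : ∏ h ∈ ((univ : Finset N).erase i).erase j, twoVal Bset v h (A h) = P := by
    refine Finset.prod_congr rfl ?_
    intro x hx
    obtain ⟨hxj, hx2⟩ := Finset.mem_erase.mp hx
    obtain ⟨hxi, _⟩ := Finset.mem_erase.mp hx2
    exact hvalo x hxi hxj
  have ePA : nashProd Bset v A
      = (twoVal Bset v i (Ostar i) - 1 + σ)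
        * ((twoVal Bset v j (Ostar j) + 1 - S.card * v) * P) := by
    rw [nashProd, ← Finset.mul_prod_erase univ (fun h => twoVal Bset v h (A h)) (mem_univ i),
      ← Finset.mul_prod_erase (univ.erase i) (fun h => twoVal Bset v h (A h)) hjmem,
      erest, hvali, hvalj]
  have hPpos : 0 < P := Finset.prod_pos (fun x _ => hpos x)
  refine ⟨σ, hσge, ?_, ?_⟩
  · have hnn := twoVal_nonneg Bset v hv0.le j (A j)
    rw [hvalj] at hnn
    linarith
  · rw [ePO, ePA] at hlt
    have h2 : ((twoVal Bset v i (Ostar i) - 1 + σ)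
        * (twoVal Bset v j (Ostar j) + 1 - S.card * v)) * P
        < (twoVal Bset v i (Ostar i) * twoVal Bset v j (Ostar j)) * P := by
      ring_nf at hlt ⊢
      linarith
    exact (mul_lt_mul_iff_left₀ hPpos).mp h2


lemma dich_step [Fintype N] [DecidableEq N] [Fintype G] [DecidableEq G]
    (Bset O : N → Finset G) (hO : DichOptimal Bset O)
    {k : ℕ} (ag : Fin (k+1) → N) (gd : Fin k → G) (hinj : Function.Injective gd)
    (i j : N) (hij : i ≠ j) (hag0 : ag 0 = i) (hagl : ag (Fin.last k) = j)
    (hmemO : ∀ t : Fin k, gd t ∈ O (ag t.succ))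
    (hCB : ∀ t : Fin k, gd t ∈ Bset (ag t.castSucc)) :
    (O j).card ≤ (O i).card + 1 := by
  classical
  have hOsub : ∀ h, O h ⊆ Bset h := hO.1.2.1
  have hOd : ∀ {x : G} {a b : N}, x ∈ O a → x ∈ O b → a = b := by
    intro x a b ha hb
    by_contra hne
    exact (Finset.disjoint_left.mp (hO.1.1 (Set.mem_univ a) (Set.mem_univ b) hne)) ha hb
  set Rem : N → Finset G := fun h => (univ.filter (fun t : Fin k => ag t.castSucc = h)).image gd with hRemdef
  set Add : N → Finset G := fun h => (univ.filter (fun t : Fin k => ag t.succ = h)).image gd with hAdddef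
  have hAddO : ∀ h, Add h ⊆ O h := by
    intro h x hx
    simp only [hAdddef, mem_image, mem_filter, mem_univ, true_and] at hx
    obtain ⟨t, ht, rfl⟩ := hx
    exact ht ▸ hmemO t
  set O' : N → Finset G := fun h => (O h \ Add h) ∪ Rem h with hO'def
  -- membership characterization
  have hchar : ∀ (x : G) (h : N), x ∈ O' h ↔
      ((∃ t, gd t = x ∧ ag t.castSucc = h) ∨ ((∀ t, gd t ≠ x) ∧ x ∈ O h)) := by
    intro x h
    simp only [hO'def, mem_union, mem_sdiff]
    constructor
    · rintro (⟨hxO, hxA⟩ | hxR)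
      · by_cases hex : ∃ t, gd t = x
        · obtain ⟨t, rfl⟩ := hex
          have : h = ag t.succ := hOd hxO (hmemO t)
          exfalso; apply hxA
          simp only [hAdddef, mem_image, mem_filter, mem_univ, true_and]
          exact ⟨t, this.symm, rfl⟩
        · exact Or.inr ⟨fun t ht => hex ⟨t, ht⟩, hxO⟩
      · simp only [hRemdef, mem_image, mem_filter, mem_univ, true_and] at hxR
        obtain ⟨t, ht, rfl⟩ := hxR
        exact Or.inl ⟨t, rfl, ht⟩
    · rintro (⟨t, rfl, ht⟩ | ⟨hne, hxO⟩)
      · right; simp only [hRemdef, mem_image, mem_filter, mem_univ, true_and]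
        exact ⟨t, ht, rfl⟩
      · left
        refine ⟨hxO, ?_⟩
        intro hxA
        simp only [hAdddef, mem_image, mem_filter, mem_univ, true_and] at hxA
        obtain ⟨t, _, ht⟩ := hxA
        exact hne t ht
  -- non-wasteful
  have hnw : IsNonWasteful Bset O' := by
    refine ⟨?_, ?_, ?_⟩
    · intro p _ q _ hpq
      simp only [Function.onFun]
      rw [Finset.disjoint_left]
      intro x hxp hxq
      rw [hchar] at hxp hxq
      rcases hxp with ⟨t, rfl, ht⟩ | ⟨hne, hxO⟩
      · rcases hxq with ⟨t', he, ht'⟩ | ⟨hne', _⟩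
        · exact hpq (ht ▸ ht' ▸ (by rw [hinj he]))
        · exact hne' t rfl
      · rcases hxq with ⟨t', he, _⟩ | ⟨_, hxO'⟩
        · exact hne t' he
        · exact hpq (hOd hxO hxO')
    · intro h
      apply Finset.union_subset
      · exact Finset.sdiff_subset.trans (hOsub h)
      · intro x hx
        simp only [hRemdef, mem_image, mem_filter, mem_univ, true_and] at hx
        obtain ⟨t, ht, rfl⟩ := hx
        exact ht ▸ hCB t
    · rw [← hO.1.2.2]
      ext x
      simp only [mem_biUnion, mem_univ, true_and]
      constructor
      · rintro ⟨h, hx⟩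
        rw [hchar] at hx
        rcases hx with ⟨t, rfl, _⟩ | ⟨_, hxO⟩
        · exact ⟨ag t.succ, hmemO t⟩
        · exact ⟨h, hxO⟩
      · rintro ⟨h, hx⟩
        by_cases hex : ∃ t, gd t = x
        · obtain ⟨t, rfl⟩ := hex
          exact ⟨ag t.castSucc, (hchar _ _).mpr (Or.inl ⟨t, rfl, rfl⟩)⟩
        · exact ⟨h, (hchar _ _).mpr (Or.inr ⟨fun t ht => hex ⟨t, ht⟩, hx⟩)⟩
  -- cardinalities
  have hcard : ∀ h, ((O' h).card : ℤ) =
      (O h).card + (if i = h then 1 else 0) - (if j = h then 1 else 0) := by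
    intro h
    have hdisj : Disjoint (O h \ Add h) (Rem h) := by
      rw [Finset.disjoint_right]
      intro x hxR hxS
      simp only [hRemdef, mem_image, mem_filter, mem_univ, true_and] at hxR
      obtain ⟨t, ht, rfl⟩ := hxR
      rw [mem_sdiff] at hxS
      apply hxS.2
      have : h = ag t.succ := hOd hxS.1 (hmemO t)
      simp only [hAdddef, mem_image, mem_filter, mem_univ, true_and]
      exact ⟨t, this.symm, rfl⟩
    have h1 : (O' h).card = (O h \ Add h).card + (Rem h).card :=
      Finset.card_union_of_disjoint hdisj
    have h2 : (O h \ Add h).card + (Add h).card = (O h).card :=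
      Finset.card_sdiff_add_card_eq_card (hAddO h)
    have h5 : (Rem h).card = (univ.filter (fun t : Fin k => ag t.castSucc = h)).card := by
      rw [hRemdef]; exact Finset.card_image_of_injective _ hinj
    have h6 : (Add h).card = (univ.filter (fun t : Fin k => ag t.succ = h)).card := by
      rw [hAdddef]; exact Finset.card_image_of_injective _ hinj
    have htc := tele_count ag h
    rw [hag0, hagl] at htc
    rw [h5] at h1; rw [h6] at h2
    split_ifs at htc ⊢ <;> omega
  by_cases hbj : (O j).card ≤ 1
  · omega
  · push_neg at hbj
    have hOj' : ((O' j).card : ℤ) = (O j).card - 1 := by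
      have hcx := hcard j; rw [if_neg hij, if_pos rfl] at hcx; omega
    have hOi' : ((O' i).card : ℤ) = (O i).card + 1 := by
      have hcx := hcard i; rw [if_pos rfl, if_neg (fun hh => hij hh.symm)] at hcx; omega
    by_cases hbi : (O i).card = 0
    · exfalso
      have hcount := (hO.2 O' hnw).1
      have hsub : insert i (univ.filter fun h => O h ≠ ∅) ⊆ (univ.filter fun h => O' h ≠ ∅) := by
        intro x hx
        rw [Finset.mem_insert] at hx
        simp only [mem_filter, mem_univ, true_and, ne_eq, ← Finset.card_eq_zero] at hx ⊢
        rcases hx with rfl | hx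
        · omega
        · have hcx := hcard x
          rcases eq_or_ne j x with rfl | hjx
          · rw [if_pos rfl] at hcx; split_ifs at hcx <;> omega
          · rw [if_neg hjx] at hcx; split_ifs at hcx <;> omega
      have hnotin : i ∉ (univ.filter fun h => O h ≠ ∅) := by
        intro hmem
        exact (mem_filter.mp hmem).2 (Finset.card_eq_zero.mp hbi)
      have hcc := Finset.card_le_card hsub
      rw [Finset.card_insert_of_notMem hnotin] at hcc
      omega
    · have hFeq : (univ.filter fun h => O' h ≠ ∅) = (univ.filter fun h => O h ≠ ∅) := by
        ext x
        simp only [mem_filter, mem_univ, true_and, ne_eq, ← Finset.card_eq_zero]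
        have hcx := hcard x
        rcases eq_or_ne i x with rfl | hix
        · rw [if_pos rfl, if_neg (fun hh => hij hh.symm)] at hcx; omega
        · rcases eq_or_ne j x with rfl | hjx
          · rw [if_neg hix, if_pos rfl] at hcx; omega
          · rw [if_neg hix, if_neg hjx] at hcx; omega
      have hprod := (hO.2 O' hnw).2 (by rw [hFeq])
      rw [hFeq] at hprod
      set F := (univ.filter fun h => O h ≠ ∅) with hFdef
      have hiF : i ∈ F := by
        refine mem_filter.mpr ⟨mem_univ i, ?_⟩
        intro he; exact hbi (by rw [he, Finset.card_empty])
      have hjF : j ∈ F := by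
        refine mem_filter.mpr ⟨mem_univ j, ?_⟩
        intro he; rw [he, Finset.card_empty] at hbj; omega
      have hjF' : j ∈ F.erase i := Finset.mem_erase.mpr ⟨hij.symm, hjF⟩
      have eO' : ∏ x ∈ F, (O' x).card
          = (O' i).card * ((O' j).card * ∏ x ∈ (F.erase i).erase j, (O' x).card) := by
        rw [← Finset.mul_prod_erase F (fun x => (O' x).card) hiF,
          ← Finset.mul_prod_erase (F.erase i) (fun x => (O' x).card) hjF']
      have eO : ∏ x ∈ F, (O x).card
          = (O i).card * ((O j).card * ∏ x ∈ (F.erase i).erase j, (O x).card) := by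
        rw [← Finset.mul_prod_erase F (fun x => (O x).card) hiF,
          ← Finset.mul_prod_erase (F.erase i) (fun x => (O x).card) hjF']
      have hrest : ∏ x ∈ (F.erase i).erase j, (O' x).card
          = ∏ x ∈ (F.erase i).erase j, (O x).card := by
        refine Finset.prod_congr rfl ?_
        intro x hx
        obtain ⟨hxj, hx2⟩ := Finset.mem_erase.mp hx
        obtain ⟨hxi, _⟩ := Finset.mem_erase.mp hx2
        have hcx := hcard x
        rw [if_neg (fun hh => hxi hh.symm), if_neg (fun hh => hxj hh.symm)] at hcx
        omega
      have hPpos : 0 < ∏ x ∈ (F.erase i).erase j, (O x).card := by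
        apply Finset.prod_pos
        intro x hx
        have hxF : x ∈ F := (Finset.mem_erase.mp (Finset.mem_erase.mp hx).2).2
        exact Finset.card_pos.mpr (Finset.nonempty_iff_ne_empty.mpr (mem_filter.mp hxF).2)
      rw [eO', eO, hrest] at hprod
      set P := ∏ x ∈ (F.erase i).erase j, (O x).card with hPdef
      have h1 : ((O' i).card:ℤ) * (((O' j).card:ℤ) * (P:ℤ))
          ≤ ((O i).card:ℤ) * (((O j).card:ℤ) * (P:ℤ)) := by exact_mod_cast hprod
      rw [hOi', hOj'] at h1
      have hPz : (1:ℤ) ≤ (P:ℤ) := by exact_mod_cast hPpos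
      have hgoal : ((O j).card:ℤ) ≤ ((O i).card:ℤ) + 1 := by
        by_contra hcon
        push_neg at hcon
        have hpp : (0:ℤ) < (((O j).card:ℤ) - ((O i).card:ℤ) - 1) * (P:ℤ) :=
          mul_pos (by omega) (by omega)
        nlinarith [h1, hpp]
      exact_mod_cast hgoal



set_option maxHeartbeats 2000000

/-- Proposition 3.5: bounds on the valuations and numbers of big goods along a
BB-balancing path from an agent `i` with `b_i < b*_i` to an agent `j` with `b*_j < b_j`. -/
theorem stmt3 [Fintype N] [DecidableEq N] [Fintype G] [DecidableEq G]
    (Bset : N → Finset G) (v : ℚ) (hv0 : 0 < v) (hv1 : v < 1)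
    (O Ostar : N → Finset G)
    (hO : DichOptimal Bset O) (hOstar : NashOptimalClosest Bset v O Ostar)
    (i j : N)
    (hi : (O i ∩ Bset i).card < (Ostar i ∩ Bset i).card)
    (hj : (Ostar j ∩ Bset j).card < (O j ∩ Bset j).card)
    (hpath : ExistsBBPath Ostar O Bset i j) :
    (twoVal Bset v i (Ostar i) - 1 + v * (⌊1 / v⌋ : ℚ) < twoVal Bset v j (Ostar j) ∧
      twoVal Bset v j (Ostar j) < twoVal Bset v i (Ostar i) - 1 + v * (⌈1 / v⌉ : ℚ)) ∧
    (O j ∩ Bset j).card ≤ (O i ∩ Bset i).card + 1 ∧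
    (O j ∩ Bset j).card ≤ (Ostar i ∩ Bset i).card := by
  classical
  have hij : i ≠ j := by rintro rfl; omega
  have hOsubB : ∀ h, O h ⊆ Bset h := hO.1.2.1
  have hOdisj : ∀ {x : G} {a b : N}, x ∈ O a → x ∈ O b → a = b := by
    intro x a b ha hb
    by_contra hne
    exact (Finset.disjoint_left.mp (hO.1.1 (Set.mem_univ a) (Set.mem_univ b) hne)) ha hb
  obtain ⟨k, hk, ag, gd, hinj, hag0, hagl, hmem, hbal, hbb1, hbb2⟩ := hpath
  -- every path good is big for its Ostar-holder
  have hCB : ∀ t : Fin k, gd t ∈ Bset (ag t.castSucc) := by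
    intro t
    by_cases h0 : t.val = 0
    · have ht0 : t = ⟨0, by omega⟩ := Fin.ext (by simpa using h0)
      have hcs : t.castSucc = (0 : Fin (k+1)) := Fin.ext (by simp [h0])
      rw [hcs, hag0, ht0]
      exact hbb1
    · have h1 : 1 ≤ t.val := by omega
      refine (hbal t h1).mpr ?_
      have hm := (hmem ⟨t.val - 1, by have := t.isLt; omega⟩).2
      have he : (⟨t.val - 1, by have := t.isLt; omega⟩ : Fin k).succ = t.castSucc := by
        apply Fin.ext
        simp [Fin.val_succ]
        omega
      rw [he] at hm
      exact hOsubB _ hm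
  -- goals 2 and 3
  have hOBi : O i ∩ Bset i = O i := Finset.inter_eq_left.mpr (hOsubB i)
  have hOBj : O j ∩ Bset j = O j := Finset.inter_eq_left.mpr (hOsubB j)
  have hg2 : (O j ∩ Bset j).card ≤ (O i ∩ Bset i).card + 1 := by
    rw [hOBi, hOBj]
    exact dich_step Bset O hO ag gd hinj i j hij hag0 hagl (fun t => (hmem t).2) hCB
  have hg3 : (O j ∩ Bset j).card ≤ (Ostar i ∩ Bset i).card := by omega
  -- rule out the zero Nash product case
  by_cases hz : nashProd Bset v Ostar = 0
  · exfalso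
    set A0 : N → Finset G := fun h => if h = j then O j ∪ (univ \ univ.biUnion O) else O h
      with hA0def
    have hA0h : ∀ h, A0 h = if h = j then O j ∪ (univ \ univ.biUnion O) else O h := fun _ => rfl
    have hmemA0 : ∀ (x : G) (h : N), x ∈ A0 h → (x ∈ O h ∨ (h = j ∧ x ∉ univ.biUnion O)) := by
      intro x h hx
      rw [hA0h] at hx
      by_cases hh : h = j
      · rw [if_pos hh] at hx
        rcases mem_union.mp hx with hx1 | hx2
        · exact Or.inl (hh ▸ hx1)
        · exact Or.inr ⟨hh, (mem_sdiff.mp hx2).2⟩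
      · rw [if_neg hh] at hx
        exact Or.inl hx
    have halloc0 : IsAllocation A0 := by
      constructor
      · intro p _ q _ hpq
        simp only [Function.onFun]
        rw [Finset.disjoint_left]
        intro x hxp hxq
        rcases hmemA0 x p hxp with hxO | ⟨rfl, hxn⟩
        · rcases hmemA0 x q hxq with hxO' | ⟨rfl, hxn'⟩
          · exact hpq (hOdisj hxO hxO')
          · exact hxn' (mem_biUnion.mpr ⟨p, mem_univ p, hxO⟩)
        · rcases hmemA0 x q hxq with hxO' | ⟨rfl, _⟩
          · exact hxn (mem_biUnion.mpr ⟨q, mem_univ q, hxO'⟩)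
          · exact hpq rfl
      · ext x
        simp only [mem_biUnion, mem_univ, true_and, iff_true]
        by_cases hx : x ∈ univ.biUnion O
        · obtain ⟨h, _, hxh⟩ := mem_biUnion.mp hx
          by_cases hh : h = j
          · subst hh
            exact ⟨h, by rw [hA0h, if_pos rfl]; exact mem_union_left _ hxh⟩
          · exact ⟨h, by rw [hA0h, if_neg hh]; exact hxh⟩
        · refine ⟨j, ?_⟩
          rw [hA0h, if_pos rfl]
          exact mem_union_right _ (mem_sdiff.mpr ⟨mem_univ x, hx⟩)
    have hprod0 : nashProd Bset v A0 = nashProd Bset v Ostar := by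
      refine le_antisymm (hOstar.2.1 A0 halloc0) ?_
      rw [hz]
      exact Finset.prod_nonneg (fun h _ => twoVal_nonneg Bset v hv0.le h (A0 h))
    have hcl := hOstar.2.2 A0 halloc0 hprod0
    have hOA0 : ∀ h, O h ∩ A0 h = O h := by
      intro h
      refine Finset.inter_eq_left.mpr ?_
      rw [hA0h]
      by_cases hh : h = j
      · rw [if_pos hh, hh]; exact Finset.subset_union_left
      · rw [if_neg hh]
    simp only [hOA0] at hcl
    have htw : ∀ h, (O h ∩ Ostar h).card ≤ (O h).card :=
      fun h => Finset.card_le_card Finset.inter_subset_left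
    have hallj : (O j).card ≤ (O j ∩ Ostar j).card := by
      by_contra hc
      push_neg at hc
      have hslt : ∑ h, (O h ∩ Ostar h).card < ∑ h, (O h).card :=
        Finset.sum_lt_sum (fun h _ => htw h) ⟨j, mem_univ j, hc⟩
      omega
    have hOsubOs : O j ⊆ Ostar j := by
      have he : O j ∩ Ostar j = O j :=
        Finset.eq_of_subset_of_card_le Finset.inter_subset_left hallj
      rw [← he]
      exact Finset.inter_subset_right
    have : (O j ∩ Bset j).card ≤ (Ostar j ∩ Bset j).card :=
      Finset.card_le_card (Finset.inter_subset_inter hOsubOs (subset_refl _))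
    omega
  · -- positive values
    have hpos : ∀ h, 0 < twoVal Bset v h (Ostar h) := by
      intro h
      refine lt_of_le_of_ne (twoVal_nonneg Bset v hv0.le h (Ostar h)) (Ne.symm ?_)
      intro h0
      exact hz (by rw [nashProd]; exact Finset.prod_eq_zero (mem_univ h) h0)
    have key : ∀ t : ℕ, t ≤ (Ostar j \ Bset j).card → ∃ σ : ℚ, (t:ℚ) * v ≤ σ ∧
        0 ≤ twoVal Bset v j (Ostar j) + 1 - t * v ∧
        (twoVal Bset v i (Ostar i) - 1 + σ) * (twoVal Bset v j (Ostar j) + 1 - t * v)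
          < twoVal Bset v i (Ostar i) * twoVal Bset v j (Ostar j) := by
      intro t ht
      obtain ⟨S, hSsub, hScard⟩ := Finset.exists_subset_card_eq ht
      obtain ⟨σ, h1, h2, h3⟩ := key_ineq Bset v hv0 hv1 O Ostar hOsubB hOdisj hOstar hpos
        ag gd hinj i j hij hag0 hagl hmem hCB S hSsub
      rw [hScard] at h1 h2 h3
      exact ⟨σ, h1, h2, h3⟩
    have ha : twoVal Bset v i (Ostar i)
        = ((Ostar i ∩ Bset i).card : ℚ) + v * ((Ostar i \ Bset i).card : ℚ) := rfl
    have hb : twoVal Bset v j (Ostar j)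
        = ((Ostar j ∩ Bset j).card : ℚ) + v * ((Ostar j \ Bset j).card : ℚ) := rfl
    set X := twoVal Bset v i (Ostar i) with hXdef
    set Y := twoVal Bset v j (Ostar j) with hYdef
    have hXpos : 0 < X := hpos i
    have hYpos : 0 < Y := hpos j
    have hx0 : X - 1 < Y := by
      obtain ⟨σ, h1, h2, h3⟩ := key 0 (Nat.zero_le _)
      norm_num at h1 h2 h3
      nlinarith [h3, mul_nonneg h1 h2]
    have hmain : X - 1 + v * (⌊1 / v⌋ : ℚ) < Y ∧ Y < X - 1 + v * (⌈1 / v⌉ : ℚ) := by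
      by_cases hcase : (Ostar i ∩ Bset i).card = (Ostar j ∩ Bset j).card + 1
      · -- "tight" case: impossible
        exfalso
        have hcQ : ((Ostar i ∩ Bset i).card : ℚ) = ((Ostar j ∩ Bset j).card : ℚ) + 1 := by
          exact_mod_cast hcase
        have hss : (Ostar i \ Bset i).card < (Ostar j \ Bset j).card := by
          have hvv : v * ((Ostar i \ Bset i).card : ℚ) < v * ((Ostar j \ Bset j).card : ℚ) := by
            rw [ha, hb] at hx0
            linarith
          exact_mod_cast (mul_lt_mul_iff_right₀ hv0).mp hvv
        set d : ℕ := (Ostar j \ Bset j).card - (Ostar i \ Bset i).card with hddef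
        have hdle : d ≤ (Ostar j \ Bset j).card := by omega
        obtain ⟨σ, h1, h2, h3⟩ := key d hdle
        have hdq : (d:ℚ) = ((Ostar j \ Bset j).card : ℚ) - ((Ostar i \ Bset i).card : ℚ) := by
          rw [hddef]
          push_cast [Nat.cast_sub hss.le]
          ring
        have heq : Y + 1 - (d:ℚ) * v = X := by
          rw [ha, hb, hdq]
          linarith [hcQ]
        rw [heq] at h3
        have hY2 : Y = X - 1 + (d:ℚ) * v := by linarith [heq]
        rw [hY2] at h3
        nlinarith [h3, mul_nonneg (show (0:ℚ) ≤ σ - (d:ℚ)*v by linarith) (le_of_lt hXpos)]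
      · have hcase2 : (Ostar j ∩ Bset j).card + 2 ≤ (Ostar i ∩ Bset i).card := by omega
        have hc2Q : ((Ostar j ∩ Bset j).card : ℚ) + 2 ≤ ((Ostar i ∩ Bset i).card : ℚ) := by
          exact_mod_cast hcase2
        have hvs : (1:ℚ) < v * ((Ostar j \ Bset j).card : ℚ)
            - v * ((Ostar i \ Bset i).card : ℚ) := by
          rw [ha, hb] at hx0
          linarith
        have hvsj : (1:ℚ) < v * ((Ostar j \ Bset j).card : ℚ) := by
          have : (0:ℚ) ≤ v * ((Ostar i \ Bset i).card : ℚ) := by positivity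
          linarith
        set F : ℚ := ((⌊1/v⌋ : ℤ) : ℚ) with hFdef
        have hf0 : (1:ℤ) ≤ ⌊1/v⌋ := by
          refine Int.le_floor.mpr ?_
          rw [le_div_iff₀ hv0]
          push_cast
          linarith
        have hfle : F ≤ 1/v := Int.floor_le _
        have hfv : F * v ≤ 1 := by
          have := (le_div_iff₀ hv0).mp hfle
          linarith
        have hssjq : (1:ℚ)/v < ((Ostar j \ Bset j).card : ℚ) := by
          rw [div_lt_iff₀ hv0]
          linarith
        have hfssj : ⌊1/v⌋ + 1 ≤ ((Ostar j \ Bset j).card : ℤ) := by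
          have h1 : F < (((Ostar j \ Bset j).card : ℤ) : ℚ) := by
            push_cast
            exact lt_of_le_of_lt hfle hssjq
          have h2 : (⌊1/v⌋ : ℤ) < ((Ostar j \ Bset j).card : ℤ) := by
            rw [hFdef] at h1
            exact_mod_cast h1
          omega
        have ht1 : ((⌊1/v⌋).toNat : ℤ) = ⌊1/v⌋ := Int.toNat_of_nonneg (by omega)
        have ht1Q : ((⌊1/v⌋).toNat : ℚ) = F := by rw [hFdef]; exact_mod_cast ht1
        have ht1le : (⌊1/v⌋).toNat ≤ (Ostar j \ Bset j).card := by omega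
        constructor
        · -- lower bound
          obtain ⟨σ, h1, h2, h3⟩ := key _ ht1le
          rw [ht1Q] at h1 h2 h3
          show X - 1 + v * F < Y
          by_contra hcon
          push_neg at hcon
          nlinarith [h3, mul_nonneg (show (0:ℚ) ≤ σ - F*v by linarith) h2,
            mul_nonneg (show (0:ℚ) ≤ 1 - F*v by linarith)
              (show (0:ℚ) ≤ X - (Y + 1 - F*v) by linarith)]
        · -- upper bound
          by_cases hfeq : F * v = 1
          · exfalso
            obtain ⟨σ, h1, h2, h3⟩ := key _ ht1le
            rw [ht1Q] at h1 h2 h3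
            nlinarith [h3, hfeq, mul_nonneg (show (0:ℚ) ≤ σ - 1 by linarith)
              (le_of_lt hYpos)]
          · have hfvlt : F * v < 1 := lt_of_le_of_ne hfv hfeq
            have hceil : ⌈1/v⌉ = ⌊1/v⌋ + 1 := by
              refine le_antisymm (Int.ceil_le_floor_add_one _) ?_
              rw [Int.add_one_le_iff]
              refine Int.lt_ceil.mpr ?_
              rw [lt_div_iff₀ hv0]
              rw [hFdef] at hfvlt
              linarith
            have ht2le : (⌊1/v⌋).toNat + 1 ≤ (Ostar j \ Bset j).card := by omega
            obtain ⟨σ, g1, g2, g3⟩ := key _ ht2le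
            have ht2Q : (((⌊1/v⌋).toNat + 1 : ℕ) : ℚ) = F + 1 := by
              push_cast
              rw [ht1Q]
            rw [ht2Q] at g1 g2 g3
            have hq1 : (1:ℚ) ≤ (F + 1) * v := by
              have hh := Int.lt_floor_add_one (1/v)
              rw [div_lt_iff₀ hv0] at hh
              rw [hFdef]
              push_cast at hh ⊢
              linarith
            have hgoal : Y < X - 1 + v * (F + 1) := by
              by_contra hcon
              push_neg at hcon
              nlinarith [g3, mul_nonneg (show (0:ℚ) ≤ σ - (F+1)*v by linarith) g2,
                mul_nonneg (show (0:ℚ) ≤ (F+1)*v - 1 by linarith)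
                  (show (0:ℚ) ≤ (Y + 1 - (F+1)*v) - X by linarith)]
            rw [hceil]
            push_cast
            rw [hFdef] at hgoal
            push_cast at hgoal
            linarith
    exact ⟨hmain, hg2, hg3⟩
end

section
/- Suppose v = 1/t for some integer t ≥ 2 (so 1/v is an integer). Then b*_i ≤ b_i for every agent i ∈ N: in the sum-closest Nash-optimal allocation O*, no agent receives more big goods than in the optimal dichotomous allocation O. -/
open Finset

variable {N G : Type*}

section AuxMv
variable {N G : Type*} [DecidableEq N] [DecidableEq G]

/-- Reassign each good in `T` to the agent given by the target map `f`. -/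
def mvA (P : N → Finset G) (f : G → N) (T : Finset G) (x : N) : Finset G :=
  (P x \ T) ∪ T.filter (fun g => f g = x)

lemma mvA_disjoint (P : N → Finset G) (f : G → N) (T : Finset G)
    (hP : (Set.univ : Set N).PairwiseDisjoint P) :
    (Set.univ : Set N).PairwiseDisjoint (mvA P f T) := by
  intro x _ y _ hxy
  simp only [Function.onFun]
  rw [Finset.disjoint_left]
  intro a ha hb
  rcases Finset.mem_union.1 ha with h1 | h1 <;> rcases Finset.mem_union.1 hb with h2 | h2
  · exact Finset.disjoint_left.mp (hP (Set.mem_univ x) (Set.mem_univ y) hxy)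
      (Finset.mem_sdiff.1 h1).1 (Finset.mem_sdiff.1 h2).1
  · exact (Finset.mem_sdiff.1 h1).2 (Finset.mem_filter.1 h2).1
  · exact (Finset.mem_sdiff.1 h2).2 (Finset.mem_filter.1 h1).1
  · exact hxy ((Finset.mem_filter.1 h1).2.symm.trans (Finset.mem_filter.1 h2).2)

lemma mvA_biUnion [Fintype N] (P : N → Finset G) (f : G → N) (T : Finset G)
    (hT : T ⊆ univ.biUnion P) :
    univ.biUnion (mvA P f T) = univ.biUnion P := by
  ext g
  simp only [mem_biUnion, mem_univ, true_and, mvA, mem_union, mem_sdiff, mem_filter]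
  constructor
  · rintro ⟨x, (⟨h1, _⟩ | ⟨h1, _⟩)⟩
    · exact ⟨x, h1⟩
    · have := hT h1
      simpa [mem_biUnion] using this
  · rintro ⟨x, hx⟩
    by_cases hgT : g ∈ T
    · exact ⟨f g, Or.inr ⟨hgT, rfl⟩⟩
    · exact ⟨x, Or.inl ⟨hx, hgT⟩⟩

lemma mvA_inter (P : N → Finset G) (f : G → N) (T : Finset G) (x : N) (C : Finset G) :
    (mvA P f T x ∩ C).card + (P x ∩ C ∩ T).card
      = (P x ∩ C).card + ((T.filter fun g => f g = x) ∩ C).card := by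
  have h1 : mvA P f T x ∩ C = ((P x ∩ C) \ T) ∪ ((T.filter fun g => f g = x) ∩ C) := by
    ext g
    simp only [mvA, Finset.union_inter_distrib_right, mem_union, mem_inter, mem_sdiff,
      mem_filter]
    tauto
  have hdisj : Disjoint ((P x ∩ C) \ T) ((T.filter fun g => f g = x) ∩ C) := by
    rw [Finset.disjoint_left]
    intro a ha hb
    exact (Finset.mem_sdiff.1 ha).2 (Finset.mem_filter.1 (Finset.mem_inter.1 hb).1).1
  rw [h1, Finset.card_union_of_disjoint hdisj]
  have := Finset.card_sdiff_add_card_inter (P x ∩ C) T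
  omega

end AuxMv

set_option maxHeartbeats 4000000

/-- When `v = 1/t` for an integer `t ≥ 2`, no agent receives more big goods in the
sum-closest Nash-optimal allocation `O*` than in the optimal dichotomous allocation `O`. -/
theorem stmt6 [Fintype N] [DecidableEq N] [Fintype G] [DecidableEq G]
    (Bset : N → Finset G) (v : ℚ) (hv0 : 0 < v) (hv1 : v < 1)
    (t : ℕ) (ht : 2 ≤ t) (hv : v = 1 / (t : ℚ))
    (O Ostar : N → Finset G)
    (hO : DichOptimal Bset O) (hOstar : NashOptimalClosest Bset v O Ostar) :
    ∀ i : N, (Ostar i ∩ Bset i).card ≤ (O i ∩ Bset i).card := by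
  classical
  intro i
  by_contra hns
  push_neg at hns
  obtain ⟨⟨hOd, hOsub, hOcov⟩, hOopt⟩ := hO
  obtain ⟨⟨hSd, hScov⟩, hMax, hClose⟩ := hOstar
  -- basic numeric facts
  have htQ : (t : ℚ) ≠ 0 := by positivity
  have hvt : v * t = 1 := by rw [hv]; field_simp
  -- star owner
  have hex : ∀ g : G, ∃ x, g ∈ Ostar x := by
    intro g
    have : g ∈ univ.biUnion Ostar := by rw [hScov]; exact mem_univ g
    simpa [mem_biUnion] using this
  obtain ⟨sOwn, hsOwn⟩ : ∃ f : G → N, ∀ g, g ∈ Ostar (f g) :=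
    ⟨fun g => (hex g).choose, fun g => (hex g).choose_spec⟩
  have hsEq : ∀ {g x}, g ∈ Ostar x → sOwn g = x := by
    intro g x hg
    by_contra hne
    exact Finset.disjoint_left.mp (hSd (Set.mem_univ _) (Set.mem_univ _) hne) (hsOwn g) hg
  -- O owner
  obtain ⟨oOwn, hoOwn⟩ : ∃ f : G → N, ∀ g x, g ∈ O x → g ∈ O (f g) ∧ f g = x := by
    refine ⟨fun g => if h : ∃ x, g ∈ O x then h.choose else i, ?_⟩
    intro g x hg
    have hne : ∃ x, g ∈ O x := ⟨x, hg⟩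
    have hmem := hne.choose_spec
    have hEq : hne.choose = x := by
      by_contra hne2
      exact Finset.disjoint_left.mp (hOd (Set.mem_univ _) (Set.mem_univ _) hne2) hmem hg
    simp only [dif_pos hne]
    exact ⟨hEq ▸ hmem, hEq⟩
  have hoEq : ∀ {g x}, g ∈ O x → oOwn g = x := fun {g x} hg => (hoOwn g x hg).2
  -- the set E of goods that are big for their Ostar-owner
  set E : Finset G := univ.filter (fun g => g ∈ Bset (sOwn g)) with hEdef
  have hmemE : ∀ {g}, g ∈ E ↔ g ∈ Bset (sOwn g) := by
    intro g; simp [hEdef]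
  have hEO : ∀ {g}, g ∈ E → g ∈ O (oOwn g) ∧ g ∈ Bset (oOwn g) := by
    intro g hg
    have hBU : g ∈ univ.biUnion Bset := by
      refine mem_biUnion.2 ⟨sOwn g, mem_univ _, hmemE.1 hg⟩
    rw [← hOcov] at hBU
    obtain ⟨x, -, hx⟩ := mem_biUnion.1 hBU
    have h1 := (hoOwn g x hx).1
    exact ⟨h1, hOsub _ h1⟩
  -- sizes
  have hObig : ∀ x, O x ∩ Bset x = O x := fun x => inter_eq_left.mpr (hOsub x)
  -- fiber of E over sOwn
  have hEfiber : ∀ x, E.filter (fun g => sOwn g = x) = Ostar x ∩ Bset x := by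
    intro x
    ext g
    simp only [mem_filter, mem_inter, hEdef, mem_univ, true_and]
    constructor
    · rintro ⟨h1, h2⟩
      exact ⟨h2 ▸ hsOwn g, h2 ▸ h1⟩
    · rintro ⟨h1, h2⟩
      have hx := hsEq h1
      exact ⟨hx.symm ▸ h2, hx⟩
  -- at a stuck vertex j (not terminal), find a fresh outgoing edge
  have hfresh : ∀ (T : Finset G) (j : N), T ⊆ E → j ≠ i →
      ¬ ((Ostar j ∩ Bset j).card < (O j ∩ Bset j).card) →
      (∀ x, (T.filter fun g => oOwn g = x).card + (if x = i then 1 else 0)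
        = (T.filter fun g => sOwn g = x).card + (if x = j then 1 else 0)) →
      ∃ g, g ∈ E ∧ g ∉ T ∧ sOwn g = j := by
    intro T j hTE hji hnlt hflow
    have hble : (O j ∩ Bset j).card ≤ (Ostar j ∩ Bset j).card := le_of_not_gt hnlt
    have hin : (T.filter fun g => oOwn g = j).card ≤ (O j ∩ Bset j).card := by
      apply Finset.card_le_card
      intro g hg
      obtain ⟨hgT, hgo⟩ := mem_filter.1 hg
      obtain ⟨h1, h2⟩ := hEO (hTE hgT)
      rw [hgo] at h1 h2
      exact mem_inter.2 ⟨h1, h2⟩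
    have hfj := hflow j
    rw [if_neg hji, if_pos rfl] at hfj
    have hout : (T.filter fun g => sOwn g = j).card
        < (E.filter (fun g => sOwn g = j)).card := by
      rw [hEfiber]; omega
    by_contra hng
    push_neg at hng
    have hsub : E.filter (fun g => sOwn g = j) ⊆ T.filter (fun g => sOwn g = j) := by
      intro g hg
      obtain ⟨h1, h2⟩ := mem_filter.1 hg
      have hgT : g ∈ T := by
        by_contra hT
        exact hng g h1 hT h2
      exact mem_filter.2 ⟨hgT, h2⟩
    exact absurd (Finset.card_le_card hsub) (not_le.2 hout)
  -- extension process
  have ext : ∀ n : ℕ, ∀ T : Finset G, ∀ j : N, T ⊆ E →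
      (∀ x, (T.filter fun g => oOwn g = x).card + (if x = i then 1 else 0)
        = (T.filter fun g => sOwn g = x).card + (if x = j then 1 else 0)) →
      (∃ g ∈ T, oOwn g ≠ sOwn g) → (E \ T).card ≤ n →
      ∃ T' : Finset G, ∃ j' : N, T' ⊆ E ∧
        (∀ x, (T'.filter fun g => oOwn g = x).card + (if x = i then 1 else 0)
          = (T'.filter fun g => sOwn g = x).card + (if x = j' then 1 else 0)) ∧
        (∃ g ∈ T', oOwn g ≠ sOwn g) ∧
        (j' = i ∨ (Ostar j' ∩ Bset j').card < (O j' ∩ Bset j').card) := by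
    intro n
    induction n with
    | zero =>
      intro T j hTE hflow hnl hcard
      by_cases hji : j = i
      · exact ⟨T, j, hTE, hflow, hnl, Or.inl hji⟩
      by_cases hjlt : (Ostar j ∩ Bset j).card < (O j ∩ Bset j).card
      · exact ⟨T, j, hTE, hflow, hnl, Or.inr hjlt⟩
      obtain ⟨g, hgE, hgT, -⟩ := hfresh T j hTE hji hjlt hflow
      have hmem : g ∈ E \ T := mem_sdiff.2 ⟨hgE, hgT⟩
      have := Finset.card_pos.2 ⟨g, hmem⟩
      omega
    | succ n ih =>
      intro T j hTE hflow hnl hcard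
      by_cases hji : j = i
      · exact ⟨T, j, hTE, hflow, hnl, Or.inl hji⟩
      by_cases hjlt : (Ostar j ∩ Bset j).card < (O j ∩ Bset j).card
      · exact ⟨T, j, hTE, hflow, hnl, Or.inr hjlt⟩
      obtain ⟨g, hgE, hgT, hgs⟩ := hfresh T j hTE hji hjlt hflow
      refine ih (insert g T) (oOwn g) (insert_subset hgE hTE) ?_ ?_ ?_
      · intro x
        have hfx := hflow x
        have hc1 : ((insert g T).filter fun g' => oOwn g' = x).card
            = (T.filter fun g' => oOwn g' = x).card + (if oOwn g = x then 1 else 0) := by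
          rw [Finset.filter_insert]
          split_ifs with h
          · rw [Finset.card_insert_of_notMem (fun hmem => hgT (mem_filter.1 hmem).1)]
          · rfl
        have hc2 : ((insert g T).filter fun g' => sOwn g' = x).card
            = (T.filter fun g' => sOwn g' = x).card + (if sOwn g = x then 1 else 0) := by
          rw [Finset.filter_insert]
          split_ifs with h
          · rw [Finset.card_insert_of_notMem (fun hmem => hgT (mem_filter.1 hmem).1)]
          · rfl
        have e1 : (if x = oOwn g then (1:ℕ) else 0) = (if oOwn g = x then 1 else 0) := by
          by_cases h : oOwn g = x
          · rw [if_pos h, if_pos h.symm]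
          · rw [if_neg h, if_neg (fun h' => h h'.symm)]
        have e2 : (if x = j then (1:ℕ) else 0) = (if sOwn g = x then 1 else 0) := by
          by_cases h : sOwn g = x
          · rw [if_pos h, if_pos (h.symm.trans hgs)]
          · rw [if_neg h, if_neg (fun hxj => h (hgs.trans hxj.symm))]
        rw [e2] at hfx
        rw [hc1, hc2, e1]
        generalize (if x = i then (1:ℕ) else 0) = a at hfx ⊢
        generalize (if oOwn g = x then (1:ℕ) else 0) = b at hfx ⊢
        generalize (if sOwn g = x then (1:ℕ) else 0) = c at hfx ⊢
        omega
      · obtain ⟨g0, hg0T, hg0⟩ := hnl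
        exact ⟨g0, mem_insert_of_mem hg0T, hg0⟩
      · have hmem : g ∈ E \ T := mem_sdiff.2 ⟨hgE, hgT⟩
        have h1 : (E \ insert g T).card = (E \ T).card - 1 := by
          rw [Finset.sdiff_insert, Finset.card_erase_of_mem hmem]
        have h2 := Finset.card_pos.2 ⟨g, hmem⟩
        omega
  -- initial edge out of i
  have hinit : ∃ g0, g0 ∈ Ostar i ∩ Bset i ∧ oOwn g0 ≠ i := by
    by_contra hng
    push_neg at hng
    have hsub : Ostar i ∩ Bset i ⊆ O i ∩ Bset i := by
      intro g hg
      obtain ⟨h1, h2⟩ := mem_inter.1 hg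
      have hgE : g ∈ E := hmemE.2 (by rw [hsEq h1]; exact h2)
      obtain ⟨h3, -⟩ := hEO hgE
      rw [hng g hg] at h3
      exact mem_inter.2 ⟨h3, h2⟩
    exact absurd (Finset.card_le_card hsub) (not_le.2 hns)
  obtain ⟨g0, hg0mem, hg0ne⟩ := hinit
  obtain ⟨hg0s, hg0b⟩ := mem_inter.1 hg0mem
  have hsg0 : sOwn g0 = i := hsEq hg0s
  have hg0E : g0 ∈ E := hmemE.2 (by rw [hsg0]; exact hg0b)
  -- run the extension process from the singleton {g0}
  obtain ⟨T, j, hTE, hflow, hnl, hj⟩ := ext (E \ {g0}).card {g0} (oOwn g0)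
    (singleton_subset_iff.2 hg0E)
    (by
      intro x
      rw [Finset.filter_singleton, Finset.filter_singleton]
      by_cases h1 : oOwn g0 = x
      · have hxi : x ≠ i := fun h => hg0ne (h1.trans h)
        rw [if_pos h1, if_neg (fun h : sOwn g0 = x => hxi (h.symm.trans hsg0)),
          if_neg hxi, if_pos h1.symm]
        simp
      · rw [if_neg h1, if_neg (fun h : x = oOwn g0 => h1 h.symm)]
        by_cases h2 : x = i
        · rw [if_pos h2, if_pos (hsg0.trans h2.symm)]
          simp
        · rw [if_neg h2, if_neg (fun h : sOwn g0 = x => h2 (h.symm.trans hsg0))])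
    ⟨g0, mem_singleton_self g0, by rw [hsg0]; exact hg0ne⟩
    le_rfl
  -- helper: sdiff as inter-compl
  have hsd : ∀ (s C : Finset G), s \ C = s ∩ Cᶜ := by
    intro s C; ext g; simp [mem_sdiff]
  -- the swapped allocation A
  set A : N → Finset G := mvA Ostar oOwn T with hAdef
  have hTsubU : T ⊆ univ.biUnion Ostar := by rw [hScov]; exact subset_univ T
  have hAalloc : IsAllocation A := by
    constructor
    · exact mvA_disjoint _ _ _ hSd
    · rw [hAdef, mvA_biUnion _ _ _ hTsubU, hScov]
  have hTE' : ∀ {g}, g ∈ T → g ∈ Bset (sOwn g) := fun hg => hmemE.1 (hTE hg)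
  have hTO : ∀ {g}, g ∈ T → g ∈ O (oOwn g) ∧ g ∈ Bset (oOwn g) := fun hg => hEO (hTE hg)
  have hOsT : ∀ x, Ostar x ∩ Bset x ∩ T = Ostar x ∩ T := by
    intro x
    ext g
    constructor
    · intro hg
      obtain ⟨h12, h3⟩ := mem_inter.1 hg
      exact mem_inter.2 ⟨(mem_inter.1 h12).1, h3⟩
    · intro hg
      obtain ⟨h1, h3⟩ := mem_inter.1 hg
      exact mem_inter.2 ⟨mem_inter.2 ⟨h1, by rw [← hsEq h1]; exact hTE' h3⟩, h3⟩
  have houtT : ∀ x, Ostar x ∩ T = T.filter (fun g => sOwn g = x) := by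
    intro x
    ext g
    simp only [mem_inter, mem_filter]
    constructor
    · rintro ⟨h1, h2⟩; exact ⟨h2, hsEq h1⟩
    · rintro ⟨h2, h1⟩; exact ⟨h1 ▸ hsOwn g, h2⟩
  have hinT : ∀ x, O x ∩ T = T.filter (fun g => oOwn g = x) := by
    intro x
    ext g
    simp only [mem_inter, mem_filter]
    constructor
    · rintro ⟨h1, h2⟩; exact ⟨h2, hoEq h1⟩
    · rintro ⟨h2, h1⟩; exact ⟨h1 ▸ (hTO h2).1, h2⟩
  have hfilB : ∀ x, (T.filter fun g => oOwn g = x) ∩ Bset x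
      = T.filter (fun g => oOwn g = x) := by
    intro x
    apply inter_eq_left.mpr
    intro g hg
    obtain ⟨h1, h2⟩ := mem_filter.1 hg
    exact h2 ▸ (hTO h1).2
  have hAbig : ∀ x, (A x ∩ Bset x).card + (T.filter (fun g => sOwn g = x)).card
      = (Ostar x ∩ Bset x).card + (T.filter (fun g => oOwn g = x)).card := by
    intro x
    have h := mvA_inter Ostar oOwn T x (Bset x)
    rw [← hAdef, hOsT x, houtT x, hfilB x] at h
    exact h
  have hAsmall : ∀ x, (A x \ Bset x).card = (Ostar x \ Bset x).card := by
    intro x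
    have h := mvA_inter Ostar oOwn T x (Bset x)ᶜ
    rw [← hAdef] at h
    have e1 : Ostar x ∩ (Bset x)ᶜ ∩ T = ∅ := by
      ext g
      simp only [mem_inter, Finset.mem_compl, Finset.notMem_empty, iff_false, not_and]
      rintro ⟨h1, h2⟩ h3
      exact h2 (by rw [← hsEq h1]; exact hTE' h3)
    have e2 : (T.filter fun g => oOwn g = x) ∩ (Bset x)ᶜ = ∅ := by
      ext g
      simp only [mem_inter, mem_filter, Finset.mem_compl, Finset.notMem_empty, iff_false,
        not_and]
      rintro ⟨h1, h2⟩ h3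
      exact h3 (h2 ▸ (hTO h1).2)
    rw [e1, e2] at h
    simp only [Finset.card_empty, add_zero] at h
    rw [hsd (A x) (Bset x), hsd (Ostar x) (Bset x)]
    exact h
  have hvalA : ∀ x, twoVal Bset v x (A x) + (if x = i then (1:ℚ) else 0)
      = twoVal Bset v x (Ostar x) + (if x = j then (1:ℚ) else 0) := by
    intro x
    have hb := hAbig x
    have hf := hflow x
    have hnat : (A x ∩ Bset x).card + (if x = i then 1 else 0)
        = (Ostar x ∩ Bset x).card + (if x = j then 1 else 0) := by
      generalize (if x = i then (1:ℕ) else 0) = a at hf ⊢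
      generalize (if x = j then (1:ℕ) else 0) = c at hf ⊢
      omega
    unfold twoVal
    rw [hAsmall x]
    have hc := congrArg (Nat.cast : ℕ → ℚ) hnat
    push_cast at hc
    by_cases hxi : x = i <;> by_cases hxj : x = j <;>
      simp only [if_pos, if_neg, hxi, hxj] at hc ⊢ <;> linarith
  have hoverA : (∑ x, (O x ∩ Ostar x).card) + 1 ≤ ∑ x, (O x ∩ A x).card := by
    have hper : ∀ x, (A x ∩ O x).card + (Ostar x ∩ O x ∩ T).card
        = (Ostar x ∩ O x).card + (T.filter fun g => oOwn g = x).card := by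
      intro x
      have h := mvA_inter Ostar oOwn T x (O x)
      rw [← hAdef] at h
      have e2 : (T.filter fun g => oOwn g = x) ∩ O x = T.filter fun g => oOwn g = x := by
        apply inter_eq_left.mpr
        intro g hg
        obtain ⟨h1, h2⟩ := mem_filter.1 hg
        exact h2 ▸ (hTO h1).1
      rw [e2] at h
      exact h
    have hloop : ∀ x, Ostar x ∩ O x ∩ T
        = (T.filter fun g => oOwn g = sOwn g).filter (fun g => oOwn g = x) := by
      intro x
      ext g
      constructor
      · intro hg
        obtain ⟨h12, h3⟩ := mem_inter.1 hg
        obtain ⟨h1, h2⟩ := mem_inter.1 h12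
        refine mem_filter.2 ⟨mem_filter.2 ⟨h3, ?_⟩, hoEq h2⟩
        rw [hoEq h2, hsEq h1]
      · intro hg
        obtain ⟨hg1, h5⟩ := mem_filter.1 hg
        obtain ⟨h3, h4⟩ := mem_filter.1 hg1
        have hsx : sOwn g = x := by rw [← h4, h5]
        refine mem_inter.2 ⟨mem_inter.2 ⟨?_, ?_⟩, h3⟩
        · rw [← hsx]; exact hsOwn g
        · rw [← h5]; exact (hTO h3).1
    have hsum1 : ∑ x, (T.filter fun g => oOwn g = x).card = T.card :=
      (Finset.card_eq_sum_card_fiberwise (fun g _ => mem_univ (oOwn g))).symm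
    have hsum2 : ∑ x, (Ostar x ∩ O x ∩ T).card
        = (T.filter fun g => oOwn g = sOwn g).card := by
      rw [Finset.card_eq_sum_card_fiberwise
        (fun g (_ : g ∈ T.filter fun g => oOwn g = sOwn g) => mem_univ (oOwn g))]
      exact Finset.sum_congr rfl (fun x _ => by rw [hloop x])
    have hLlt : (T.filter fun g => oOwn g = sOwn g).card + 1 ≤ T.card := by
      obtain ⟨gnl, hgnlT, hgnl⟩ := hnl
      have hsubL : (T.filter fun g => oOwn g = sOwn g) ⊆ T.erase gnl := by
        intro g hg
        obtain ⟨h1, h2⟩ := mem_filter.1 hg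
        refine mem_erase.2 ⟨?_, h1⟩
        rintro rfl; exact hgnl h2
      have hle := Finset.card_le_card hsubL
      rw [Finset.card_erase_of_mem hgnlT] at hle
      have hpos := Finset.card_pos.2 ⟨gnl, hgnlT⟩
      omega
    have hsums := Finset.sum_congr rfl (fun x (_ : x ∈ (univ : Finset N)) => hper x)
    rw [Finset.sum_add_distrib, Finset.sum_add_distrib, hsum1, hsum2] at hsums
    have hc1 : ∑ x, (O x ∩ A x).card = ∑ x, (A x ∩ O x).card :=
      Finset.sum_congr rfl (fun x _ => by rw [inter_comm])
    have hc2 : ∑ x, (O x ∩ Ostar x).card = ∑ x, (Ostar x ∩ O x).card :=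
      Finset.sum_congr rfl (fun x _ => by rw [inter_comm])
    omega
  -- contradiction tool from sum-closestness
  have hCONTRA : ∀ A' : N → Finset G, IsAllocation A' →
      nashProd Bset v A' = nashProd Bset v Ostar →
      ((∑ x, (O x ∩ Ostar x).card) + 1 ≤ ∑ x, (O x ∩ A' x).card) → False := by
    intro A' h1 h2 h3
    have := hClose A' h1 h2
    omega
  -- all values are positive
  have hnn : ∀ (y : N) (s : Finset G), 0 ≤ twoVal Bset v y s := by
    intro y s
    unfold twoVal
    positivity
  have hpos : ∀ x, 0 < twoVal Bset v x (Ostar x) := by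
    by_contra hng
    push_neg at hng
    obtain ⟨x, hx⟩ := hng
    have hx0 : twoVal Bset v x (Ostar x) = 0 := le_antisymm hx (hnn x _)
    have hP0 : nashProd Bset v Ostar = 0 :=
      Finset.prod_eq_zero (mem_univ x) hx0
    have hPA : nashProd Bset v A = 0 := by
      have h1 := hMax A hAalloc
      rw [hP0] at h1
      have h2 : 0 ≤ nashProd Bset v A := Finset.prod_nonneg (fun y _ => hnn y _)
      linarith
    exact hCONTRA A hAalloc (hPA.trans hP0.symm) hoverA
  -- dispatch the closed-circulation case j = i
  have hji : j ≠ i := by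
    rintro rfl
    have heq : nashProd Bset v A = nashProd Bset v Ostar := by
      unfold nashProd
      refine Finset.prod_congr rfl (fun x _ => ?_)
      have := hvalA x
      linarith
    exact hCONTRA A hAalloc heq hoverA
  have hjlt : (Ostar j ∩ Bset j).card < (O j ∩ Bset j).card := by
    rcases hj with h | h
    · exact absurd h hji
    · exact h
  -- the rebalanced dichotomous allocation O'
  set O' : N → Finset G := mvA O sOwn T with hO'def
  have hTsubO : T ⊆ univ.biUnion O := by
    rw [hOcov]
    intro g hg
    exact mem_biUnion.2 ⟨sOwn g, mem_univ _, hTE' hg⟩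
  have hO'nw : IsNonWasteful Bset O' := by
    refine ⟨mvA_disjoint _ _ _ hOd, ?_, ?_⟩
    · intro x g hg
      rw [hO'def] at hg
      simp only [mvA, mem_union, mem_sdiff, mem_filter] at hg
      rcases hg with ⟨h1, -⟩ | ⟨h1, h2⟩
      · exact hOsub x h1
      · exact h2 ▸ hTE' h1
    · rw [hO'def, mvA_biUnion _ _ _ hTsubO, hOcov]
  have hO'card : ∀ x, (O' x).card + (if x = j then 1 else 0)
      = (O x).card + (if x = i then 1 else 0) := by
    intro x
    have h := mvA_inter O sOwn T x univ
    rw [← hO'def] at h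
    simp only [Finset.inter_univ] at h
    rw [hinT x] at h
    have hf := hflow x
    generalize (if x = i then (1:ℕ) else 0) = a at hf ⊢
    generalize (if x = j then (1:ℕ) else 0) = c at hf ⊢
    omega
  have hij : i ≠ j := fun h => hji h.symm
  have hci : (O' i).card = (O i).card + 1 := by
    have := hO'card i
    rw [if_neg hij, if_pos rfl] at this
    omega
  have hcj : (O' j).card + 1 = (O j).card := by
    have := hO'card j
    rw [if_pos rfl, if_neg hji] at this
    omega
  have hcx : ∀ x, x ≠ i → x ≠ j → (O' x).card = (O x).card := by
    intro x h1 h2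
    have := hO'card x
    rw [if_neg h2, if_neg h1] at this
    omega
  have hne0 : ∀ (s : Finset G), s ≠ ∅ ↔ 0 < s.card := by
    intro s
    rw [Finset.card_pos, Finset.nonempty_iff_ne_empty]
  -- key bound from dichotomous optimality
  have hbj : (O j).card ≤ (O i).card + 1 := by
    by_contra hb2
    push_neg at hb2
    obtain ⟨hcount, hprod⟩ := hOopt O' hO'nw
    have hFsub : (univ.filter fun x => O x ≠ ∅) ⊆ (univ.filter fun x => O' x ≠ ∅) := by
      intro x hx
      obtain ⟨-, hx2⟩ := mem_filter.1 hx
      rw [hne0] at hx2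
      refine mem_filter.2 ⟨mem_univ x, ?_⟩
      rw [hne0]
      by_cases h1 : x = i
      · subst h1; omega
      by_cases h2 : x = j
      · subst h2; omega
      · rw [hcx x h1 h2]; omega
    by_cases hbi0 : (O i).card = 0
    · -- the shift strictly increases the number of nonempty bundles
      have hiF' : i ∈ (univ.filter fun x => O' x ≠ ∅) := by
        refine mem_filter.2 ⟨mem_univ i, ?_⟩
        rw [hne0]; omega
      have hiF : i ∉ (univ.filter fun x => O x ≠ ∅) := by
        intro h
        obtain ⟨-, h2⟩ := mem_filter.1 h
        rw [hne0] at h2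
        omega
      have hsub2 : (univ.filter fun x => O x ≠ ∅)
          ⊆ (univ.filter fun x => O' x ≠ ∅).erase i := by
        intro x hx
        exact mem_erase.2 ⟨fun h => hiF (h ▸ hx), hFsub hx⟩
      have h1 := Finset.card_le_card hsub2
      rw [Finset.card_erase_of_mem hiF'] at h1
      have h2 := Finset.card_pos.2 ⟨i, hiF'⟩
      omega
    · -- equal count, strictly larger size product
      have hbi : 1 ≤ (O i).card := by omega
      have hFsub2 : (univ.filter fun x => O' x ≠ ∅) ⊆ (univ.filter fun x => O x ≠ ∅) := by
        intro x hx
        obtain ⟨-, hx2⟩ := mem_filter.1 hx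
        rw [hne0] at hx2
        refine mem_filter.2 ⟨mem_univ x, ?_⟩
        rw [hne0]
        by_cases h1 : x = i
        · subst h1; omega
        by_cases h2 : x = j
        · subst h2; omega
        · rw [← hcx x h1 h2]; omega
      have hFeq : (univ.filter fun x => O' x ≠ ∅) = (univ.filter fun x => O x ≠ ∅) :=
        Finset.Subset.antisymm hFsub2 hFsub
      have hprodineq := hprod (by rw [hFeq])
      rw [hFeq] at hprodineq
      have hiF : i ∈ (univ.filter fun x => O x ≠ ∅) := by
        refine mem_filter.2 ⟨mem_univ i, ?_⟩
        rw [hne0]; omega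
      have hjF : j ∈ ((univ.filter fun x => O x ≠ ∅).erase i) := by
        refine mem_erase.2 ⟨hji, mem_filter.2 ⟨mem_univ j, ?_⟩⟩
        rw [hne0]; omega
      rw [← Finset.mul_prod_erase _ (fun x => (O' x).card) hiF,
        ← Finset.mul_prod_erase _ (fun x => (O' x).card) hjF,
        ← Finset.mul_prod_erase _ (fun x => (O x).card) hiF,
        ← Finset.mul_prod_erase _ (fun x => (O x).card) hjF] at hprodineq
      have hRst : ∏ x ∈ (((univ.filter fun x => O x ≠ ∅).erase i).erase j),
          (O' x).card = ∏ x ∈ (((univ.filter fun x => O x ≠ ∅).erase i).erase j),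
          (O x).card := by
        refine Finset.prod_congr rfl (fun x hx => ?_)
        obtain ⟨hx1, hx2⟩ := mem_erase.1 hx
        obtain ⟨hx3, -⟩ := mem_erase.1 hx2
        exact hcx x hx3 hx1
      rw [hRst] at hprodineq
      have hRpos : 0 < ∏ x ∈ (((univ.filter fun x => O x ≠ ∅).erase i).erase j),
          (O x).card := by
        refine Finset.prod_pos (fun x hx => ?_)
        obtain ⟨-, hx2⟩ := mem_erase.1 hx
        obtain ⟨-, hx3⟩ := mem_erase.1 hx2
        obtain ⟨-, hx4⟩ := mem_filter.1 hx3
        rw [hne0] at hx4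
        exact hx4
      set R := ∏ x ∈ (((univ.filter fun x => O x ≠ ∅).erase i).erase j), (O x).card
        with hRdef
      set m := (O i).card with hmdef
      set k := (O' j).card with hkdef
      rw [← hcj] at hprodineq
      rw [hci] at hprodineq
      have e1 : (m + 1) * (k * R) = m * (k * R) + k * R := by ring
      have e2 : m * ((k + 1) * R) = m * (k * R) + m * R := by ring
      rw [e1, e2] at hprodineq
      have h3 : k * R ≤ m * R := le_of_add_le_add_left hprodineq
      have h4 : k ≤ m := Nat.le_of_mul_le_mul_right h3 hRpos
      omega
  -- T contains no small-for-j goods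
  have hTnoSmall : ∀ {g}, g ∈ Ostar j \ Bset j → g ∉ T := by
    intro g hg hgT
    obtain ⟨h1, h2⟩ := mem_sdiff.1 hg
    exact h2 (by rw [← hsEq h1]; exact hTE' hgT)
  have hSrAj : ∀ {g}, g ∈ Ostar j \ Bset j → g ∈ A j := by
    intro g hg
    rw [hAdef]
    simp only [mvA, mem_union, mem_sdiff]
    exact Or.inl ⟨(mem_sdiff.1 hg).1, hTnoSmall hg⟩
  have hAsub : ∀ x g, g ∈ A x → g ∈ Ostar x ∨ g ∈ T := by
    intro x g hg
    rw [hAdef] at hg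
    simp only [mvA, mem_union, mem_sdiff, mem_filter] at hg
    tauto
  -- generic analysis of moving a set Sr of j's small goods to i, after the swap A
  have hsecond : ∀ Sr : Finset G, Sr ⊆ Ostar j \ Bset j →
      IsAllocation (mvA A (fun _ => i) Sr) ∧
      twoVal Bset v i (mvA A (fun _ => i) Sr i)
        = twoVal Bset v i (Ostar i) - 1 + ((Sr ∩ Bset i).card : ℚ)
          + v * ((Sr \ Bset i).card : ℚ) ∧
      twoVal Bset v j (mvA A (fun _ => i) Sr j)
        = twoVal Bset v j (Ostar j) + 1 - v * (Sr.card : ℚ) ∧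
      (∀ x, x ≠ i → x ≠ j → twoVal Bset v x (mvA A (fun _ => i) Sr x)
        = twoVal Bset v x (Ostar x)) ∧
      ((∑ x, (O x ∩ Ostar x).card) + 1 ≤ ∑ x, (O x ∩ mvA A (fun _ => i) Sr x).card) := by
    intro Sr hSr
    have hSrT : ∀ {g}, g ∈ Sr → g ∉ T := fun hg => hTnoSmall (hSr hg)
    have hSrAx : ∀ x, x ≠ j → A x ∩ Sr = ∅ := by
      intro x hx
      ext g
      simp only [mem_inter, Finset.notMem_empty, iff_false, not_and]
      intro hgA hgS
      rcases hAsub x g hgA with h | h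
      · have h1 := (mem_sdiff.1 (hSr hgS)).1
        exact hx ((hsEq h).symm.trans (hsEq h1))
      · exact hSrT hgS h
    have hACSr : ∀ x (C : Finset G), x ≠ j → A x ∩ C ∩ Sr = ∅ := by
      intro x C hx
      ext g
      simp only [mem_inter, Finset.notMem_empty, iff_false, not_and]
      rintro ⟨h1, -⟩ h3
      have := hSrAx x hx
      rw [Finset.eq_empty_iff_forall_notMem] at this
      exact this g (mem_inter.2 ⟨h1, h3⟩)
    have hfc : ∀ x : N, (Sr.filter fun g => (fun _ : G => i) g = x)
        = if i = x then Sr else ∅ := by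
      intro x
      split_ifs with h
      · exact Finset.filter_true_of_mem (fun g _ => h)
      · exact Finset.filter_false_of_mem (fun g _ => h)
    have halloc : IsAllocation (mvA A (fun _ => i) Sr) := by
      constructor
      · exact mvA_disjoint _ _ _ hAalloc.1
      · rw [mvA_biUnion _ _ _ (by rw [hAalloc.2]; exact subset_univ Sr), hAalloc.2]
    refine ⟨halloc, ?_, ?_, ?_, ?_⟩
    · -- value at i
      have hbig := mvA_inter A (fun _ => i) Sr i (Bset i)
      have hsmall := mvA_inter A (fun _ => i) Sr i (Bset i)ᶜ
      rw [hfc, if_pos rfl, hACSr i (Bset i) hij] at hbig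
      rw [hfc, if_pos rfl, hACSr i (Bset i)ᶜ hij] at hsmall
      simp only [Finset.card_empty, add_zero] at hbig hsmall
      have hvi := hvalA i
      rw [if_pos rfl, if_neg hij] at hvi
      have hbigQ : ((mvA A (fun _ => i) Sr i ∩ Bset i).card : ℚ)
          = ((A i ∩ Bset i).card : ℚ) + ((Sr ∩ Bset i).card : ℚ) := by exact_mod_cast hbig
      have hsmallQ : ((mvA A (fun _ => i) Sr i ∩ (Bset i)ᶜ).card : ℚ)
          = ((A i ∩ (Bset i)ᶜ).card : ℚ) + ((Sr ∩ (Bset i)ᶜ).card : ℚ) := by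
        exact_mod_cast hsmall
      have hsmallQ' : v * ((mvA A (fun _ => i) Sr i ∩ (Bset i)ᶜ).card : ℚ)
          = v * ((A i ∩ (Bset i)ᶜ).card : ℚ) + v * ((Sr ∩ (Bset i)ᶜ).card : ℚ) := by
        rw [hsmallQ, mul_add]
      unfold twoVal at hvi ⊢
      rw [hsd (mvA A (fun _ => i) Sr i) (Bset i), hsd Sr (Bset i)]
      rw [hsd (A i) (Bset i)] at hvi
      linarith [hbigQ, hsmallQ', hvi]
    · -- value at j
      have hbig := mvA_inter A (fun _ => i) Sr j (Bset j)
      have hsmall := mvA_inter A (fun _ => i) Sr j (Bset j)ᶜ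
      rw [hfc, if_neg hij] at hbig
      rw [hfc, if_neg hij] at hsmall
      have e1 : A j ∩ Bset j ∩ Sr = ∅ := by
        ext g
        simp only [mem_inter, Finset.notMem_empty, iff_false, not_and]
        rintro ⟨-, h2⟩ h3
        exact (mem_sdiff.1 (hSr h3)).2 h2
      have e2 : A j ∩ (Bset j)ᶜ ∩ Sr = Sr := by
        ext g
        simp only [mem_inter, Finset.mem_compl]
        constructor
        · rintro ⟨-, h3⟩; exact h3
        · intro h3
          exact ⟨⟨hSrAj (hSr h3), (mem_sdiff.1 (hSr h3)).2⟩, h3⟩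
      rw [e1] at hbig
      rw [e2] at hsmall
      simp only [Finset.card_empty, add_zero, Finset.empty_inter] at hbig hsmall
      have hvj := hvalA j
      rw [if_neg hji, if_pos rfl] at hvj
      have hbigQ : ((mvA A (fun _ => i) Sr j ∩ Bset j).card : ℚ)
          = ((A j ∩ Bset j).card : ℚ) := by exact_mod_cast hbig
      have hsmallQ : ((mvA A (fun _ => i) Sr j ∩ (Bset j)ᶜ).card : ℚ) + (Sr.card : ℚ)
          = ((A j ∩ (Bset j)ᶜ).card : ℚ) := by exact_mod_cast hsmall
      have hsmallQ' : v * ((mvA A (fun _ => i) Sr j ∩ (Bset j)ᶜ).card : ℚ)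
          + v * (Sr.card : ℚ) = v * ((A j ∩ (Bset j)ᶜ).card : ℚ) := by
        rw [← hsmallQ, mul_add]
      unfold twoVal at hvj ⊢
      rw [hsd (mvA A (fun _ => i) Sr j) (Bset j)]
      rw [hsd (A j) (Bset j)] at hvj
      linarith [hbigQ, hsmallQ', hvj]
    · -- value elsewhere
      intro x hxi hxj
      have hbig := mvA_inter A (fun _ => i) Sr x (Bset x)
      have hsmall := mvA_inter A (fun _ => i) Sr x (Bset x)ᶜ
      rw [hfc, if_neg (fun h => hxi h.symm), hACSr x (Bset x) hxj] at hbig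
      rw [hfc, if_neg (fun h => hxi h.symm), hACSr x (Bset x)ᶜ hxj] at hsmall
      simp only [Finset.card_empty, add_zero, Finset.empty_inter] at hbig hsmall
      have hvx := hvalA x
      rw [if_neg hxi, if_neg hxj] at hvx
      have hbigQ : ((mvA A (fun _ => i) Sr x ∩ Bset x).card : ℚ)
          = ((A x ∩ Bset x).card : ℚ) := by exact_mod_cast hbig
      have hsmallQ : ((mvA A (fun _ => i) Sr x ∩ (Bset x)ᶜ).card : ℚ)
          = ((A x ∩ (Bset x)ᶜ).card : ℚ) := by exact_mod_cast hsmall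
      have hsmallQ' : v * ((mvA A (fun _ => i) Sr x ∩ (Bset x)ᶜ).card : ℚ)
          = v * ((A x ∩ (Bset x)ᶜ).card : ℚ) := by rw [hsmallQ]
      unfold twoVal at hvx ⊢
      rw [hsd (mvA A (fun _ => i) Sr x) (Bset x)]
      rw [hsd (A x) (Bset x)] at hvx
      linarith [hbigQ, hsmallQ', hvx]
    · -- overlap only grows
      have hper : ∀ x, (O x ∩ A x).card ≤ (O x ∩ mvA A (fun _ => i) Sr x).card := by
        intro x
        have h := mvA_inter A (fun _ => i) Sr x (O x)
        have e1 : A x ∩ O x ∩ Sr = ∅ := by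
          by_cases hxj : x = j
          · subst hxj
            ext g
            simp only [mem_inter, Finset.notMem_empty, iff_false, not_and]
            rintro ⟨-, h2⟩ h3
            exact (mem_sdiff.1 (hSr h3)).2 (hOsub _ h2)
          · exact hACSr x (O x) hxj
        rw [e1] at h
        simp only [Finset.card_empty, add_zero] at h
        rw [inter_comm (O x) (A x), inter_comm (O x) (mvA A (fun _ => i) Sr x)]
        omega
      calc (∑ x, (O x ∩ Ostar x).card) + 1 ≤ ∑ x, (O x ∩ A x).card := hoverA
        _ ≤ ∑ x, (O x ∩ mvA A (fun _ => i) Sr x).card :=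
            Finset.sum_le_sum (fun x _ => hper x)
  -- product-splitting tools
  have hQpos : 0 < ∏ x ∈ (univ.erase i).erase j, twoVal Bset v x (Ostar x) :=
    Finset.prod_pos (fun x _ => hpos x)
  have hsplitP : ∀ (W : N → Finset G), nashProd Bset v W
      = twoVal Bset v i (W i) * (twoVal Bset v j (W j)
        * ∏ x ∈ (univ.erase i).erase j, twoVal Bset v x (W x)) := by
    intro W
    unfold nashProd
    rw [← Finset.mul_prod_erase univ _ (mem_univ i),
      ← Finset.mul_prod_erase (univ.erase i) _ (mem_erase.2 ⟨hji, mem_univ j⟩)]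
  have hrestQ : ∀ (W : N → Finset G),
      (∀ x, x ≠ i → x ≠ j → twoVal Bset v x (W x) = twoVal Bset v x (Ostar x)) →
      ∏ x ∈ (univ.erase i).erase j, twoVal Bset v x (W x)
        = ∏ x ∈ (univ.erase i).erase j, twoVal Bset v x (Ostar x) := by
    intro W hW
    refine Finset.prod_congr rfl (fun x hx => ?_)
    obtain ⟨hxj, hx2⟩ := mem_erase.1 hx
    obtain ⟨hxi, -⟩ := mem_erase.1 hx2
    exact hW x hxi hxj
  -- no small-for-j good is big for i
  have hsmallB : ∀ g ∈ Ostar j \ Bset j, g ∉ Bset i := by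
    intro g hg hgBi
    obtain ⟨halloc, hvi, hvj, hvx, hover⟩ := hsecond {g} (singleton_subset_iff.2 hg)
    have e1 : ({g} : Finset G) ∩ Bset i = {g} :=
      inter_eq_left.mpr (singleton_subset_iff.2 hgBi)
    have e2 : ({g} : Finset G) \ Bset i = ∅ := by
      rw [Finset.sdiff_eq_empty_iff_subset]
      exact singleton_subset_iff.2 hgBi
    rw [e1, e2] at hvi
    simp only [Finset.card_singleton, Finset.card_empty, Nat.cast_one, Nat.cast_zero,
      mul_zero, add_zero] at hvi
    have hviQ : twoVal Bset v i (mvA A (fun _ => i) {g} i) = twoVal Bset v i (Ostar i) := by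
      rw [hvi]; ring
    have hvjQ : twoVal Bset v j (mvA A (fun _ => i) {g} j)
        = twoVal Bset v j (Ostar j) + 1 - v := by
      rw [hvj]; simp
    have hle := hMax _ halloc
    rw [hsplitP (mvA A (fun _ => i) {g}), hsplitP Ostar, hrestQ _ hvx, hviQ, hvjQ] at hle
    have hring : twoVal Bset v i (Ostar i) * ((twoVal Bset v j (Ostar j) + 1 - v)
          * ∏ x ∈ (univ.erase i).erase j, twoVal Bset v x (Ostar x))
        = twoVal Bset v i (Ostar i) * (twoVal Bset v j (Ostar j)
          * ∏ x ∈ (univ.erase i).erase j, twoVal Bset v x (Ostar x))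
        + (twoVal Bset v i (Ostar i)
          * ∏ x ∈ (univ.erase i).erase j, twoVal Bset v x (Ostar x)) * (1 - v) := by
      ring
    have hp2 : 0 < (twoVal Bset v i (Ostar i)
        * ∏ x ∈ (univ.erase i).erase j, twoVal Bset v x (Ostar x)) * (1 - v) :=
      mul_pos (mul_pos (hpos i) hQpos) (by linarith)
    linarith [hle, hring, hp2]
  -- the main inequality for moving r small goods of j to i
  have hineq : ∀ r : ℕ, r ≤ (Ostar j \ Bset j).card →
      ((twoVal Bset v i (Ostar i) - 1 + v * r)
          * (twoVal Bset v j (Ostar j) + 1 - v * r)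
        ≤ twoVal Bset v i (Ostar i) * twoVal Bset v j (Ostar j)) ∧
      ((twoVal Bset v i (Ostar i) - 1 + v * r)
          * (twoVal Bset v j (Ostar j) + 1 - v * r)
        = twoVal Bset v i (Ostar i) * twoVal Bset v j (Ostar j) → False) := by
    intro r hr
    obtain ⟨Sr, hSrsub, hSrcard⟩ := Finset.exists_subset_card_eq hr
    obtain ⟨halloc, hvi, hvj, hvx, hover⟩ := hsecond Sr hSrsub
    have e1 : Sr ∩ Bset i = ∅ := by
      ext g
      simp only [mem_inter, Finset.notMem_empty, iff_false, not_and]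
      intro hgS
      exact hsmallB g (hSrsub hgS)
    have e2 : Sr \ Bset i = Sr := by
      ext g
      simp only [mem_sdiff, and_iff_left_iff_imp]
      intro hgS
      exact hsmallB g (hSrsub hgS)
    rw [e1, e2, hSrcard] at hvi
    rw [hSrcard] at hvj
    simp only [Finset.card_empty, Nat.cast_zero, add_zero] at hvi
    have hPA2 : nashProd Bset v (mvA A (fun _ => i) Sr)
        = ((twoVal Bset v i (Ostar i) - 1 + v * r)
            * (twoVal Bset v j (Ostar j) + 1 - v * r))
          * ∏ x ∈ (univ.erase i).erase j, twoVal Bset v x (Ostar x) := by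
      rw [hsplitP (mvA A (fun _ => i) Sr), hrestQ _ hvx, hvi, hvj]
      ring
    have hPO : nashProd Bset v Ostar
        = (twoVal Bset v i (Ostar i) * twoVal Bset v j (Ostar j))
          * ∏ x ∈ (univ.erase i).erase j, twoVal Bset v x (Ostar x) := by
      rw [hsplitP Ostar]
      ring
    constructor
    · have hle := hMax _ halloc
      rw [hPA2, hPO] at hle
      exact le_of_mul_le_mul_right hle hQpos
    · intro heq
      refine hCONTRA _ halloc ?_ hover
      rw [hPA2, hPO, heq]
  -- numeric chain facts
  have hbsiQ : ((O i ∩ Bset i).card : ℚ) + 1 ≤ ((Ostar i ∩ Bset i).card : ℚ) := by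
    exact_mod_cast hns
  have hage : ((Ostar i ∩ Bset i).card : ℚ) ≤ twoVal Bset v i (Ostar i) := by
    unfold twoVal
    have : (0:ℚ) ≤ v * ((Ostar i \ Bset i).card : ℚ) :=
      mul_nonneg hv0.le (Nat.cast_nonneg _)
    linarith
  have hjltQ : ((Ostar j ∩ Bset j).card : ℚ) + 1 ≤ ((O j ∩ Bset j).card : ℚ) := by
    exact_mod_cast hjlt
  have hbj' : (O j ∩ Bset j).card ≤ (O i ∩ Bset i).card + 1 := by
    rw [hObig i, hObig j]; exact hbj
  have hbjQ : ((O j ∩ Bset j).card : ℚ) ≤ ((O i ∩ Bset i).card : ℚ) + 1 := by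
    exact_mod_cast hbj'
  have hcform : twoVal Bset v j (Ostar j) = ((Ostar j ∩ Bset j).card : ℚ)
      + v * ((Ostar j \ Bset j).card : ℚ) := rfl
  have hssj : ∀ r : ℕ, v * (r:ℚ) + ((Ostar j ∩ Bset j).card : ℚ)
      ≤ twoVal Bset v j (Ostar j) → r ≤ (Ostar j \ Bset j).card := by
    intro r h
    rw [hcform] at h
    have h2 : v * (r:ℚ) ≤ v * ((Ostar j \ Bset j).card : ℚ) := by linarith
    have h3 : (r:ℚ) ≤ ((Ostar j \ Bset j).card : ℚ) := (mul_le_mul_iff_right₀ hv0).mp h2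
    exact_mod_cast h3
  -- integrality of values
  have hvalmul : ∀ x, ∃ n : ℕ, twoVal Bset v x (Ostar x) = v * n := by
    intro x
    refine ⟨t * (Ostar x ∩ Bset x).card + (Ostar x \ Bset x).card, ?_⟩
    unfold twoVal
    push_cast
    rw [mul_add, ← mul_assoc, mul_comm v (t:ℚ), mul_comm (t:ℚ) v, hvt, one_mul]
  -- key induction
  have key : ∀ r : ℕ, r ≤ t →
      twoVal Bset v i (Ostar i) ≤ twoVal Bset v j (Ostar j) + 1 - v * r := by
    intro r
    induction r with
    | zero =>
      intro _
      have h := (hineq 0 (Nat.zero_le _)).1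
      push_cast at h ⊢
      generalize twoVal Bset v i (Ostar i) = a at h ⊢
      generalize twoVal Bset v j (Ostar j) = c at h ⊢
      nlinarith [h]
    | succ r ih =>
      intro hrt
      have hr : r ≤ t := Nat.le_of_succ_le hrt
      have ihh := ih hr
      have hssr : r ≤ (Ostar j \ Bset j).card := by
        apply hssj
        linarith [ihh, hbsiQ, hage, hjltQ, hbjQ]
      obtain ⟨hle, hne⟩ := hineq r hssr
      have hlt2 : (twoVal Bset v i (Ostar i) - 1 + v * r)
          * (twoVal Bset v j (Ostar j) + 1 - v * r)
          < twoVal Bset v i (Ostar i) * twoVal Bset v j (Ostar j) :=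
        lt_of_le_of_ne hle hne
      have hrtQ : (r:ℚ) < t := by exact_mod_cast hrt
      have hd : 0 < 1 - v * r := by
        have h5 : v * (r:ℚ) < v * t := mul_lt_mul_of_pos_left hrtQ hv0
        linarith [hvt]
      have hstrict : twoVal Bset v i (Ostar i)
          < twoVal Bset v j (Ostar j) + (1 - v * r) := by
        by_contra hcon
        push_neg at hcon
        have h5 : 0 ≤ (1 - v * r) * (twoVal Bset v i (Ostar i)
            - twoVal Bset v j (Ostar j) - (1 - v * r)) :=
          mul_nonneg hd.le (by linarith)
        have hring : (twoVal Bset v i (Ostar i) - 1 + v * r)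
            * (twoVal Bset v j (Ostar j) + 1 - v * r)
            = twoVal Bset v i (Ostar i) * twoVal Bset v j (Ostar j)
            + (1 - v * r) * (twoVal Bset v i (Ostar i)
              - twoVal Bset v j (Ostar j) - (1 - v * r)) := by ring
        linarith [hlt2, hring, h5]
      obtain ⟨na, hna⟩ := hvalmul i
      obtain ⟨nc, hnc⟩ := hvalmul j
      have h1m : (1:ℚ) - v * r = v * ((t - r : ℕ) : ℚ) := by
        rw [Nat.cast_sub hr, mul_sub, hvt]
      rw [hna, hnc, h1m] at hstrict
      have hna_lt : (na:ℚ) < (nc:ℚ) + ((t - r : ℕ) : ℚ) := by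
        have h4 : v * (na:ℚ) < v * ((nc:ℚ) + ((t - r:ℕ):ℚ)) := by
          rw [mul_add]; linarith [hstrict]
        exact (mul_lt_mul_iff_right₀ hv0).mp h4
      have hnat : na < nc + (t - r) := by exact_mod_cast hna_lt
      have hnat1 : na + 1 ≤ nc + (t - r) := hnat
      have hQ1 : (na:ℚ) + 1 ≤ (nc:ℚ) + ((t - r:ℕ):ℚ) := by exact_mod_cast hnat1
      have hgoal : v * (na:ℚ) + v ≤ v * (nc:ℚ) + v * ((t - r:ℕ):ℚ) := by
        have h6 := mul_le_mul_of_nonneg_left hQ1 hv0.le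
        rw [mul_add, mul_add, mul_one] at h6
        exact h6
      rw [hna, hnc]
      push_cast
      rw [Nat.cast_sub hr] at h1m hgoal
      push_cast at h1m hgoal
      linarith [hgoal, h1m]
  -- conclusion
  have hkeyt := key t le_rfl
  have hat : twoVal Bset v i (Ostar i) ≤ twoVal Bset v j (Ostar j) := by
    linarith [hkeyt, hvt]
  have hsst : t ≤ (Ostar j \ Bset j).card := by
    apply hssj
    linarith [hat, hbsiQ, hage, hjltQ, hbjQ, hvt]
  obtain ⟨-, hne⟩ := hineq t hsst
  apply hne
  rw [hvt]
  ring
end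

section
/- Let n ≥ 1, let x > 0 and w > 0 be reals, and let u_1, …, u_n be reals with x ≤ u_i ≤ x + w for all i. Let u = (u_1 + … + u_n)/n and a = (u − x)/w. Then ∏_{i=1}^n u_i ≥ (x + w)^{n·a} · x^{n·(1−a)}, where the exponents are real powers. Equivalently, the geometric mean of the u_i is at least (x+w)^a · x^{1−a}. -/
/-- AM-GM-type bound: if all `u i` lie in `[x, x + w]` with mean `u`, and
`a = (u - x)/w`, then the product of the `u i` is at least
`(x + w) ^ (n * a) * x ^ (n * (1 - a))` (real powers). -/
theorem stmt7 (n : ℕ) (hn : 1 ≤ n) (x w : ℝ) (hx : 0 < x) (hw : 0 < w)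
    (u : Fin n → ℝ) (hu : ∀ i, x ≤ u i ∧ u i ≤ x + w) :
    (x + w) ^ ((n : ℝ) * (((∑ i, u i) / n - x) / w)) *
      x ^ ((n : ℝ) * (1 - ((∑ i, u i) / n - x) / w)) ≤ ∏ i, u i := by
  have hn0 : (0:ℝ) < n := by exact_mod_cast Nat.lt_of_lt_of_le Nat.zero_lt_one hn
  set a : Fin n → ℝ := fun i => (u i - x) / w with ha
  have ha0 : ∀ i, 0 ≤ a i := fun i => div_nonneg (by linarith [(hu i).1]) hw.le
  have ha1 : ∀ i, a i ≤ 1 := fun i => by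
    rw [div_le_one hw]; linarith [(hu i).2]
  have key : ∀ i, (x + w) ^ (a i) * x ^ (1 - a i) ≤ u i := by
    intro i
    have := Real.geom_mean_le_arith_mean2_weighted (w₁ := a i) (w₂ := 1 - a i)
      (p₁ := x + w) (p₂ := x) (ha0 i) (by linarith [ha1 i])
      (by linarith : (0:ℝ) ≤ x + w) hx.le (by ring)
    calc (x + w) ^ (a i) * x ^ (1 - a i) ≤ a i * (x + w) + (1 - a i) * x := this
      _ = u i := by rw [ha]; field_simp; ring
  have hs : ∑ i, a i = ((∑ i, u i) - n * x) / w := by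
    rw [ha, ← Finset.sum_div, Finset.sum_sub_distrib, Finset.sum_const]
    simp [mul_comm]
  have e1 : (n : ℝ) * (((∑ i, u i) / n - x) / w) = ∑ i, a i := by
    rw [hs]; field_simp
  have e2 : (n : ℝ) * (1 - ((∑ i, u i) / n - x) / w) = ∑ i, (1 - a i) := by
    rw [Finset.sum_sub_distrib, Finset.sum_const, ← e1]
    simp; ring
  rw [e1, e2, Real.rpow_sum_of_nonneg (by linarith : (0:ℝ) ≤ x + w) (fun i _ => ha0 i),
    Real.rpow_sum_of_nonneg hx.le (fun i _ => by linarith [ha1 i]),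
    ← Finset.prod_mul_distrib]
  exact Finset.prod_le_prod (fun i _ => by positivity) (fun i _ => key i)
end

section
/- For every real d with 0 < d < 1, the function a ↦ f(d, a) = a·log(1 + d − a·d) + (1 − a)·log(1 − a·d) is convex on the open interval (0, 1). -/
open Real

/-- For each `d ∈ (0,1)`, the function
`a ↦ a·log(1 + d − a·d) + (1 − a)·log(1 − a·d)` is convex on `(0,1)`. -/
theorem stmt8 (d : ℝ) (hd0 : 0 < d) (hd1 : d < 1) :
    ConvexOn ℝ (Set.Ioo (0 : ℝ) 1)
      (fun a : ℝ => a * Real.log (1 + d - a * d) + (1 - a) * Real.log (1 - a * d)) := by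
  set f : ℝ → ℝ := fun a => a * Real.log (1 + d - a * d) + (1 - a) * Real.log (1 - a * d) with hf
  set f' : ℝ → ℝ := fun a => Real.log (1 + d - a * d) - a * d / (1 + d - a * d)
      - Real.log (1 - a * d) - (1 - a) * d / (1 - a * d) with hf'
  have hpos : ∀ a ∈ Set.Ioo (0:ℝ) 1, 0 < 1 + d - a * d ∧ 0 < 1 - a * d := by
    intro a ha
    obtain ⟨ha0, ha1⟩ := ha
    constructor <;> nlinarith
  have key : ∀ a ∈ Set.Ioo (0:ℝ) 1, HasDerivAt f (f' a) a := by
    intro a ha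
    obtain ⟨hu, hv⟩ := hpos a ha
    have h1 : HasDerivAt (fun a : ℝ => 1 + d - a * d) (-d) a := by
      simpa using ((hasDerivAt_id a).mul_const d).const_sub (1 + d)
    have h2 : HasDerivAt (fun a : ℝ => 1 - a * d) (-d) a := by
      simpa using ((hasDerivAt_id a).mul_const d).const_sub 1
    have hlu : HasDerivAt (fun a : ℝ => Real.log (1 + d - a * d))
        ((1 + d - a * d)⁻¹ * (-d)) a := HasDerivAt.comp a (Real.hasDerivAt_log hu.ne') h1
    have hlv : HasDerivAt (fun a : ℝ => Real.log (1 - a * d))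
        ((1 - a * d)⁻¹ * (-d)) a := HasDerivAt.comp a (Real.hasDerivAt_log hv.ne') h2
    have := ((hasDerivAt_id a).mul hlu).add (((hasDerivAt_id a).const_sub 1).mul hlv)
    refine this.congr_deriv ?_
    simp only [hf', id_eq]
    field_simp
    ring
  have key2 : ∀ a ∈ Set.Ioo (0:ℝ) 1, HasDerivAt f'
      (d ^ 2 * ((1 - d ^ 2) + a * d ^ 2 * (1 - a)) /
        ((1 + d - a * d) ^ 2 * (1 - a * d) ^ 2)) a := by
    intro a ha
    obtain ⟨hu, hv⟩ := hpos a ha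
    have h1 : HasDerivAt (fun a : ℝ => 1 + d - a * d) (-d) a := by
      simpa using ((hasDerivAt_id a).mul_const d).const_sub (1 + d)
    have h2 : HasDerivAt (fun a : ℝ => 1 - a * d) (-d) a := by
      simpa using ((hasDerivAt_id a).mul_const d).const_sub 1
    have hlu : HasDerivAt (fun a : ℝ => Real.log (1 + d - a * d))
        ((1 + d - a * d)⁻¹ * (-d)) a := HasDerivAt.comp a (Real.hasDerivAt_log hu.ne') h1
    have hlv : HasDerivAt (fun a : ℝ => Real.log (1 - a * d))
        ((1 - a * d)⁻¹ * (-d)) a := HasDerivAt.comp a (Real.hasDerivAt_log hv.ne') h2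
    have hq1 : HasDerivAt (fun a : ℝ => a * d / (1 + d - a * d))
        ((d * (1 + d - a * d) - a * d * (-d)) / (1 + d - a * d) ^ 2) a := by
      simpa [Pi.div_def] using ((hasDerivAt_id a).mul_const d).div h1 hu.ne'
    have hq2 : HasDerivAt (fun a : ℝ => (1 - a) * d / (1 - a * d))
        (((-1) * d * (1 - a * d) - (1 - a) * d * (-d)) / (1 - a * d) ^ 2) a := by
      simpa [Pi.div_def] using (((hasDerivAt_id a).const_sub 1).mul_const d).div h2 hv.ne'
    have := ((hlu.sub hq1).sub hlv).sub hq2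
    refine this.congr_deriv ?_
    have hu' : 1 + d - d * a ≠ 0 := (by linarith [mul_comm a d] : (0:ℝ) < 1 + d - d * a).ne'
    have hv' : 1 - d * a ≠ 0 := (by linarith [mul_comm a d] : (0:ℝ) < 1 - d * a).ne'
    field_simp
    ring
  have hd' : ∀ x ∈ Set.Ioo (0:ℝ) 1, deriv f x = f' x := fun x hx => (key x hx).deriv
  refine convexOn_of_deriv2_nonneg (convex_Ioo 0 1) ?_ ?_ ?_ ?_
  · intro x hx
    exact ((key x hx).continuousAt).continuousWithinAt
  · rw [interior_Ioo]
    intro x hx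
    exact ((key x hx).differentiableAt).differentiableWithinAt
  · rw [interior_Ioo]
    intro x hx
    have heq : deriv f =ᶠ[nhds x] f' :=
      Filter.eventuallyEq_of_mem (isOpen_Ioo.mem_nhds hx) hd'
    exact (((key2 x hx).congr_of_eventuallyEq heq).differentiableAt).differentiableWithinAt
  · rw [interior_Ioo]
    intro x hx
    obtain ⟨hu, hv⟩ := hpos x hx
    have heq : deriv f =ᶠ[nhds x] f' :=
      Filter.eventuallyEq_of_mem (isOpen_Ioo.mem_nhds hx) hd'
    have : deriv (deriv f) x = deriv f' x := heq.deriv_eq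
    have h2 : deriv f' x = d ^ 2 * ((1 - d ^ 2) + x * d ^ 2 * (1 - x)) /
        ((1 + d - x * d) ^ 2 * (1 - x * d) ^ 2) := (key2 x hx).deriv
    simp only [Function.iterate_succ, Function.iterate_zero, Function.comp_apply, id_eq]
    rw [this, h2]
    obtain ⟨hx0, hx1⟩ := hx
    apply div_nonneg
    · have h3 : 0 < 1 - d ^ 2 + x * d ^ 2 * (1 - x) := by
        nlinarith [mul_pos (mul_pos hx0 (pow_pos hd0 2)) (sub_pos.mpr hx1),
          mul_pos (sub_pos.mpr hd1) (show (0:ℝ) < 1 + d by linarith)]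
      exact mul_nonneg (sq_nonneg d) h3.le
    · positivity
end

section
/- The function g(d) = log((6 + 3d − d²)/(6 − 3d − d²)) + 12d·(d² − 3)/(d⁴ − 21d² + 36) is nonincreasing on the open interval (0, 1): for all 0 < d₁ ≤ d₂ < 1 one has g(d₂) ≤ g(d₁). -/
noncomputable def gfun : ℝ → ℝ := fun x =>
  Real.log ((6 + 3 * x - x ^ 2) / (6 - 3 * x - x ^ 2)) +
    12 * x * (x ^ 2 - 3) / (x ^ 4 - 21 * x ^ 2 + 36)

lemma gfun_hasDerivAt (x : ℝ) (hx0 : 0 ≤ x) (hx1 : x ≤ 1) :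
    HasDerivAt gfun (-(6 * x ^ 4 * (x ^ 2 + 39)) / (x ^ 4 - 21 * x ^ 2 + 36) ^ 2) x := by
  have hApos : 0 < 6 + 3 * x - x ^ 2 := by nlinarith
  have hBpos : 0 < 6 - 3 * x - x ^ 2 := by nlinarith
  have hPpos : 0 < x ^ 4 - 21 * x ^ 2 + 36 := by nlinarith
  have hA : HasDerivAt (fun y : ℝ => 6 + 3 * y - y ^ 2) (3 - 2 * x) x := by
    have := ((hasDerivAt_id x).const_mul 3).const_add 6 |>.sub (hasDerivAt_pow 2 x)
    simpa [Pi.sub_def] using this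
  have hB : HasDerivAt (fun y : ℝ => 6 - 3 * y - y ^ 2) (-3 - 2 * x) x := by
    have := ((hasDerivAt_id x).const_mul 3).const_sub 6 |>.sub (hasDerivAt_pow 2 x)
    simpa [Pi.sub_def] using this
  have hQ : HasDerivAt (fun y : ℝ => (6 + 3 * y - y ^ 2) / (6 - 3 * y - y ^ 2))
      (((3 - 2 * x) * (6 - 3 * x - x ^ 2) - (6 + 3 * x - x ^ 2) * (-3 - 2 * x)) /
        (6 - 3 * x - x ^ 2) ^ 2) x := hA.div hB hBpos.ne'
  have hQpos : 0 < (6 + 3 * x - x ^ 2) / (6 - 3 * x - x ^ 2) := div_pos hApos hBpos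
  have hlog := hQ.log hQpos.ne'
  have hN : HasDerivAt (fun y : ℝ => 12 * y * (y ^ 2 - 3)) (36 * x ^ 2 - 36) x := by
    have h : (fun y : ℝ => 12 * y * (y ^ 2 - 3)) = fun y : ℝ => 12 * y ^ 3 - 36 * y := by
      funext y; ring
    rw [h]
    have := ((hasDerivAt_pow 3 x).const_mul 12).sub ((hasDerivAt_id x).const_mul 36)
    exact this.congr_deriv (by norm_num; ring)
  have hP : HasDerivAt (fun y : ℝ => y ^ 4 - 21 * y ^ 2 + 36)
      (4 * x ^ 3 - 42 * x) x := by
    have := ((hasDerivAt_pow 4 x).sub ((hasDerivAt_pow 2 x).const_mul 21)).add_const 36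
    exact this.congr_deriv (by norm_num; ring)
  have hR := hN.div hP hPpos.ne'
  have htot := hlog.add hR
  refine htot.congr_deriv ?_
  have hAB : x ^ 4 - 21 * x ^ 2 + 36 = (6 + 3 * x - x ^ 2) * (6 - 3 * x - x ^ 2) := by ring
  rw [hAB]
  field_simp
  ring

lemma gfun_anti : AntitoneOn gfun (Set.Icc (0 : ℝ) 1) := by
  apply antitoneOn_of_deriv_nonpos (convex_Icc 0 1)
  · intro x hx
    exact (gfun_hasDerivAt x hx.1 hx.2).continuousAt.continuousWithinAt
  · intro x hx
    rw [interior_Icc] at hx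
    exact (gfun_hasDerivAt x hx.1.le hx.2.le).differentiableAt.differentiableWithinAt
  · intro x hx
    rw [interior_Icc] at hx
    rw [(gfun_hasDerivAt x hx.1.le hx.2.le).deriv]
    have hPpos : 0 < x ^ 4 - 21 * x ^ 2 + 36 := by
      obtain ⟨h0, h1⟩ := hx; nlinarith
    apply div_nonpos_of_nonpos_of_nonneg
    · have h : 0 ≤ 6 * x ^ 4 * (x ^ 2 + 39) := by positivity
      linarith
    · positivity

/-- The function `g(d) = log((6 + 3d − d²)/(6 − 3d − d²)) + 12d(d² − 3)/(d⁴ − 21d² + 36)`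
is nonincreasing on `(0, 1)`. -/
theorem stmt9 (d₁ d₂ : ℝ) (h0 : 0 < d₁) (h12 : d₁ ≤ d₂) (h1 : d₂ < 1) :
    Real.log ((6 + 3 * d₂ - d₂ ^ 2) / (6 - 3 * d₂ - d₂ ^ 2)) +
        12 * d₂ * (d₂ ^ 2 - 3) / (d₂ ^ 4 - 21 * d₂ ^ 2 + 36) ≤
      Real.log ((6 + 3 * d₁ - d₁ ^ 2) / (6 - 3 * d₁ - d₁ ^ 2)) +
        12 * d₁ * (d₁ ^ 2 - 3) / (d₁ ^ 4 - 21 * d₁ ^ 2 + 36) := by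
  have := gfun_anti ⟨h0.le, (h12.trans h1.le)⟩ ⟨h0.le.trans h12, h1.le⟩ h12
  simpa [gfun] using this
end

section
/- For all reals d, a with 0 < d < 1 and 0 < a < 1, one has f(d, a) ≥ log(1 + d/2 − d²/6) + 2d(3 − d)(d² − 3)/(d⁴ − 21d² + 36). -/
set_option maxHeartbeats 1600000

open Real

/-- Core: `2 artanh r ≥ 2r` for `0 ≤ r < 1`. -/
lemma core_lower {r : ℝ} (h0 : 0 ≤ r) (h1 : r < 1) :
    2 * r ≤ Real.log (1 + r) - Real.log (1 - r) := by
  set F : ℝ → ℝ := fun t => Real.log (1 + t) - Real.log (1 - t) - 2 * t with hF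
  have key : ∀ t ∈ Set.Icc (0:ℝ) r, HasDerivAt F (1 / (1 + t) + 1 / (1 - t) - 2) t := by
    intro t ht
    have ht0 : (0:ℝ) ≤ t := ht.1
    have ht1 : t < 1 := lt_of_le_of_lt ht.2 h1
    have h1t : (1:ℝ) + t ≠ 0 := by linarith
    have h2t : (1:ℝ) - t ≠ 0 := by linarith
    have d1 : HasDerivAt (fun t : ℝ => Real.log (1 + t)) (1 / (1 + t)) t := by
      simpa using (((hasDerivAt_id t).const_add (1:ℝ)).log h1t)
    have d2 : HasDerivAt (fun t : ℝ => Real.log (1 - t)) (-1 / (1 - t)) t := by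
      simpa using (((hasDerivAt_id t).const_sub (1:ℝ)).log h2t)
    have d3 : HasDerivAt (fun t : ℝ => 2 * t) 2 t := by
      simpa using (hasDerivAt_id t).const_mul (2:ℝ)
    have := (d1.sub d2).sub d3
    exact this.congr_deriv (by ring)
  have mono : MonotoneOn F (Set.Icc 0 r) := by
    apply monotoneOn_of_deriv_nonneg (convex_Icc 0 r)
    · exact fun t ht => ((key t ht).continuousAt).continuousWithinAt
    · intro t ht
      rw [interior_Icc] at ht
      exact ((key t ⟨le_of_lt ht.1, le_of_lt ht.2⟩).differentiableAt).differentiableWithinAt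
    · intro t ht
      rw [interior_Icc] at ht
      rw [(key t ⟨le_of_lt ht.1, le_of_lt ht.2⟩).deriv]
      have ht1 : t < 1 := lt_of_lt_of_le ht.2 h1.le
      have hp : (0:ℝ) < 1 + t := by linarith [ht.1]
      have hq : (0:ℝ) < 1 - t := by linarith
      rw [div_add_div _ _ hp.ne' hq.ne', sub_nonneg, le_div_iff₀ (by positivity)]
      nlinarith [sq_nonneg t]
  have h := mono (Set.mem_Icc.mpr ⟨le_refl 0, h0⟩) (Set.mem_Icc.mpr ⟨h0, le_refl r⟩) h0
  have hF0 : F 0 = 0 := by simp [hF]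
  rw [hF0] at h
  simpa [hF] using h

/-- Core: `2 artanh r ≤ 2r + 2r³/(3(1−r²))` for `0 ≤ r < 1`. -/
lemma core_upper {r : ℝ} (h0 : 0 ≤ r) (h1 : r < 1) :
    Real.log (1 + r) - Real.log (1 - r) ≤ 2 * r + 2 * r ^ 3 / (3 * (1 - r ^ 2)) := by
  set F : ℝ → ℝ := fun t => 2 * t + 2 * t ^ 3 / (3 * (1 - t ^ 2))
      - (Real.log (1 + t) - Real.log (1 - t)) with hF
  have key : ∀ t, 0 ≤ t → t < 1 → HasDerivAt F
      (2 + ((6 * t ^ 2) * (3 * (1 - t ^ 2)) - (2 * t ^ 3) * (3 * (-(2 * t)))) / (3 * (1 - t ^ 2)) ^ 2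
        - (1 / (1 + t) - -1 / (1 - t))) t := by
    intro t ht0 ht1
    have h1t : (1:ℝ) + t ≠ 0 := by linarith
    have h2t : (1:ℝ) - t ≠ 0 := by linarith
    have hden : (3:ℝ) * (1 - t ^ 2) ≠ 0 := by nlinarith
    have d1 : HasDerivAt (fun t : ℝ => Real.log (1 + t)) (1 / (1 + t)) t := by
      simpa using (((hasDerivAt_id t).const_add (1:ℝ)).log h1t)
    have d2 : HasDerivAt (fun t : ℝ => Real.log (1 - t)) (-1 / (1 - t)) t := by
      simpa using (((hasDerivAt_id t).const_sub (1:ℝ)).log h2t)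
    have dn : HasDerivAt (fun t : ℝ => 2 * t ^ 3) (6 * t ^ 2) t := by
      have := (hasDerivAt_pow 3 t).const_mul (2:ℝ)
      norm_num at this
      exact this.congr_deriv (by ring)
    have dd : HasDerivAt (fun t : ℝ => 3 * (1 - t ^ 2)) (3 * (-(2 * t))) t := by
      have := ((hasDerivAt_pow 2 t).const_sub (1:ℝ)).const_mul (3:ℝ)
      simpa using this
    have dq := dn.div dd hden
    have dl : HasDerivAt (fun t : ℝ => 2 * t) 2 t := by
      simpa using (hasDerivAt_id t).const_mul (2:ℝ)
    exact (dl.add dq).sub (d1.sub d2)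
  have mono : MonotoneOn F (Set.Icc 0 r) := by
    apply monotoneOn_of_deriv_nonneg (convex_Icc 0 r)
    · intro t ht
      exact ((key t ht.1 (lt_of_le_of_lt ht.2 h1)).continuousAt).continuousWithinAt
    · intro t ht
      rw [interior_Icc] at ht
      exact ((key t ht.1.le (lt_of_lt_of_le ht.2 h1.le)).differentiableAt).differentiableWithinAt
    · intro t ht
      rw [interior_Icc] at ht
      have ht1 : t < 1 := lt_of_lt_of_le ht.2 h1.le
      rw [(key t ht.1.le ht1).deriv]
      have hp : (0:ℝ) < 1 + t := by linarith [ht.1]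
      have hq : (0:ℝ) < 1 - t := by linarith
      have hs : (0:ℝ) < 1 - t ^ 2 := by nlinarith
      have : (2 + ((6 * t ^ 2) * (3 * (1 - t ^ 2)) - (2 * t ^ 3) * (3 * (-(2 * t)))) / (3 * (1 - t ^ 2)) ^ 2
          - (1 / (1 + t) - -1 / (1 - t))) = 4 * t ^ 4 / (3 * (1 - t ^ 2) ^ 2) := by
        field_simp
        ring
      rw [this]
      positivity
  have h := mono (Set.mem_Icc.mpr ⟨le_refl 0, h0⟩) (Set.mem_Icc.mpr ⟨h0, le_refl r⟩) h0
  have hF0 : F 0 = 0 := by norm_num [hF]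
  rw [hF0] at h
  have := sub_nonneg.mpr h
  simp only [hF] at h
  linarith [h]

lemma log_pair_lower (b c : ℝ) (hb : 0 < b) (hbc : b ≤ c) :
    2 * (c - b) / (c + b) ≤ Real.log c - Real.log b := by
  have hc : 0 < c := lt_of_lt_of_le hb hbc
  have hcb : 0 < c + b := by linarith
  set r : ℝ := (c - b) / (c + b) with hr
  have h0 : 0 ≤ r := div_nonneg (by linarith) hcb.le
  have h1 : r < 1 := by rw [hr, div_lt_one hcb]; linarith
  have key := core_lower h0 h1
  have e1 : 1 + r = 2 * c / (c + b) := by rw [hr]; field_simp; ring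
  have e2 : 1 - r = 2 * b / (c + b) := by rw [hr]; field_simp; ring
  rw [e1, e2, Real.log_div (by positivity) hcb.ne', Real.log_div (by positivity) hcb.ne',
    Real.log_mul two_ne_zero hc.ne', Real.log_mul two_ne_zero hb.ne'] at key
  calc 2 * (c - b) / (c + b) = 2 * r := by rw [hr]; ring
  _ ≤ _ := by linarith

lemma log_pair_upper (b c : ℝ) (hc : 0 < c) (hcb : c ≤ b) :
    Real.log b - Real.log c ≤ 2 * (b - c) / (b + c) + (b - c) ^ 3 / (6 * (b * c) * (b + c)) := by
  have hb : 0 < b := lt_of_lt_of_le hc hcb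
  have hbc : 0 < b + c := by linarith
  set r : ℝ := (b - c) / (b + c) with hr
  have h0 : 0 ≤ r := div_nonneg (by linarith) hbc.le
  have h1 : r < 1 := by rw [hr, div_lt_one hbc]; linarith
  have key := core_upper h0 h1
  have e1 : 1 + r = 2 * b / (b + c) := by rw [hr]; field_simp; ring
  have e2 : 1 - r = 2 * c / (b + c) := by rw [hr]; field_simp; ring
  rw [e1, e2, Real.log_div (by positivity) hbc.ne', Real.log_div (by positivity) hbc.ne',
    Real.log_mul two_ne_zero hb.ne', Real.log_mul two_ne_zero hc.ne'] at key
  have hre : 1 - r ^ 2 = 4 * (b * c) / (b + c) ^ 2 := by rw [hr]; field_simp; ring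
  have e3 : 2 * r + 2 * r ^ 3 / (3 * (1 - r ^ 2))
      = 2 * (b - c) / (b + c) + (b - c) ^ 3 / (6 * (b * c) * (b + c)) := by
    rw [hre, hr]
    field_simp
    ring
  linarith [key, e3.symm.le]

lemma log_pair_lower' (b c : ℝ) (hc : 0 < c) (hcb : c ≤ b) :
    (c ^ 2 - b ^ 2) / (2 * (b * c)) ≤ Real.log c - Real.log b := by
  have hb : 0 < b := lt_of_lt_of_le hc hcb
  have key := log_pair_upper b c hc hcb
  have h : 2 * (b - c) / (b + c) + (b - c) ^ 3 / (6 * (b * c) * (b + c))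
      ≤ (b ^ 2 - c ^ 2) / (2 * (b * c)) := by
    rw [div_add_div _ _ (by positivity) (by positivity), div_le_div_iff₀ (by positivity) (by positivity)]
    nlinarith [sq_nonneg (b - c), mul_pos hb hc, sub_nonneg.mpr hcb, mul_nonneg (mul_nonneg (sub_nonneg.mpr hcb) (sq_nonneg (b-c))) (mul_pos hb hc).le]
  have : (c ^ 2 - b ^ 2) / (2 * (b * c)) = -((b ^ 2 - c ^ 2) / (2 * (b * c))) := by ring
  rw [this]
  linarith

/-- Lower bound on `f(d, a) = a·log(1 + d − a·d) + (1 − a)·log(1 − a·d)` for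
`d, a ∈ (0,1)`: `f(d, a) ≥ log(1 + d/2 − d²/6) + 2d(3 − d)(d² − 3)/(d⁴ − 21d² + 36)`. -/
theorem stmt10 (d a : ℝ) (hd0 : 0 < d) (hd1 : d < 1) (ha0 : 0 < a) (ha1 : a < 1) :
    Real.log (1 + d / 2 - d ^ 2 / 6) +
        2 * d * (3 - d) * (d ^ 2 - 3) / (d ^ 4 - 21 * d ^ 2 + 36) ≤
      a * Real.log (1 + d - a * d) + (1 - a) * Real.log (1 - a * d) := by
  set y := 1 + d / 2 - d ^ 2 / 6 with hydef
  set u := 1 + d - a * d with hudef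
  set v := 1 - a * d with hvdef
  set x := 1 - d / 2 - d ^ 2 / 6 with hxdef
  set s := 1 / 2 + d / 6 - a with hsdef
  set Kt := d * (3 - d ^ 2) / (3 * (x * y)) with hKdef
  have hx : 0 < x := by rw [hxdef]; nlinarith
  have hy : 0 < y := by rw [hydef]; nlinarith
  have hu : 0 < u := by rw [hudef]; nlinarith
  have hv : 0 < v := by rw [hvdef]; nlinarith
  have hxy : 0 < x * y := mul_pos hx hy
  have hK : 0 ≤ Kt := by
    rw [hKdef]
    apply div_nonneg _ (by positivity)
    nlinarith
  -- Lemma A : log y - log x ≤ Kt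
  have hA : Real.log y - Real.log x ≤ Kt := by
    have h := log_pair_upper y x hx (by rw [hxdef, hydef]; nlinarith)
    have h2 : 2 * (y - x) / (y + x) + (y - x) ^ 3 / (6 * (y * x) * (y + x)) ≤ Kt := by
      have hid : Kt - (2 * (y - x) / (y + x) + (y - x) ^ 3 / (6 * (y * x) * (y + x)))
          = d ^ 5 / (18 * ((x * y) * (x + y))) := by
        rw [hKdef]
        field_simp
        rw [hxdef, hydef]
        ring
      have hpos : 0 ≤ d ^ 5 / (18 * ((x * y) * (x + y))) := by positivity
      linarith [hid ▸ hpos]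
    linarith
  -- main case bound
  have hD : s * Kt ≤ a * (Real.log u - Real.log y) + (1 - a) * (Real.log v - Real.log x) := by
    rcases le_total a (1 / 2 + d / 6) with hcase | hcase
    · have hs0 : 0 ≤ s := by rw [hsdef]; linarith
      have huy : y ≤ u := by rw [hudef, hydef]; nlinarith
      have hvx : x ≤ v := by rw [hvdef, hxdef]; nlinarith
      have b1 := log_pair_lower y u hy huy
      have b2 := log_pair_lower x v hx hvx
      have e1 : u - y = d * s := by rw [hudef, hydef, hsdef]; ring
      have e2 : v - x = d * s := by rw [hvdef, hxdef, hsdef]; ring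
      have e3 : u + y = 2 * y + d * s := by rw [hudef, hydef, hsdef]; ring
      have e4 : v + x = 2 * x + d * s := by rw [hvdef, hxdef, hsdef]; ring
      rw [e1, e3] at b1
      rw [e2, e4] at b2
      have hP : 0 < 2 * y + d * s := by positivity
      have hQ : 0 < 2 * x + d * s := by positivity
      have key : s * Kt ≤ a * (2 * (d * s) / (2 * y + d * s))
          + (1 - a) * (2 * (d * s) / (2 * x + d * s)) := by
        have hidr : a * (2 * (d * s) / (2 * y + d * s))
            + (1 - a) * (2 * (d * s) / (2 * x + d * s)) - s * Kt
            = d ^ 2 * s ^ 2 * (6 - 9 / 2 * d ^ 2 - d ^ 4 / 6 + s * d * (d ^ 2 - 3))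
              / (3 * (x * y) * ((2 * y + d * s) * (2 * x + d * s))) := by
          rw [hKdef]
          field_simp
          rw [hsdef, hxdef, hydef]
          ring
        have hbr : 0 ≤ 6 - 9 / 2 * d ^ 2 - d ^ 4 / 6 + s * d * (d ^ 2 - 3) := by
          rw [hsdef]
          nlinarith [mul_nonneg (sub_nonneg.mpr hd1.le)
              (by nlinarith : (0:ℝ) ≤ 6 + 9 / 2 * d - 1 / 2 * d ^ 2),
            mul_nonneg (mul_nonneg ha0.le hd0.le) (by nlinarith : (0:ℝ) ≤ 3 - d ^ 2)]
        have hpos : 0 ≤ d ^ 2 * s ^ 2 * (6 - 9 / 2 * d ^ 2 - d ^ 4 / 6 + s * d * (d ^ 2 - 3))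
            / (3 * (x * y) * ((2 * y + d * s) * (2 * x + d * s))) := by
          apply div_nonneg _ (by positivity)
          positivity
        linarith [hidr, hpos, hidr ▸ hpos]
      have m1 : a * (2 * (d * s) / (2 * y + d * s)) ≤ a * (Real.log u - Real.log y) :=
        mul_le_mul_of_nonneg_left b1 ha0.le
      have m2 : (1 - a) * (2 * (d * s) / (2 * x + d * s)) ≤ (1 - a) * (Real.log v - Real.log x) :=
        mul_le_mul_of_nonneg_left b2 (by linarith)
      exact le_trans key (add_le_add m1 m2)
    · have huy : u ≤ y := by rw [hudef, hydef]; nlinarith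
      have hvx : v ≤ x := by rw [hvdef, hxdef]; nlinarith
      have b1 := log_pair_lower' y u hu huy
      have b2 := log_pair_lower' x v hv hvx
      have key : s * Kt ≤ a * ((u ^ 2 - y ^ 2) / (2 * (y * u)))
          + (1 - a) * ((v ^ 2 - x ^ 2) / (2 * (x * v))) := by
        have hidr : a * ((u ^ 2 - y ^ 2) / (2 * (y * u)))
            + (1 - a) * ((v ^ 2 - x ^ 2) / (2 * (x * v))) - s * Kt
            = d ^ 2 * s ^ 2 * (2 * (u * v) - a * (x * v) - (1 - a) * (y * u))
              / (2 * (x * y * (u * v))) := by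
          rw [hKdef]
          field_simp
          rw [hsdef, hxdef, hydef, hudef, hvdef]
          ring
        have hE2 : 0 ≤ 2 * (u * v) - a * (x * v) - (1 - a) * (y * u) := by
          rw [hxdef, hydef, hudef, hvdef]
          nlinarith [mul_nonneg (sub_nonneg.mpr hd1.le)
              (by nlinarith : (0:ℝ) ≤ 1 + d / 2 + d ^ 2 / 6),
            mul_nonneg (mul_nonneg (sub_nonneg.mpr ha1.le) hd0.le)
              (by nlinarith : (0:ℝ) ≤ 1 - a * d + d ^ 2 / 3)]
        have hpos : 0 ≤ d ^ 2 * s ^ 2 * (2 * (u * v) - a * (x * v) - (1 - a) * (y * u))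
            / (2 * (x * y * (u * v))) := by
          apply div_nonneg _ (by positivity)
          positivity
        linarith [hidr ▸ hpos]
      have m1 : a * ((u ^ 2 - y ^ 2) / (2 * (y * u))) ≤ a * (Real.log u - Real.log y) :=
        mul_le_mul_of_nonneg_left b1 ha0.le
      have m2 : (1 - a) * ((v ^ 2 - x ^ 2) / (2 * (x * v))) ≤ (1 - a) * (Real.log v - Real.log x) :=
        mul_le_mul_of_nonneg_left b2 (by linarith)
      exact le_trans key (add_le_add m1 m2)
  -- constant identity
  have hC : 2 * d * (3 - d) * (d ^ 2 - 3) / (d ^ 4 - 21 * d ^ 2 + 36)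
      = -((1 - (1 / 2 + d / 6)) * Kt) := by
    have hden : d ^ 4 - 21 * d ^ 2 + 36 = 36 * (x * y) := by rw [hxdef, hydef]; ring
    rw [hden, hKdef]
    field_simp
    ring
  rw [hC]
  have hmul : (1 - a) * (Real.log y - Real.log x) ≤ (1 - a) * Kt :=
    mul_le_mul_of_nonneg_left hA (by linarith)
  have hkey2 : s * Kt - (1 - a) * Kt = -((1 - (1 / 2 + d / 6)) * Kt) := by
    rw [hsdef]; ring
  clear_value Kt s u v x y
  linarith [hD, hmul, hkey2]
end

section
/- The function h(d) = log(1 + d/2 − d²/6) + 2d(3 − d)(d² − 3)/(d⁴ − 21d² + 36) is nonincreasing on the open interval (0, 1): for all 0 < d₁ ≤ d₂ < 1 one has h(d₂) ≤ h(d₁). -/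
private lemma hu_pos (x : ℝ) (hx : x ∈ Set.Icc (0:ℝ) 1) : (0:ℝ) < 1 + x / 2 - x ^ 2 / 6 := by
  obtain ⟨h0, h1⟩ := hx; nlinarith [sq_nonneg x]

private lemma hD_pos (x : ℝ) (hx : x ∈ Set.Icc (0:ℝ) 1) : (0:ℝ) < x ^ 4 - 21 * x ^ 2 + 36 := by
  obtain ⟨h0, h1⟩ := hx
  nlinarith [pow_le_one₀ h0 h1 (n := 2), sq_nonneg (x ^ 2)]

private lemma key_deriv (x : ℝ) (hu : (1:ℝ) + x / 2 - x ^ 2 / 6 ≠ 0)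
    (hD : x ^ 4 - 21 * x ^ 2 + 36 ≠ 0) :
    HasDerivAt (fun d : ℝ => Real.log (1 + d / 2 - d ^ 2 / 6) +
        2 * d * (3 - d) * (d ^ 2 - 3) / (d ^ 4 - 21 * d ^ 2 + 36))
      ((1 / 2 - x / 3) / (1 + x / 2 - x ^ 2 / 6) +
        ((-8 * x ^ 3 + 18 * x ^ 2 + 12 * x - 18) * (x ^ 4 - 21 * x ^ 2 + 36) -
            2 * x * (3 - x) * (x ^ 2 - 3) * (4 * x ^ 3 - 42 * x)) /
          (x ^ 4 - 21 * x ^ 2 + 36) ^ 2) x := by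
  have h1 : HasDerivAt (fun d : ℝ => 1 + d / 2 - d ^ 2 / 6) (1 / 2 - x / 3) x := by
    have := (((hasDerivAt_id x).div_const 2).const_add 1).sub ((hasDerivAt_pow 2 x).div_const 6)
    refine this.congr_deriv ?_
    ring
  have h2 : HasDerivAt (fun d : ℝ => 2 * d * (3 - d) * (d ^ 2 - 3))
      (-8 * x ^ 3 + 18 * x ^ 2 + 12 * x - 18) x := by
    have := (((hasDerivAt_id x).const_mul 2).mul ((hasDerivAt_id x).const_sub 3)).mul
      ((hasDerivAt_pow 2 x).sub_const 3)
    refine this.congr_deriv ?_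
    simp only [id, Pi.mul_apply]
    ring
  have h3 : HasDerivAt (fun d : ℝ => d ^ 4 - 21 * d ^ 2 + 36) (4 * x ^ 3 - 42 * x) x := by
    have := ((hasDerivAt_pow 4 x).sub ((hasDerivAt_pow 2 x).const_mul 21)).add_const 36
    refine this.congr_deriv ?_
    ring
  exact (h1.log hu).add (h2.div h3 hD)

private lemma key_antitone : AntitoneOn (fun d : ℝ => Real.log (1 + d / 2 - d ^ 2 / 6) +
    2 * d * (3 - d) * (d ^ 2 - 3) / (d ^ 4 - 21 * d ^ 2 + 36)) (Set.Icc (0:ℝ) 1) := by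
  have hderiv : ∀ x ∈ Set.Icc (0:ℝ) 1,
      HasDerivAt (fun d : ℝ => Real.log (1 + d / 2 - d ^ 2 / 6) +
        2 * d * (3 - d) * (d ^ 2 - 3) / (d ^ 4 - 21 * d ^ 2 + 36))
      ((1 / 2 - x / 3) / (1 + x / 2 - x ^ 2 / 6) +
        ((-8 * x ^ 3 + 18 * x ^ 2 + 12 * x - 18) * (x ^ 4 - 21 * x ^ 2 + 36) -
            2 * x * (3 - x) * (x ^ 2 - 3) * (4 * x ^ 3 - 42 * x)) /
          (x ^ 4 - 21 * x ^ 2 + 36) ^ 2) x := by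
    intro x hx
    exact key_deriv x (ne_of_gt (hu_pos x hx)) (ne_of_gt (hD_pos x hx))
  apply antitoneOn_of_deriv_nonpos (convex_Icc 0 1)
  · intro x hx
    exact (hderiv x hx).continuousAt.continuousWithinAt
  · intro x hx
    rw [interior_Icc] at hx
    exact (hderiv x (Set.Ioo_subset_Icc_self hx)).differentiableAt.differentiableWithinAt
  · intro x hx
    rw [interior_Icc] at hx
    have hx' : x ∈ Set.Icc (0:ℝ) 1 := Set.Ioo_subset_Icc_self hx
    rw [(hderiv x hx').deriv]
    have hu := hu_pos x hx'
    have hD := hD_pos x hx'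
    rw [div_add_div _ _ (ne_of_gt hu) (ne_of_gt (pow_pos hD 2))]
    apply div_nonpos_of_nonpos_of_nonneg
    · obtain ⟨hx0, hx1⟩ := hx
      have hq : 2 * x ^ 6 - 3 * x ^ 5 + 9 * x ^ 4 - 117 * x ^ 3 + 225 * x ^ 2 - 324 ≤ 0 := by
        nlinarith [pow_le_one₀ hx0.le hx1.le (n := 2), pow_le_one₀ hx0.le hx1.le (n := 4),
          pow_le_one₀ hx0.le hx1.le (n := 6), pow_pos hx0 3, pow_pos hx0 5]
      nlinarith [mul_nonneg (mul_nonneg hu.le hx0.le) (neg_nonneg.mpr hq)]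
    · positivity

/-- The function `h(d) = log(1 + d/2 − d²/6) + 2d(3 − d)(d² − 3)/(d⁴ − 21d² + 36)`
is nonincreasing on `(0, 1)`. -/
theorem stmt11 (d₁ d₂ : ℝ) (h0 : 0 < d₁) (h12 : d₁ ≤ d₂) (h1 : d₂ < 1) :
    Real.log (1 + d₂ / 2 - d₂ ^ 2 / 6) +
        2 * d₂ * (3 - d₂) * (d₂ ^ 2 - 3) / (d₂ ^ 4 - 21 * d₂ ^ 2 + 36) ≤
      Real.log (1 + d₁ / 2 - d₁ ^ 2 / 6) +
        2 * d₁ * (3 - d₁) * (d₁ ^ 2 - 3) / (d₁ ^ 4 - 21 * d₁ ^ 2 + 36) :=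
  key_antitone ⟨h0.le, (h12.trans_lt h1).le⟩ ⟨(h0.trans_le h12).le, h1.le⟩ h12
end

section
/- For all reals d, a with 0 < d ≤ 1/2 and 0 < a < 1, one has f(d, a) ≥ log(29/24) − 110/493. -/
/-- Degree-6 Taylor bound for `log (1 - x)` on `|x| ≤ 1/2`. -/
lemma taylor6 (x : ℝ) (h : |x| ≤ 1/2) :
    |(x + x^2/2 + x^3/3 + x^4/4 + x^5/5 + x^6/6) + Real.log (1-x)| ≤ 2*|x|^7 := by
  have h1 : |x| < 1 := lt_of_le_of_lt h (by norm_num)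
  have key := Real.abs_log_sub_add_sum_range_le h1 6
  have hs : (∑ i ∈ Finset.range 6, x^(i+1)/(i+1))
      = x + x^2/2 + x^3/3 + x^4/4 + x^5/5 + x^6/6 := by
    norm_num [Finset.sum_range_succ]
  rw [hs] at key
  have hx7 : (0:ℝ) ≤ |x|^7 := by positivity
  have h2 : |x|^7/(1-|x|) ≤ 2*|x|^7 := by
    rw [div_le_iff₀ (by linarith)]
    nlinarith [abs_nonneg x]
  linarith

/-- The core one-variable estimate at `d = 1/2`. -/
lemma core (a : ℝ) (ha0 : 0 < a) (ha1 : a < 1) :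
    (-12756440075 : ℝ)/376855068672 ≤
      a * Real.log ((3-a)/2) + (1-a) * Real.log ((2-a)/2) := by
  have hv := taylor6 (a/2) (by rw [abs_of_nonneg (by linarith)]; linarith)
  have hu := taylor6 (-(1-a)/2) (by rw [abs_of_nonpos (by linarith)]; linarith)
  rw [show (1 - a/2 : ℝ) = (2-a)/2 by ring] at hv
  rw [show (1 - (-(1-a)/2) : ℝ) = (3-a)/2 by ring] at hu
  rw [show |a/2| = a/2 from abs_of_nonneg (by linarith)] at hv
  rw [show |(-(1-a)/2)| = (1-a)/2 by rw [abs_of_nonpos (by linarith)]; ring] at hu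
  rw [abs_le] at hv hu
  have h1 : Real.log ((2-a)/2) ≥
      -((a/2) + (a/2)^2/2 + (a/2)^3/3 + (a/2)^4/4 + (a/2)^5/5 + (a/2)^6/6) - 2*(a/2)^7 := by
    nlinarith [hv.1]
  have h2 : Real.log ((3-a)/2) ≥
      ((1-a)/2 - ((1-a)/2)^2/2 + ((1-a)/2)^3/3 - ((1-a)/2)^4/4 + ((1-a)/2)^5/5
        - ((1-a)/2)^6/6) - 2*((1-a)/2)^7 := by
    nlinarith [hu.1]
  have ha0' : (0:ℝ) ≤ a := le_of_lt ha0
  have ha1' : (0:ℝ) ≤ 1 - a := by linarith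
  have hA := mul_le_mul_of_nonneg_left h2 ha0'
  have hB := mul_le_mul_of_nonneg_left h1 ha1'
  nlinarith [sq_nonneg (a - 3/5), sq_nonneg ((a-3/5)*(a-3/5)), sq_nonneg (a*(a-3/5)),
    sq_nonneg ((1-a)*(a-3/5)), sq_nonneg a, sq_nonneg (1-a),
    mul_nonneg ha0' ha1', sq_nonneg (a*a - 3/5)]

/-- Upper bound on `log (29/24)`. -/
lemma log2924 : Real.log (29/24) ≤ (-12756440075 : ℝ)/376855068672 + 110/493 := by
  have h := taylor6 (-5/24) (by rw [abs_of_nonpos (by norm_num)]; norm_num)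
  rw [show (1 - (-5/24) : ℝ) = 29/24 by norm_num] at h
  rw [show |(-5/24 : ℝ)| = 5/24 by rw [abs_of_nonpos (by norm_num)]; norm_num] at h
  rw [abs_le] at h
  have h2 := h.2
  have hnum : 2*((5:ℝ)/24)^7 - (-5/24 + (-5/24)^2/2 + (-5/24)^3/3 + (-5/24)^4/4
      + (-5/24)^5/5 + (-5/24)^6/6) ≤ (-12756440075:ℝ)/376855068672 + 110/493 := by
    norm_num
  linarith

/-- For `0 < d ≤ 1/2` and `0 < a < 1`,
`a·log(1 + d − a·d) + (1 − a)·log(1 − a·d) ≥ log(29/24) − 110/493`. -/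
theorem stmt12 (d a : ℝ) (hd0 : 0 < d) (hd : d ≤ 1 / 2) (ha0 : 0 < a) (ha1 : a < 1) :
    Real.log (29 / 24) - 110 / 493 ≤
      a * Real.log (1 + d - a * d) + (1 - a) * Real.log (1 - a * d) := by
  set C : ℝ := (-12756440075 : ℝ)/376855068672 with hC
  clear_value C
  have hT : Real.log (29/24) - 110/493 ≤ C := by
    have := log2924; linarith
  have hconc := strictConcaveOn_log_Ioi.concaveOn
  have hw1 : (0:ℝ) ≤ 1 - 2*d := by linarith
  have hw2 : (0:ℝ) ≤ 2*d := by linarith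
  have hsum : (1 - 2*d) + 2*d = 1 := by ring
  have m1 : (1:ℝ) ∈ Set.Ioi (0:ℝ) := by norm_num
  have m2 : (3-a)/2 ∈ Set.Ioi (0:ℝ) := by simp only [Set.mem_Ioi]; linarith
  have m3 : (2-a)/2 ∈ Set.Ioi (0:ℝ) := by simp only [Set.mem_Ioi]; linarith
  have c1 := hconc.2 m1 m2 hw1 hw2 hsum
  have c2 := hconc.2 m1 m3 hw1 hw2 hsum
  rw [show (1-2*d) • (1:ℝ) + (2*d) • ((3-a)/2) = 1 + d - a*d by
    simp only [smul_eq_mul]; ring] at c1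
  rw [show (1-2*d) • (1:ℝ) + (2*d) • ((2-a)/2) = 1 - a*d by
    simp only [smul_eq_mul]; ring] at c2
  simp only [smul_eq_mul, Real.log_one, mul_zero, zero_add] at c1 c2
  have hg := core a ha0 ha1
  have ha0' : (0:ℝ) ≤ a := le_of_lt ha0
  have ha1' : (0:ℝ) ≤ 1 - a := by linarith
  have hA := mul_le_mul_of_nonneg_left c1 ha0'
  have hB := mul_le_mul_of_nonneg_left c2 ha1'
  have key : 2*d * (a * Real.log ((3-a)/2) + (1-a) * Real.log ((2-a)/2))
      ≤ a * Real.log (1 + d - a * d) + (1 - a) * Real.log (1 - a * d) := by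
    nlinarith
  set G : ℝ := a * Real.log ((3-a)/2) + (1-a) * Real.log ((2-a)/2) with hG
  clear_value G
  have hCneg : C < 0 := by rw [hC]; norm_num
  rcases le_or_gt 0 G with hGpos | hGneg
  · have : (0:ℝ) ≤ 2*d*G := mul_nonneg hw2 hGpos
    linarith
  · have : 2*d*G ≥ G := by nlinarith
    linarith
end

section
/- Let I = {0,…,4} × {0,…,6} and for (i,j) ∈ I set u_{ij} = i + (4/5)·j. Suppose x : I → ℝ and α ∈ ℝ satisfy: x_{ij} ≥ 0 for all (i,j) ∈ I; 0 ≤ α ≤ 1; ∑_{(i,j)∈I} x_{ij} = 1; ∑_{j=0}^{6} x_{4j} ≤ 53/162; ∑_{(i,j)∈I} i·x_{ij} ≤ (4/3)·(1 − α); and ∑_{(i,j)∈I} j·x_{ij} ≤ 10/3 + (4/3)·α. Then ∑_{(i,j)∈I} x_{ij}·log(u_{ij}) ≤ (1/162)·(log(21/5) + log(19/5)) + (160/162)·log 4. -/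
open Finset

set_option maxHeartbeats 2000000

lemma log_le_comb (u : ℝ) (a2 a3 a5 a7 a19 b2 b3 b5 b7 b19 : ℕ) (hu : 0 ≤ u)
    (hBA : (2:ℝ)^b2*3^b3*5^b5*7^b7*19^b19 ≤ (2:ℝ)^a2*3^a3*5^a5*7^a7*19^a19)
    (h : u * ((2:ℝ)^b2*3^b3*5^b5*7^b7*19^b19) ≤ (2:ℝ)^a2*3^a3*5^a5*7^a7*19^a19) :
    Real.log u ≤ ((a2:ℝ) - b2) * Real.log 2 + ((a3:ℝ) - b3) * Real.log 3
      + ((a5:ℝ) - b5) * Real.log 5 + ((a7:ℝ) - b7) * Real.log 7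
      + ((a19:ℝ) - b19) * Real.log 19 := by
  have e : ∀ (n2 n3 n5 n7 n19 : ℕ), Real.log ((2:ℝ)^n2*3^n3*5^n5*7^n7*19^n19)
      = (n2:ℝ)*Real.log 2 + (n3:ℝ)*Real.log 3 + (n5:ℝ)*Real.log 5 + (n7:ℝ)*Real.log 7
        + (n19:ℝ)*Real.log 19 := by
    intro n2 n3 n5 n7 n19
    rw [Real.log_mul (by positivity) (by positivity), Real.log_mul (by positivity) (by positivity),
      Real.log_mul (by positivity) (by positivity), Real.log_mul (by positivity) (by positivity),
      Real.log_pow, Real.log_pow, Real.log_pow, Real.log_pow, Real.log_pow]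
    try push_cast
    try ring
  have hB : (0:ℝ) < (2:ℝ)^b2*3^b3*5^b5*7^b7*19^b19 := by positivity
  have hA : (0:ℝ) < (2:ℝ)^a2*3^a3*5^a5*7^a7*19^a19 := by positivity
  have key : Real.log u ≤ Real.log ((2:ℝ)^a2*3^a3*5^a5*7^a7*19^a19)
      - Real.log ((2:ℝ)^b2*3^b3*5^b5*7^b7*19^b19) := by
    rcases eq_or_lt_of_le hu with h0 | h0
    · rw [← h0, Real.log_zero]
      have := Real.log_le_log hB hBA
      linarith
    · have hu2 : u ≤ ((2:ℝ)^a2*3^a3*5^a5*7^a7*19^a19) / ((2:ℝ)^b2*3^b3*5^b5*7^b7*19^b19) :=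
        (le_div_iff₀ hB).mpr h
      calc Real.log u ≤ Real.log (((2:ℝ)^a2*3^a3*5^a5*7^a7*19^a19)
            / ((2:ℝ)^b2*3^b3*5^b5*7^b7*19^b19)) := Real.log_le_log h0 hu2
        _ = _ := Real.log_div (ne_of_gt hA) (ne_of_gt hB)
  rw [e, e] at key
  linarith

/-- The LP bound (with `ε = 0`) from the APX-hardness reduction: any feasible solution
of the LP has objective value at most `(1/162)(log 4.2 + log 3.8) + (160/162) log 4`.
Valuation types are pairs `(i, j) ∈ {0,…,4} × {0,…,6}` with value `u_{ij} = i + (4/5)j`. -/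
theorem stmt18 (x : Fin 5 × Fin 7 → ℝ) (α : ℝ)
    (hx : ∀ p, 0 ≤ x p) (hα0 : 0 ≤ α) (hα1 : α ≤ 1)
    (hsum : ∑ p : Fin 5 × Fin 7, x p = 1)
    (h4 : ∑ j : Fin 7, x (4, j) ≤ 53 / 162)
    (hbig : ∑ p : Fin 5 × Fin 7, ((p.1 : ℕ) : ℝ) * x p ≤ (4 / 3) * (1 - α))
    (hsmall : ∑ p : Fin 5 × Fin 7, ((p.2 : ℕ) : ℝ) * x p ≤ 10 / 3 + (4 / 3) * α) :
    ∑ p : Fin 5 × Fin 7, x p * Real.log (((p.1 : ℕ) : ℝ) + (4 / 5) * ((p.2 : ℕ) : ℝ)) ≤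
      (1 / 162) * (Real.log (21 / 5) + Real.log (19 / 5)) + (160 / 162) * Real.log 4 := by
  simp only [Fintype.sum_prod_type, Fin.sum_univ_five, Fin.sum_univ_seven,
    show ((3:Fin 5):ℕ) = 3 from rfl, show ((4:Fin 5):ℕ) = 4 from rfl,
    show ((3:Fin 7):ℕ) = 3 from rfl, show ((4:Fin 7):ℕ) = 4 from rfl,
    show ((5:Fin 7):ℕ) = 5 from rfl, show ((6:Fin 7):ℕ) = 6 from rfl]
    at hsum h4 hbig hsmall ⊢
  norm_num at hsum h4 hbig hsmall ⊢
  have hl01 := log_le_comb (4 / 5) 18 0 8 0 4 0 12 0 12 0 (by norm_num) (by norm_num) (by norm_num)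
  have hl02 := log_le_comb (8 / 5) 14 0 6 0 3 0 9 0 9 0 (by norm_num) (by norm_num) (by norm_num)
  have hl03 := log_le_comb (12 / 5) 10 0 4 0 2 0 6 0 6 0 (by norm_num) (by norm_num) (by norm_num)
  have hl04 := log_le_comb (16 / 5) 6 0 2 0 1 0 3 0 3 0 (by norm_num) (by norm_num) (by norm_num)
  have hl05 := log_le_comb (4) 2 0 0 0 0 0 0 0 0 0 (by norm_num) (by norm_num) (by norm_num)
  have hl06 := log_le_comb (24 / 5) 0 3 0 3 0 2 0 2 0 1 (by norm_num) (by norm_num) (by norm_num)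
  have hl11 := log_le_comb (9 / 5) 12 0 5 0 3 0 8 0 8 0 (by norm_num) (by norm_num) (by norm_num)
  have hl12 := log_le_comb (13 / 5) 8 0 3 0 2 0 5 0 5 0 (by norm_num) (by norm_num) (by norm_num)
  have hl13 := log_le_comb (17 / 5) 4 0 1 0 1 0 2 0 2 0 (by norm_num) (by norm_num) (by norm_num)
  have hl14 := log_le_comb (21 / 5) 0 1 0 1 0 0 0 1 0 0 (by norm_num) (by norm_num) (by norm_num)
  have hl15 := log_le_comb (5) 0 4 0 4 0 4 0 3 0 1 (by norm_num) (by norm_num) (by norm_num)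
  have hl16 := log_le_comb (29 / 5) 0 7 0 7 0 8 0 5 0 2 (by norm_num) (by norm_num) (by norm_num)
  have hl20 := log_le_comb (2) 10 0 4 0 3 0 7 0 7 0 (by norm_num) (by norm_num) (by norm_num)
  have hl21 := log_le_comb (14 / 5) 6 0 2 0 2 0 4 0 4 0 (by norm_num) (by norm_num) (by norm_num)
  have hl22 := log_le_comb (18 / 5) 2 0 0 0 1 0 1 0 1 0 (by norm_num) (by norm_num) (by norm_num)
  have hl23 := log_le_comb (22 / 5) 0 2 0 2 0 2 0 2 0 0 (by norm_num) (by norm_num) (by norm_num)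
  have hl24 := log_le_comb (26 / 5) 0 5 0 5 0 6 0 4 0 1 (by norm_num) (by norm_num) (by norm_num)
  have hl25 := log_le_comb (6) 0 8 0 8 0 10 0 6 0 2 (by norm_num) (by norm_num) (by norm_num)
  have hl26 := log_le_comb (34 / 5) 0 11 0 11 0 14 0 8 0 3 (by norm_num) (by norm_num) (by norm_num)
  have hl30 := log_le_comb (3) 4 0 1 0 2 0 3 0 3 0 (by norm_num) (by norm_num) (by norm_num)
  have hl31 := log_le_comb (19 / 5) 0 0 0 0 1 0 0 1 0 0 (by norm_num) (by norm_num) (by norm_num)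
  have hl32 := log_le_comb (23 / 5) 0 3 0 3 0 4 0 3 0 0 (by norm_num) (by norm_num) (by norm_num)
  have hl33 := log_le_comb (27 / 5) 0 6 0 6 0 8 0 5 0 1 (by norm_num) (by norm_num) (by norm_num)
  have hl34 := log_le_comb (31 / 5) 0 9 0 9 0 12 0 7 0 2 (by norm_num) (by norm_num) (by norm_num)
  have hl35 := log_le_comb (7) 0 12 0 12 0 16 0 9 0 3 (by norm_num) (by norm_num) (by norm_num)
  have hl36 := log_le_comb (39 / 5) 0 15 0 15 0 20 0 11 0 4 (by norm_num) (by norm_num) (by norm_num)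
  have hl40 := log_le_comb (4) 2 0 0 0 0 0 0 0 0 0 (by norm_num) (by norm_num) (by norm_num)
  have hl41 := log_le_comb (24 / 5) 0 3 0 3 0 2 0 2 0 1 (by norm_num) (by norm_num) (by norm_num)
  have hl42 := log_le_comb (28 / 5) 0 6 0 6 0 6 0 4 0 2 (by norm_num) (by norm_num) (by norm_num)
  have hl43 := log_le_comb (32 / 5) 0 9 0 9 0 10 0 6 0 3 (by norm_num) (by norm_num) (by norm_num)
  have hl44 := log_le_comb (36 / 5) 0 12 0 12 0 14 0 8 0 4 (by norm_num) (by norm_num) (by norm_num)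
  have hl45 := log_le_comb (8) 0 15 0 15 0 18 0 10 0 5 (by norm_num) (by norm_num) (by norm_num)
  have hl46 := log_le_comb (44 / 5) 0 18 0 18 0 22 0 12 0 6 (by norm_num) (by norm_num) (by norm_num)
  push_cast at hl01 hl02 hl03 hl04 hl05 hl06 hl11 hl12 hl13 hl14 hl15 hl16 hl20 hl21 hl22 hl23 hl24 hl25 hl26 hl30 hl31 hl32 hl33 hl34 hl35 hl36 hl40 hl41 hl42 hl43 hl44 hl45 hl46
  have hm01 := mul_le_mul_of_nonneg_left hl01 (hx ((0:Fin 5), (1:Fin 7)))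
  have hm02 := mul_le_mul_of_nonneg_left hl02 (hx ((0:Fin 5), (2:Fin 7)))
  have hm03 := mul_le_mul_of_nonneg_left hl03 (hx ((0:Fin 5), (3:Fin 7)))
  have hm04 := mul_le_mul_of_nonneg_left hl04 (hx ((0:Fin 5), (4:Fin 7)))
  have hm05 := mul_le_mul_of_nonneg_left hl05 (hx ((0:Fin 5), (5:Fin 7)))
  have hm06 := mul_le_mul_of_nonneg_left hl06 (hx ((0:Fin 5), (6:Fin 7)))
  have hm11 := mul_le_mul_of_nonneg_left hl11 (hx ((1:Fin 5), (1:Fin 7)))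
  have hm12 := mul_le_mul_of_nonneg_left hl12 (hx ((1:Fin 5), (2:Fin 7)))
  have hm13 := mul_le_mul_of_nonneg_left hl13 (hx ((1:Fin 5), (3:Fin 7)))
  have hm14 := mul_le_mul_of_nonneg_left hl14 (hx ((1:Fin 5), (4:Fin 7)))
  have hm15 := mul_le_mul_of_nonneg_left hl15 (hx ((1:Fin 5), (5:Fin 7)))
  have hm16 := mul_le_mul_of_nonneg_left hl16 (hx ((1:Fin 5), (6:Fin 7)))
  have hm20 := mul_le_mul_of_nonneg_left hl20 (hx ((2:Fin 5), (0:Fin 7)))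
  have hm21 := mul_le_mul_of_nonneg_left hl21 (hx ((2:Fin 5), (1:Fin 7)))
  have hm22 := mul_le_mul_of_nonneg_left hl22 (hx ((2:Fin 5), (2:Fin 7)))
  have hm23 := mul_le_mul_of_nonneg_left hl23 (hx ((2:Fin 5), (3:Fin 7)))
  have hm24 := mul_le_mul_of_nonneg_left hl24 (hx ((2:Fin 5), (4:Fin 7)))
  have hm25 := mul_le_mul_of_nonneg_left hl25 (hx ((2:Fin 5), (5:Fin 7)))
  have hm26 := mul_le_mul_of_nonneg_left hl26 (hx ((2:Fin 5), (6:Fin 7)))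
  have hm30 := mul_le_mul_of_nonneg_left hl30 (hx ((3:Fin 5), (0:Fin 7)))
  have hm31 := mul_le_mul_of_nonneg_left hl31 (hx ((3:Fin 5), (1:Fin 7)))
  have hm32 := mul_le_mul_of_nonneg_left hl32 (hx ((3:Fin 5), (2:Fin 7)))
  have hm33 := mul_le_mul_of_nonneg_left hl33 (hx ((3:Fin 5), (3:Fin 7)))
  have hm34 := mul_le_mul_of_nonneg_left hl34 (hx ((3:Fin 5), (4:Fin 7)))
  have hm35 := mul_le_mul_of_nonneg_left hl35 (hx ((3:Fin 5), (5:Fin 7)))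
  have hm36 := mul_le_mul_of_nonneg_left hl36 (hx ((3:Fin 5), (6:Fin 7)))
  have hm40 := mul_le_mul_of_nonneg_left hl40 (hx ((4:Fin 5), (0:Fin 7)))
  have hm41 := mul_le_mul_of_nonneg_left hl41 (hx ((4:Fin 5), (1:Fin 7)))
  have hm42 := mul_le_mul_of_nonneg_left hl42 (hx ((4:Fin 5), (2:Fin 7)))
  have hm43 := mul_le_mul_of_nonneg_left hl43 (hx ((4:Fin 5), (3:Fin 7)))
  have hm44 := mul_le_mul_of_nonneg_left hl44 (hx ((4:Fin 5), (4:Fin 7)))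
  have hm45 := mul_le_mul_of_nonneg_left hl45 (hx ((4:Fin 5), (5:Fin 7)))
  have hm46 := mul_le_mul_of_nonneg_left hl46 (hx ((4:Fin 5), (6:Fin 7)))
  -- nonnegativity of dual multipliers
  have hmu0 : (0:ℝ) ≤ (4:ℝ) * Real.log 2 + (-1:ℝ) * Real.log 3 + (2:ℝ) * Real.log 5 + (-1:ℝ) * Real.log 7 + (-1:ℝ) * Real.log 19 := by
    have := log_le_comb 1 4 0 2 0 0 0 1 0 1 1 (by norm_num) (by norm_num) (by norm_num)
    rw [Real.log_one] at this; push_cast at this; linarith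
  have hbeta0 : (0:ℝ) ≤ (-6:ℝ) * Real.log 2 + (4:ℝ) * Real.log 3 + (-3:ℝ) * Real.log 5 + (4:ℝ) * Real.log 7 + (-1:ℝ) * Real.log 19 := by
    have := log_le_comb 1 0 4 0 4 0 6 0 3 0 1 (by norm_num) (by norm_num) (by norm_num)
    rw [Real.log_one] at this; push_cast at this; linarith
  have hgam0 : (0:ℝ) ≤ (-4:ℝ) * Real.log 2 + (3:ℝ) * Real.log 3 + (-2:ℝ) * Real.log 5 + (3:ℝ) * Real.log 7 + (-1:ℝ) * Real.log 19 := by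
    have := log_le_comb 1 0 3 0 3 0 4 0 2 0 1 (by norm_num) (by norm_num) (by norm_num)
    rw [Real.log_one] at this; push_cast at this; linarith
  have hlam0 : (0:ℝ) ≤ (22:ℝ) * Real.log 2 + (-15:ℝ) * Real.log 3 + (10:ℝ) * Real.log 5 + (-15:ℝ) * Real.log 7 + (5:ℝ) * Real.log 19 := by
    have := log_le_comb 1 22 0 10 0 5 0 15 0 15 0 (by norm_num) (by norm_num) (by norm_num)
    rw [Real.log_one] at this; push_cast at this; linarith
  have hlb0 : (0:ℝ) ≤ (16:ℝ) * Real.log 2 + (-11:ℝ) * Real.log 3 + (7:ℝ) * Real.log 5 + (-11:ℝ) * Real.log 7 + (4:ℝ) * Real.log 19 := by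
    have := log_le_comb 1 16 0 7 0 4 0 11 0 11 0 (by norm_num) (by norm_num) (by norm_num)
    rw [Real.log_one] at this; push_cast at this; linarith
  have hbg0 : (0:ℝ) ≤ (-2:ℝ) * Real.log 2 + (1:ℝ) * Real.log 3 + (-1:ℝ) * Real.log 5 + (1:ℝ) * Real.log 7 + (0:ℝ) * Real.log 19 := by
    have := log_le_comb 1 0 1 0 1 0 2 0 1 0 0 (by norm_num) (by norm_num) (by norm_num)
    rw [Real.log_one] at this; push_cast at this; linarith
  -- unused-point terms
  have hz00 : (0:ℝ) ≤ x ((0:Fin 5), (0:Fin 7)) * ((22:ℝ) * Real.log 2 + (-15:ℝ) * Real.log 3 + (10:ℝ) * Real.log 5 + (-15:ℝ) * Real.log 7 + (5:ℝ) * Real.log 19) := mul_nonneg (hx _) hlam0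
  have hz10 : (0:ℝ) ≤ x ((1:Fin 5), (0:Fin 7)) * ((16:ℝ) * Real.log 2 + (-11:ℝ) * Real.log 3 + (7:ℝ) * Real.log 5 + (-11:ℝ) * Real.log 7 + (4:ℝ) * Real.log 19) := mul_nonneg (hx _) hlb0
  -- multiplied constraints
  have hA := mul_le_mul_of_nonneg_left h4 hmu0
  have hB := mul_le_mul_of_nonneg_left hbig hbeta0
  have hC := mul_le_mul_of_nonneg_left hsmall hgam0
  have hD := mul_le_mul_of_nonneg_left hsum.le hlam0
  have hE : (0:ℝ) ≤ ((-2:ℝ) * Real.log 2 + (1:ℝ) * Real.log 3 + (-1:ℝ) * Real.log 5 + (1:ℝ) * Real.log 7 + (0:ℝ) * Real.log 19) * α := mul_nonneg hbg0 hα0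
  -- rewrite target logs into the prime basis
  have hg1 : Real.log (21 / 5 : ℝ) = Real.log 3 + Real.log 7 - Real.log 5 := by
    rw [show (21:ℝ)/5 = 3*7/5 by norm_num, Real.log_div (by norm_num) (by norm_num),
      Real.log_mul (by norm_num) (by norm_num)]
  have hg2 : Real.log (19 / 5 : ℝ) = Real.log 19 - Real.log 5 :=
    Real.log_div (by norm_num) (by norm_num)
  have hg3 : Real.log (4 : ℝ) = 2 * Real.log 2 := by
    rw [show (4:ℝ) = 2^2 by norm_num, Real.log_pow]; norm_num
  linarith [hm01, hm02, hm03, hm04, hm05, hm06, hm11, hm12, hm13, hm14, hm15, hm16, hm20, hm21, hm22, hm23, hm24, hm25, hm26, hm30, hm31, hm32, hm33, hm34, hm35, hm36, hm40, hm41, hm42, hm43, hm44, hm45, hm46, hz00, hz10, hA, hB, hC, hD, hE, hg1, hg2, hg3]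
end
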